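/- arXiv:1310.4131 — 11 statements merged into one kernel-verified Lean document; each statement's English description precedes it below -/
import Mathlib

section
/- For every prime p, every digit v in {0,...,p-1}, and every natural number n, the Apéry numbers A1(n) = \sum_{k=0}^n \binom{n}{k}^2 \binom{n+k}{k}^2 satisfy the p-Lucas property: A1(v + n*p) ≡ A1(v) * A1(n) (mod p). -/
def A1 (n : ℕ) : ℤ :=
  ∑ k ∈ Finset.range (n + 1), (n.choose k : ℤ) ^ 2 * ((n + k).choose k : ℤ) ^ 2

section aux

variable {p : ℕ} [Fact p.Prime]

/-- Lucas's theorem, ZMod-cast form. -/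
lemma lucas_zmod (m k : ℕ) :
    ((m.choose k : ℕ) : ZMod p)
      = ((m % p).choose (k % p) : ZMod p) * ((m / p).choose (k / p) : ZMod p) := by
  have h := (ZMod.intCast_eq_intCast_iff _ _ _).mpr
    (Choose.choose_modEq_choose_mod_mul_choose_div (n := m) (k := k) (p := p))
  push_cast at h ⊢
  exact h

/-- The single term of the Apéry sum, in `ZMod p`. -/
def T (p m k : ℕ) : ZMod p := (m.choose k : ZMod p) ^ 2 * ((m + k).choose k : ZMod p) ^ 2

lemma T_factor (v n : ℕ) (hv : v < p) {a : ℕ} (ha : a < p) (b : ℕ) :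
    T p (v + n * p) (a + b * p) = T p v a * T p n b := by
  have hp0 : 0 < p := (Fact.out : p.Prime).pos
  have hma : (a + b * p) % p = a := by
    rw [Nat.add_mul_mod_self_right, Nat.mod_eq_of_lt ha]
  have hda : (a + b * p) / p = b := by
    rw [Nat.add_mul_div_right _ _ hp0, Nat.div_eq_of_lt ha, zero_add]
  have hmv : (v + n * p) % p = v := by
    rw [Nat.add_mul_mod_self_right, Nat.mod_eq_of_lt hv]
  have hdv : (v + n * p) / p = n := by
    rw [Nat.add_mul_div_right _ _ hp0, Nat.div_eq_of_lt hv, zero_add]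
  have key1 : ((v + n * p).choose (a + b * p) : ZMod p)
      = (v.choose a : ZMod p) * (n.choose b : ZMod p) := by
    rw [lucas_zmod, hma, hda, hmv, hdv]
  have hsum : v + n * p + (a + b * p) = (v + a) + (n + b) * p := by ring
  have hm2 : ((v + a) + (n + b) * p) % p = (v + a) % p := Nat.add_mul_mod_self_right _ _ _
  have hd2 : ((v + a) + (n + b) * p) / p = (v + a) / p + (n + b) :=
    Nat.add_mul_div_right _ _ hp0
  by_cases h : v + a < p
  · have key2 : ((v + n * p + (a + b * p)).choose (a + b * p) : ZMod p)
        = ((v + a).choose a : ZMod p) * ((n + b).choose b : ZMod p) := by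
      rw [hsum, lucas_zmod, hm2, hd2, hma, hda, Nat.mod_eq_of_lt h, Nat.div_eq_of_lt h, zero_add]
    unfold T
    rw [key1, key2]
    ring
  · push_neg at h
    have hvap : (v + a) % p = v + a - p := by
      rw [Nat.mod_eq_sub_mod h, Nat.mod_eq_of_lt (by omega)]
    have hlt : (v + a) % p < a := by omega
    have key2 : ((v + n * p + (a + b * p)).choose (a + b * p) : ZMod p) = 0 := by
      rw [hsum, lucas_zmod, hm2, hma, Nat.choose_eq_zero_of_lt hlt]
      simp
    have key3 : ((v + a).choose a : ZMod p) = 0 := by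
      rw [lucas_zmod (p := p) (v + a) a, hvap, Nat.mod_eq_of_lt ha,
        Nat.choose_eq_zero_of_lt (by omega)]
      simp
    unfold T
    rw [key2, key3]
    ring

lemma A1_cast (m : ℕ) : ((A1 m : ℤ) : ZMod p) = ∑ k ∈ Finset.range (m + 1), T p m k := by
  unfold A1 T
  push_cast
  rfl

end aux

theorem apery1_lucas (p : ℕ) (hp : p.Prime) (v n : ℕ) (hv : v < p) :
    A1 (v + n * p) ≡ A1 v * A1 n [ZMOD p] := by
  haveI : Fact p.Prime := ⟨hp⟩
  have hp0 : 0 < p := hp.pos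
  rw [← ZMod.intCast_eq_intCast_iff]
  push_cast
  rw [A1_cast, A1_cast, A1_cast]
  -- extend the sum to range ((n+1)*p)
  have hext : ∑ k ∈ Finset.range (v + n * p + 1), T p (v + n * p) k
      = ∑ k ∈ Finset.range ((n + 1) * p), T p (v + n * p) k := by
    apply Finset.sum_subset
    · intro k hk
      simp only [Finset.mem_range] at hk ⊢
      have : (n + 1) * p = n * p + p := by ring
      omega
    · intro k _ hk
      simp only [Finset.mem_range, not_lt] at hk
      unfold T
      rw [Nat.choose_eq_zero_of_lt (by omega)]
      simp
  rw [hext]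
  -- split the range by div/mod
  have hsplit : ∑ k ∈ Finset.range ((n + 1) * p), T p (v + n * p) k
      = ∑ x ∈ Finset.range (n + 1) ×ˢ Finset.range p, T p (v + n * p) (x.2 + x.1 * p) := by
    apply Finset.sum_nbij' (i := fun k => (k / p, k % p)) (j := fun x => x.2 + x.1 * p)
    · intro k hk
      simp only [Finset.mem_range] at hk
      simp only [Finset.mem_product, Finset.mem_range]
      have : (n + 1) * p = p * (n + 1) := by ring
      exact ⟨Nat.div_lt_of_lt_mul (by omega), Nat.mod_lt _ hp0⟩
    · intro x hx
      simp only [Finset.mem_product, Finset.mem_range] at hx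
      simp only [Finset.mem_range]
      calc x.2 + x.1 * p < p + x.1 * p := by omega
        _ = (x.1 + 1) * p := by ring
        _ ≤ (n + 1) * p := Nat.mul_le_mul_right _ (by omega)
    · intro k _
      exact (Nat.mod_add_div' k p).symm ▸ rfl
    · intro x hx
      simp only [Finset.mem_product, Finset.mem_range] at hx
      have h1 : (x.2 + x.1 * p) / p = x.1 := by
        rw [Nat.add_mul_div_right _ _ hp0, Nat.div_eq_of_lt hx.2, zero_add]
      have h2 : (x.2 + x.1 * p) % p = x.2 := by
        rw [Nat.add_mul_mod_self_right, Nat.mod_eq_of_lt hx.2]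
      ext <;> simp [h1, h2]
    · intro k _
      rw [Nat.mod_add_div' k p]
  rw [hsplit]
  have hfac : ∑ x ∈ Finset.range (n + 1) ×ˢ Finset.range p, T p (v + n * p) (x.2 + x.1 * p)
      = ∑ x ∈ Finset.range (n + 1) ×ˢ Finset.range p, T p v x.2 * T p n x.1 := by
    apply Finset.sum_congr rfl
    intro x hx
    simp only [Finset.mem_product, Finset.mem_range] at hx
    exact T_factor v n hv hx.2 x.1
  rw [hfac, Finset.sum_product]
  simp only [← Finset.sum_mul, ← Finset.mul_sum]
  -- shrink the inner sum from range p to range (v+1)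
  have hshrink : ∑ a ∈ Finset.range p, T p v a = ∑ a ∈ Finset.range (v + 1), T p v a := by
    symm
    apply Finset.sum_subset
    · intro a ha
      simp only [Finset.mem_range] at ha ⊢
      omega
    · intro a _ ha
      simp only [Finset.mem_range, not_lt] at ha
      unfold T
      rw [Nat.choose_eq_zero_of_lt (by omega)]
      simp
  rw [hshrink]
end

section
/- Let n be a natural number with base-5 expansion n = \sum_{k=0}^N n_k 5^k, where each n_k ∈ {0,...,4}. Let α be the number of indices k such that n_k ∈ {1,3}. Then 5^α divides A1(n) = \sum_{k=0}^n \binom{n}{k}^2 \binom{n+k}{k}^2. -/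
open Finset Nat
namespace BK
instance fact5 : Fact (Nat.Prime 5) := ⟨by norm_num⟩
abbrev Q5 := ℚ_[5]

/-- product of integers ≤ x not divisible by 5 -/
def Fn (x : ℕ) : ℕ := ∏ i ∈ Finset.range x, (if 5 ∣ (i+1) then 1 else (i+1))

def Mn (m b : ℕ) : ℕ := m.choose b * (m+b).choose b

def dg (r : ℕ) : ℕ := if r = 1 ∨ r = 3 then 1 else 0

def al (m : ℕ) : ℕ := ((Nat.digits 5 m).filter (fun d => d = 1 ∨ d = 3)).length

lemma al_zero : al 0 = 0 := by simp [al]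

lemma al_eq (m : ℕ) (h : m ≠ 0) : al m = dg (m % 5) + al (m / 5) := by
  unfold al
  rw [Nat.digits_def' (by norm_num : 1 < 5) (Nat.pos_of_ne_zero h)]
  simp only [List.filter_cons, dg]
  by_cases h5 : m % 5 = 1 ∨ m % 5 = 3
  · simp [h5, add_comm]
  · simp [h5]

lemma al_pred (m : ℕ) (h : 1 ≤ m) : al m ≤ al (m-1) + 1 := by
  induction m using Nat.strong_induction_on with
  | _ m ih =>
    rcases Nat.lt_or_ge m 5 with h5 | h5
    · interval_cases m <;> simp [al] <;> decide
    · have hm0 : m ≠ 0 := by omega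
      rcases Nat.eq_zero_or_pos (m % 5) with hr | hr
      · -- m = 5*(m/5), m-1 = 5*(m/5-1)+4
        have h1 : (m-1) % 5 = 4 := by omega
        have h2 : (m-1) / 5 = m/5 - 1 := by omega
        have h3 : m / 5 ≠ 0 := by omega
        rw [al_eq m hm0, al_eq (m-1) (by omega), h1, h2, hr]
        have := ih (m/5) (by omega) (by omega)
        simp [dg]
        omega
      · have h1 : (m-1) % 5 = m % 5 - 1 := by omega
        have h2 : (m-1) / 5 = m/5 := by omega
        rw [al_eq m hm0, al_eq (m-1) (by omega), h1, h2]
        have : dg (m % 5) ≤ dg (m % 5 - 1) + 1 := by unfold dg; split <;> split <;> omega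
        omega

lemma al_pred_div (m : ℕ) (h : 1 ≤ m) : al m ≤ al ((m-1)/5) + 1 := by
  rcases Nat.eq_zero_or_pos (m % 5) with hr | hr
  · have h2 : (m-1) / 5 = m/5 - 1 := by omega
    have h3 : m / 5 ≠ 0 := by omega
    rw [al_eq m (by omega), h2, hr]
    have := al_pred (m/5) (by omega)
    simp [dg]
    omega
  · have h2 : (m-1) / 5 = m/5 := by omega
    rw [al_eq m (by omega), h2]
    have : dg (m % 5) ≤ 1 := by unfold dg; split <;> omega
    omega

lemma al_div (m : ℕ) : al m ≤ al (m/5) + 1 := by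
  rcases Nat.eq_zero_or_pos m with rfl | h
  · simp [al_zero]
  · rw [al_eq m (by omega)]
    have : dg (m % 5) ≤ 1 := by unfold dg; split <;> omega
    omega

lemma Fn_zero : Fn 0 = 1 := by simp [Fn]

lemma Fn_succ (x : ℕ) : Fn (x+1) = Fn x * (if 5 ∣ (x+1) then 1 else (x+1)) := by
  simp [Fn, Finset.prod_range_succ]

lemma Fn_succ_of_not_dvd {x : ℕ} (h : ¬ 5 ∣ (x+1)) : Fn (x+1) = Fn x * (x+1) := by
  rw [Fn_succ]; simp [h]

lemma Fn_succ_of_dvd {x : ℕ} (h : 5 ∣ (x+1)) : Fn (x+1) = Fn x := by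
  rw [Fn_succ]; simp [h]

lemma not_dvd_Fn (x : ℕ) : ¬ (5 ∣ Fn x) := by
  induction x with
  | zero => simp [Fn_zero]
  | succ n ih =>
    rw [Fn_succ]
    split
    · simpa using ih
    · rename_i h
      intro hd
      rcases (Nat.Prime.dvd_mul (by norm_num)).mp hd with h1 | h1
      · exact ih h1
      · exact h h1

lemma Fn_pos (x : ℕ) : 0 < Fn x := by
  rcases Nat.eq_zero_or_pos (Fn x) with h | h
  · exfalso; exact not_dvd_Fn x (by simp [h])
  · exact h

lemma fact_eq_aux : ∀ x : ℕ, x ! = 5^(x/5) * (x/5)! * Fn x := by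
  intro x
  induction x with
  | zero => simp [Fn_zero]
  | succ n ih =>
    by_cases h : 5 ∣ (n+1)
    · obtain ⟨u, hu⟩ := h
      have hu1 : 1 ≤ u := by omega
      have h1 : (n+1)/5 = u := by omega
      have h2 : n/5 = u - 1 := by omega
      rw [Nat.factorial_succ, ih, Fn_succ_of_dvd ⟨u, hu⟩, h1, h2]
      have h3 : u ! = u * (u-1)! := by
        conv_lhs => rw [show u = (u-1)+1 by omega]
        rw [Nat.factorial_succ]; congr 1; omega
      rw [h3]
      have h4 : 5^u = 5 * 5^(u-1) := by
        conv_lhs => rw [show u = 1+(u-1) by omega]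
        rw [pow_add, pow_one]
      rw [h4, hu]
      ring
    · have h1 : (n+1)/5 = n/5 := by omega
      rw [Nat.factorial_succ, ih, Fn_succ_of_not_dvd h, h1]
      ring

lemma fact_eq (q t : ℕ) (ht : t < 5) : (5*q+t)! = 5^q * q ! * Fn (5*q+t) := by
  have h := fact_eq_aux (5*q+t)
  have : (5*q+t)/5 = q := by omega
  rwa [this] at h

lemma Fn_small {t : ℕ} (ht : t < 5) : Fn t = t ! := by
  interval_cases t <;> decide

lemma Fn_step (k y : ℕ) (hk : 1 ≤ k) : (Fn (y + 5^k) : ZMod (5^k)) = (Fn (5^k) : ZMod (5^k)) * Fn y := by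
  induction y with
  | zero => simp [Fn_zero]
  | succ n ih =>
    have e1 : n + 1 + 5^k = (n + 5^k) + 1 := by ring
    rw [e1, Fn_succ, Fn_succ n]
    have hdvd : (5 ∣ (n + 5^k + 1)) ↔ (5 ∣ (n+1)) := by
      constructor <;> intro h
      · have : 5 ∣ 5^k := dvd_pow_self 5 (by omega)
        omega
      · have : 5 ∣ 5^k := dvd_pow_self 5 (by omega)
        omega
    push_cast
    rw [ih]
    by_cases h : 5 ∣ (n+1)
    · simp [h, hdvd.mpr h]
    · simp only [h, hdvd, if_neg h]
      push_cast
      have : ((5:ZMod (5^k))^k) = 0 := by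
        rw [show ((5:ZMod (5^k))^k) = ((5^k : ℕ) : ZMod (5^k)) by push_cast; ring,
          ZMod.natCast_self]
      ring_nf
      rw [show ((5:ZMod (5^k))^k) = 0 from this]
      ring

lemma Fn_shift (k t x : ℕ) (hk : 1 ≤ k) :
    Fn (x + 5^k * t) ≡ (Fn (5^k))^t * Fn x [MOD 5^k] := by
  induction t with
  | zero => simp [Nat.ModEq.refl]
  | succ n ih =>
    have e1 : x + 5^k*(n+1) = (x + 5^k*n) + 5^k := by ring
    have step := Fn_step k (x + 5^k*n) hk
    have : (Fn (x + 5^k*(n+1)) : ZMod (5^k)) = ((Fn (5^k))^(n+1) * Fn x : ℕ) := by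
      rw [e1, step]
      have ihm : (Fn (x + 5^k*n) : ZMod (5^k)) = ((Fn (5^k))^n * Fn x : ℕ) :=
        (ZMod.natCast_eq_natCast_iff _ _ _).mpr ih
      rw [ihm]
      push_cast
      ring
    exact (ZMod.natCast_eq_natCast_iff _ _ _).mp this

noncomputable def pw (k : ℕ) : ℝ := ((5:ℝ)⁻¹)^k

lemma pw_pos (k : ℕ) : 0 < pw k := pow_pos (by norm_num) k
lemma pw_nonneg (k : ℕ) : 0 ≤ pw k := (pw_pos k).le
lemma pw_le_one (k : ℕ) : pw k ≤ 1 := by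
  apply pow_le_one₀ <;> norm_num
lemma pw_zero : pw 0 = 1 := by simp [pw]
lemma pw_add (a b : ℕ) : pw (a+b) = pw a * pw b := pow_add _ a b
lemma pw_anti {a b : ℕ} (h : a ≤ b) : pw b ≤ pw a := by
  apply pow_le_pow_of_le_one (by norm_num) (by norm_num) h
lemma pw_eq_zpow (k : ℕ) : pw k = (5:ℝ)^(-(k:ℤ)) := by
  rw [pw, zpow_neg, zpow_natCast, inv_pow]

lemma norm_nat_le_one (n : ℕ) : ‖(n:Q5)‖ ≤ 1 := by
  have := Padic.norm_int_le_one (p := 5) (n : ℤ)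
  simpa using this

lemma norm_int_le (z : ℤ) (k : ℕ) (h : (5:ℤ)^k ∣ z) : ‖(z : Q5)‖ ≤ pw k := by
  rw [pw_eq_zpow]
  exact (Padic.norm_int_le_pow_iff_dvd z k).mpr (by exact_mod_cast h)

lemma norm_nat_modeq (a b k : ℕ) (h : a ≡ b [MOD 5^k]) : ‖(a:Q5) - (b:Q5)‖ ≤ pw k := by
  have hz : ((5:ℤ))^k ∣ (b:ℤ) - (a:ℤ) := by
    have := (Nat.modEq_iff_dvd (n := 5^k)).mp h
    exact_mod_cast this
  have hz2 : ((5:ℤ))^k ∣ (a:ℤ) - (b:ℤ) := by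
    have := dvd_neg.mpr hz
    simpa using this
  have hcast : (((a:ℤ)-(b:ℤ) : ℤ) : Q5) = ((a:Q5) - (b:Q5) : Q5) := by push_cast; ring
  calc ‖(a:Q5) - (b:Q5)‖ = ‖(((a:ℤ)-(b:ℤ) : ℤ) : Q5)‖ := by rw [hcast]
    _ ≤ pw k := norm_int_le _ k hz2

lemma norm_nat_eq_one {n : ℕ} (h : ¬ (5 ∣ n)) : ‖(n:Q5)‖ = 1 := by
  have h1 : ‖((n:ℤ) : Q5)‖ ≤ 1 := Padic.norm_int_le_one _
  rcases lt_or_eq_of_le h1 with h2 | h2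
  · exfalso
    have := (Padic.norm_intCast_lt_one_iff (p := 5) (k := (n:ℤ))).mp h2
    exact h (by exact_mod_cast this)
  · simpa using h2

lemma norm_five_pow (k : ℕ) : ‖((5:Q5))^k‖ = pw k := by
  rw [norm_pow]
  have h5 : ((5:ℕ):Q5) = (5:Q5) := by norm_num
  rw [← h5, Padic.norm_p (p := 5), pw]
  norm_num

lemma norm_sum_le {ι : Type*} (s : Finset ι) (f : ι → Q5) (C : ℝ) (h0 : 0 ≤ C)
    (h : ∀ i ∈ s, ‖f i‖ ≤ C) : ‖∑ i ∈ s, f i‖ ≤ C :=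
  IsUltrametricDist.norm_sum_le_of_forall_le_of_nonneg h0 h

lemma norm_add_le_max (x y : Q5) : ‖x + y‖ ≤ max ‖x‖ ‖y‖ := Padic.nonarchimedean x y

lemma norm_sub_le_max (x y : Q5) : ‖x - y‖ ≤ max ‖x‖ ‖y‖ := by
  have := Padic.nonarchimedean x (-y)
  simpa [sub_eq_add_neg] using this

lemma norm_add_le_of_le {x y : Q5} {C : ℝ} (hx : ‖x‖ ≤ C) (hy : ‖y‖ ≤ C) : ‖x + y‖ ≤ C :=
  (norm_add_le_max x y).trans (max_le hx hy)

lemma norm_sub_le_of_le {x y : Q5} {C : ℝ} (hx : ‖x‖ ≤ C) (hy : ‖y‖ ≤ C) : ‖x - y‖ ≤ C :=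
  (norm_sub_le_max x y).trans (max_le hx hy)

lemma norm_mul_le_of_le {x y : Q5} {C D : ℝ} (hx : ‖x‖ ≤ C) (hy : ‖y‖ ≤ D) (hC : 0 ≤ C) :
    ‖x * y‖ ≤ C * D := by
  rw [norm_mul]
  exact mul_le_mul hx hy (norm_nonneg y) hC

lemma norm_mul_le_left {x y : Q5} {C : ℝ} (hx : ‖x‖ ≤ C) (hy : ‖y‖ ≤ 1) : ‖x * y‖ ≤ C := by
  have := norm_mul_le_of_le hx hy ((norm_nonneg x).trans hx)
  simpa using this

lemma norm_mul_le_right {x y : Q5} {C : ℝ} (hx : ‖x‖ ≤ 1) (hy : ‖y‖ ≤ C) : ‖x * y‖ ≤ C := by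
  rw [mul_comm]; exact norm_mul_le_left hy hx

/-- a*b - a'*b' bound -/
lemma norm_mul_sub_mul {a b a' b' : Q5} {e : ℝ} (ha : ‖a‖ ≤ 1) (hb' : ‖b'‖ ≤ 1)
    (h1 : ‖a - a'‖ ≤ e) (h2 : ‖b - b'‖ ≤ e) : ‖a*b - a'*b'‖ ≤ e := by
  have key : a*b - a'*b' = a*(b-b') + (a-a')*b' := by ring
  rw [key]
  exact norm_add_le_of_le (norm_mul_le_right ha h2) (norm_mul_le_left h1 hb')

noncomputable def Fq (x : ℕ) : Q5 := (Fn x : Q5)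

lemma norm_Fq (x : ℕ) : ‖Fq x‖ = 1 := norm_nat_eq_one (not_dvd_Fn x)

lemma Fq_ne_zero (x : ℕ) : Fq x ≠ 0 := by
  intro h
  have := norm_Fq x
  rw [h] at this
  simp at this

lemma Mn_fact (m b : ℕ) (h : b ≤ m) : Mn m b * (b !)^2 * (m-b)! = (m+b)! := by
  have h1 := Nat.choose_mul_factorial_mul_factorial h
  have h2 := Nat.choose_mul_factorial_mul_factorial (Nat.le_add_left b m)
  have h3 : m + b - b = m := by omega
  rw [h3] at h2
  calc Mn m b * (b !)^2 * (m-b)!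
      = (m+b).choose b * b ! * (m.choose b * b ! * (m-b)!) := by unfold Mn; ring
    _ = (m+b).choose b * b ! * m ! := by rw [h1]
    _ = (m+b)! := h2

def Pf : ℕ → ℕ → ℕ → ℕ → ℕ
  | 0, 0, _, _ => 1
  | 1, 0, m₁, c => m₁ + c
  | 0, 1, m₁, c => m₁ + c + 1
  | 1, 1, m₁, c => (m₁+c)*(m₁+c+1)
  | _, _, _, _ => 1

lemma Pf_fact (β γ m₁ c : ℕ) (hβ : β ≤ 1) (hγ : γ ≤ 1) (hc : c + β ≤ m₁) :
    (m₁+c+γ)! = Pf β γ m₁ c * (m₁-β+c)! := by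
  interval_cases β <;> interval_cases γ
  · simp [Pf]
  · show (m₁ + c + 1)! = (m₁ + c + 1) * (m₁ - 0 + c)!
    have e : m₁ - 0 + c = m₁ + c := by omega
    rw [e, Nat.factorial_succ]
  · show (m₁ + c + 0)! = (m₁ + c) * (m₁ - 1 + c)!
    have e : m₁ + c + 0 = (m₁ - 1 + c) + 1 := by omega
    rw [e, Nat.factorial_succ]
    congr 1
    omega
  · show (m₁ + c + 1)! = (m₁+c)*(m₁+c+1) * (m₁ - 1 + c)!
    have e : m₁ + c + 1 = ((m₁ - 1 + c) + 1) + 1 := by omega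
    rw [e, Nat.factorial_succ, Nat.factorial_succ, ← mul_assoc]
    have e2 : m₁ - 1 + c + 1 = m₁ + c := by omega
    rw [e2]
    ring

lemma Mn_decomp_nat (m₁ r₁ c s β γ : ℕ) (hr : r₁ < 5) (hs : s < 5)
    (hβ : (s ≤ r₁ ∧ β = 0) ∨ (r₁ < s ∧ β = 1))
    (hγ : (r₁ + s < 5 ∧ γ = 0) ∨ (5 ≤ r₁ + s ∧ γ = 1))
    (hc : c + β ≤ m₁) :
    Mn (5*m₁+r₁) (5*c+s) * (Fn (5*c+s))^2 * Fn ((5*m₁+r₁) - (5*c+s))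
      = 5^(β+γ) * Pf β γ m₁ c * Mn (m₁-β) c * Fn ((5*m₁+r₁) + (5*c+s)) := by
  set m := 5*m₁+r₁ with hm
  set b := 5*c+s with hbdef
  set K := m₁ - β - c with hK
  have hβ1 : β ≤ 1 := by rcases hβ with ⟨_,h⟩|⟨_,h⟩ <;> omega
  have hγ1 : γ ≤ 1 := by rcases hγ with ⟨_,h⟩|⟨_,h⟩ <;> omega
  have hb : b ≤ m := by rcases hβ with ⟨h1,h2⟩|⟨h1,h2⟩ <;> omega
  have fact1 : (m+b)! = 5^(m₁+c+γ) * (m₁+c+γ)! * Fn (m+b) := by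
    have harg : 5*(m₁+c+γ) + (r₁+s-5*γ) = m + b := by
      rcases hγ with ⟨h1,h2⟩|⟨h1,h2⟩ <;> omega
    have hlt : r₁+s-5*γ < 5 := by rcases hγ with ⟨h1,h2⟩|⟨h1,h2⟩ <;> omega
    have := fact_eq (m₁+c+γ) (r₁+s-5*γ) hlt
    rwa [harg] at this
  have fact2 : b ! = 5^c * c ! * Fn b := fact_eq c s hs
  have fact3 : (m-b)! = 5^K * K ! * Fn (m-b) := by
    have harg : 5*K + (r₁+5*β-s) = m - b := by
      rcases hβ with ⟨h1,h2⟩|⟨h1,h2⟩ <;> omega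
    have hlt : r₁+5*β-s < 5 := by rcases hβ with ⟨h1,h2⟩|⟨h1,h2⟩ <;> omega
    have := fact_eq K (r₁+5*β-s) hlt
    rwa [harg] at this
  have MnA : Mn m b * (b !)^2 * (m-b)! = (m+b)! := Mn_fact m b hb
  have MnB : Mn (m₁-β) c * (c !)^2 * K ! = ((m₁-β)+c)! := by
    have : (m₁-β) - c = K := by omega
    have h := Mn_fact (m₁-β) c (by omega)
    rwa [this] at h
  have PfE : (m₁+c+γ)! = Pf β γ m₁ c * (m₁-β+c)! := Pf_fact β γ m₁ c hβ1 hγ1 hc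
  have Jpos : 0 < 5^(2*c+K) * (c !)^2 * (K !) := by positivity
  apply Nat.eq_of_mul_eq_mul_right Jpos
  have key1 : Mn m b * (Fn b)^2 * Fn (m-b) * (5^(2*c+K) * (c !)^2 * K !) = (m+b)! := by
    have hp : (5:ℕ)^(2*c+K) = 5^c * 5^c * 5^K := by
      rw [← pow_add, ← pow_add]; congr 1; omega
    calc Mn m b * (Fn b)^2 * Fn (m-b) * (5^(2*c+K) * (c !)^2 * K !)
        = Mn m b * (5^c * c ! * Fn b)^2 * (5^K * K ! * Fn (m-b)) := by rw [hp]; ring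
      _ = Mn m b * (b !)^2 * (m-b)! := by rw [← fact2, ← fact3]
      _ = (m+b)! := MnA
  have key2 : 5^(β+γ) * Pf β γ m₁ c * Mn (m₁-β) c * Fn (m+b) * (5^(2*c+K) * (c !)^2 * K !)
      = (m+b)! := by
    have hp : (5:ℕ)^(β+γ) * 5^(2*c+K) = 5^(m₁+c+γ) := by
      rw [← pow_add]; congr 1; omega
    calc 5^(β+γ) * Pf β γ m₁ c * Mn (m₁-β) c * Fn (m+b) * (5^(2*c+K) * (c !)^2 * K !)
        = (5^(β+γ) * 5^(2*c+K)) * Pf β γ m₁ c * (Mn (m₁-β) c * (c !)^2 * K !) * Fn (m+b) := by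
          ring
      _ = 5^(m₁+c+γ) * Pf β γ m₁ c * ((m₁-β)+c)! * Fn (m+b) := by rw [hp, MnB]
      _ = 5^(m₁+c+γ) * (m₁+c+γ)! * Fn (m+b) := by
          rw [PfE]
          have : m₁ - β + c = (m₁-β)+c := rfl
          ring
      _ = (m+b)! := fact1.symm
  rw [key1, key2]

noncomputable def Uf (m b : ℕ) : Q5 := Fq (m+b) / ((Fq b)^2 * Fq (m-b))

lemma norm_Uf (m b : ℕ) : ‖Uf m b‖ = 1 := by
  rw [Uf, norm_div, norm_mul, norm_pow, norm_Fq, norm_Fq, norm_Fq]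
  norm_num

lemma Mn_decompQ (m₁ r₁ c s β γ : ℕ) (hr : r₁ < 5) (hs : s < 5)
    (hβ : (s ≤ r₁ ∧ β = 0) ∨ (r₁ < s ∧ β = 1))
    (hγ : (r₁ + s < 5 ∧ γ = 0) ∨ (5 ≤ r₁ + s ∧ γ = 1))
    (hc : c + β ≤ m₁) :
    (Mn (5*m₁+r₁) (5*c+s) : Q5)
      = 5^(β+γ) * (Pf β γ m₁ c : Q5) * (Mn (m₁-β) c : Q5) * Uf (5*m₁+r₁) (5*c+s) := by
  rw [Uf, ← mul_div_assoc, eq_div_iff (by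
    apply mul_ne_zero
    · exact pow_ne_zero 2 (Fq_ne_zero _)
    · exact Fq_ne_zero _)]
  have hnat := Mn_decomp_nat m₁ r₁ c s β γ hr hs hβ hγ hc
  have := congrArg (fun n : ℕ => (n : Q5)) hnat
  push_cast at this
  rw [Fq, Fq, Fq]
  push_cast
  linear_combination this

/-! ## weight classes -/

def Hb (N : ℕ) (W : ℕ → Q5) : Prop := ∀ b, b ≤ N → ‖W b‖ ≤ 1

def H1 (N : ℕ) (W : ℕ → Q5) : Prop :=
  Hb N W ∧ ∀ j b b', b ≤ N → b' ≤ N → b ≡ b' [MOD 5^j] → ‖W b - W b'‖ ≤ pw (j+1)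

def H0 (N : ℕ) (W : ℕ → Q5) : Prop :=
  Hb N W ∧ ∀ j b b', b ≤ N → b' ≤ N → b ≡ b' [MOD 5^j] → ‖W b - W b'‖ ≤ pw j

lemma H1.toH0 {N W} (h : H1 N W) : H0 N W :=
  ⟨h.1, fun j b b' hb hb' hm => (h.2 j b b' hb hb' hm).trans (pw_anti (by omega))⟩

lemma H1_mul {N X Y} (hX : H1 N X) (hY : H1 N Y) : H1 N (fun b => X b * Y b) := by
  refine ⟨fun b hb => norm_mul_le_left (hX.1 b hb) (hY.1 b hb), fun j b b' hb hb' hm => ?_⟩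
  exact norm_mul_sub_mul (hX.1 b hb) (hY.1 b' hb') (hX.2 j b b' hb hb' hm) (hY.2 j b b' hb hb' hm)

lemma H0_mul {N X Y} (hX : H0 N X) (hY : H0 N Y) : H0 N (fun b => X b * Y b) := by
  refine ⟨fun b hb => norm_mul_le_left (hX.1 b hb) (hY.1 b hb), fun j b b' hb hb' hm => ?_⟩
  exact norm_mul_sub_mul (hX.1 b hb) (hY.1 b' hb') (hX.2 j b b' hb hb' hm) (hY.2 j b b' hb hb' hm)

lemma H1_const {N : ℕ} (x : Q5) (hx : ‖x‖ ≤ 1) : H1 N (fun _ => x) :=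
  ⟨fun _ _ => hx, fun j _ _ _ _ _ => by simpa using pw_nonneg (j+1)⟩

lemma modeq_shift {j c c' s : ℕ} (hm : c ≡ c' [MOD 5^j]) : 5*c+s ≡ 5*c'+s [MOD 5^(j+1)] := by
  have h1 : 5*c ≡ 5*c' [MOD 5*5^j] := hm.mul_left' (c := 5)
  have h2 : (5:ℕ)*5^j = 5^(j+1) := by ring
  rw [h2] at h1
  exact h1.add_right s

lemma H1_comp5 {m s N : ℕ} {q : ℕ → Q5} (hq : H0 m q) (h : 5*N + s ≤ m) :
    H1 N (fun c => q (5*c + s)) := by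
  refine ⟨fun b hb => hq.1 _ (by omega), fun j b b' hb hb' hm => ?_⟩
  exact hq.2 (j+1) _ _ (by omega) (by omega) (modeq_shift hm)

lemma H1_comp5' {m s N : ℕ} {q : ℕ → Q5} (hq : H1 m q) (h : 5*N + s ≤ m) :
    H1 N (fun c => q (5*c + s)) := H1_comp5 hq.toH0 h

/-! ## shift congruences for Fq -/

lemma shiftQ (k t x : ℕ) (hk : 1 ≤ k) :
    ‖Fq (x + 5^k*t) - (Fq (5^k))^t * Fq x‖ ≤ pw k := by
  have h := norm_nat_modeq _ _ k (Fn_shift k t x hk)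
  unfold Fq
  push_cast at h ⊢
  exact h

lemma Uf_diff (m s : ℕ) {j c c' t : ℕ} (hc : c = c' + 5^j * t) (h : 5*c+s ≤ m) :
    ‖Uf m (5*c+s) - Uf m (5*c'+s)‖ ≤ pw (j+1) := by
  set A := Fq (m+(5*c+s)) with hA
  set A' := Fq (m+(5*c'+s)) with hA'
  set B := Fq (5*c+s) with hB
  set B' := Fq (5*c'+s) with hB'
  set C := Fq (m-(5*c+s)) with hC
  set C' := Fq (m-(5*c'+s)) with hC'
  set e := (Fq (5^(j+1)))^t with he
  have norm_e : ‖e‖ = 1 := by rw [he, norm_pow, norm_Fq, one_pow]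
  have ha : ‖A - e*A'‖ ≤ pw (j+1) := by
    have harg : (m+(5*c'+s)) + 5^(j+1)*t = m+(5*c+s) := by
      rw [hc]; ring
    have := shiftQ (j+1) t (m+(5*c'+s)) (by omega)
    rwa [harg] at this
  have hb : ‖B - e*B'‖ ≤ pw (j+1) := by
    have harg : (5*c'+s) + 5^(j+1)*t = 5*c+s := by rw [hc]; ring
    have := shiftQ (j+1) t (5*c'+s) (by omega)
    rwa [harg] at this
  have hcc : ‖C' - e*C‖ ≤ pw (j+1) := by
    have harg : (m-(5*c+s)) + 5^(j+1)*t = m-(5*c'+s) := by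
      have h5 : 5*c'+s ≤ 5*c+s := by rw [hc]; omega
      have : 5^(j+1)*t = (5*c+s) - (5*c'+s) := by rw [hc]; ring_nf; omega
      omega
    have := shiftQ (j+1) t (m-(5*c+s)) (by omega)
    rwa [harg] at this
  have nA' : ‖A'‖ = 1 := by rw [hA']; exact norm_Fq _
  have nB : ‖B‖ = 1 := by rw [hB]; exact norm_Fq _
  have nB' : ‖B'‖ = 1 := by rw [hB']; exact norm_Fq _
  have nC : ‖C‖ = 1 := by rw [hC]; exact norm_Fq _
  have nC' : ‖C'‖ = 1 := by rw [hC']; exact norm_Fq _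
  have h2 : ‖(2:Q5)‖ ≤ 1 := by
    have := norm_nat_le_one 2
    simpa using this
  have hX : A*B'^2*C' - A'*B^2*C
      = e*A'*B'^2*(C' - e*C) + (A - e*A')*B'^2*C' - 2*e*A'*B'*C*(B - e*B')
        - A'*C*(B - e*B')^2 := by ring
  have normX : ‖A*B'^2*C' - A'*B^2*C‖ ≤ pw (j+1) := by
    rw [hX]
    apply norm_sub_le_of_le
    apply norm_sub_le_of_le
    apply norm_add_le_of_le
    · -- e*A'*B'^2*(C'-e*C)
      apply norm_mul_le_right _ hcc
      rw [norm_mul, norm_mul, norm_e, nA', norm_pow, nB']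
      norm_num
    · -- (A-e*A')*B'^2*C'
      apply norm_mul_le_left (norm_mul_le_left ha ?_) ?_
      · rw [norm_pow, nB']; norm_num
      · rw [nC']
    · -- 2*e*A'*B'*C*(B-e*B')
      apply norm_mul_le_right _ hb
      rw [norm_mul, norm_mul, norm_mul, norm_mul, norm_e, nA', nB', nC]
      simpa using h2
    · -- A'*C*(B-e*B')^2
      apply norm_mul_le_right
      · rw [norm_mul, nA', nC]; norm_num
      · rw [sq]
        apply norm_mul_le_left hb ((hb.trans (pw_le_one _)))
  have hUf : Uf m (5*c+s) - Uf m (5*c'+s)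
      = (A*B'^2*C' - A'*B^2*C) / ((B^2*C)*(B'^2*C')) := by
    rw [Uf, Uf, ← hA, ← hA', ← hB, ← hB', ← hC, ← hC']
    have hB0 : B ≠ 0 := Fq_ne_zero _
    have hB0' : B' ≠ 0 := Fq_ne_zero _
    have hC0 : C ≠ 0 := Fq_ne_zero _
    have hC0' : C' ≠ 0 := Fq_ne_zero _
    field_simp
  rw [hUf, norm_div]
  have : ‖B^2*C*(B'^2*C')‖ = 1 := by
    rw [norm_mul, norm_mul, norm_mul, norm_pow, norm_pow, norm_Fq, norm_Fq, norm_Fq, norm_Fq]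
    norm_num
  rw [this, div_one]
  exact normX

lemma H1_Uf (m s N : ℕ) (h : 5*N + s ≤ m) : H1 N (fun c => Uf m (5*c+s)) := by
  refine ⟨fun b _ => le_of_eq (norm_Uf _ _), fun j b b' hb hb' hm => ?_⟩
  rcases le_total b' b with hle | hle
  · obtain ⟨t, ht⟩ : ∃ t, b = b' + 5^j * t := by
      obtain ⟨t, ht⟩ := (Nat.modEq_iff_dvd' hle).mp hm.symm
      exact ⟨t, by omega⟩
    exact Uf_diff m s ht (by omega)
  · obtain ⟨t, ht⟩ : ∃ t, b' = b + 5^j * t := by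
      obtain ⟨t, ht⟩ := (Nat.modEq_iff_dvd' hle).mp hm
      exact ⟨t, by omega⟩
    rw [← norm_neg]
    simp only [neg_sub]
    exact Uf_diff m s ht (by omega)

/-- Lucas-type: Uf is congruent to the local factor Mn r₁ s mod 5. -/
lemma Uf_Mloc (m₁ r₁ c s : ℕ) (hr : r₁ < 5) (hsr : s ≤ r₁) (hγ : r₁ + s < 5) (hc : c ≤ m₁) :
    ‖Uf (5*m₁+r₁) (5*c+s) - (Mn r₁ s : Q5)‖ ≤ pw 1 := by
  set m := 5*m₁+r₁ with hm
  have shift1 : ∀ q t : ℕ, t < 5 → ‖Fq (5*q+t) - (Fq 5)^q * Fq t‖ ≤ pw 1 := by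
    intro q t ht
    have := shiftQ 1 q t (le_refl 1)
    have harg : t + 5^1*q = 5*q+t := by ring
    rw [harg] at this
    have h5 : (5:ℕ)^1 = 5 := by norm_num
    rwa [h5] at this
  set A := Fq (m+(5*c+s)) with hA
  set B := Fq (5*c+s) with hB
  set C := Fq (m-(5*c+s)) with hC
  set f5 := Fq 5 with hf5
  have nf5 : ‖f5‖ = 1 := norm_Fq 5
  set abar := f5^(m₁+c) * (((r₁+s)! : ℕ) : Q5) with habar
  set bbar := f5^c * ((s ! : ℕ) : Q5) with hbbar
  set cbar := f5^(m₁-c) * (((r₁-s)! : ℕ) : Q5) with hcbar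
  have ha : ‖A - abar‖ ≤ pw 1 := by
    have harg : m + (5*c+s) = 5*(m₁+c) + (r₁+s) := by omega
    have := shift1 (m₁+c) (r₁+s) hγ
    rw [← harg] at this
    rwa [show Fq (r₁+s) = (((r₁+s)! : ℕ) : Q5) by rw [Fq, Fn_small hγ]] at this
  have hb : ‖B - bbar‖ ≤ pw 1 := by
    have := shift1 c s (by omega)
    rwa [show Fq s = ((s ! : ℕ) : Q5) by rw [Fq, Fn_small (by omega)]] at this
  have hcc : ‖C - cbar‖ ≤ pw 1 := by
    have harg : m - (5*c+s) = 5*(m₁-c) + (r₁-s) := by omega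
    have := shift1 (m₁-c) (r₁-s) (by omega)
    rw [← harg] at this
    rwa [show Fq (r₁-s) = (((r₁-s)! : ℕ) : Q5) by rw [Fq, Fn_small (by omega)]] at this
  have hMl : abar = (Mn r₁ s : Q5) * bbar^2 * cbar := by
    have hnat : Mn r₁ s * (s !)^2 * (r₁-s)! = (r₁+s)! := Mn_fact r₁ s hsr
    have hpow : f5^(m₁+c) = f5^c * f5^c * f5^(m₁-c) := by
      rw [← pow_add, ← pow_add]; congr 1; omega
    have hq := congrArg (fun n : ℕ => (n : Q5)) hnat
    push_cast at hq
    rw [habar, hbbar, hcbar, hpow, ← hq]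
    ring
  -- bounds on the bars
  have nbbar : ‖bbar‖ ≤ 1 := by
    rw [hbbar]
    apply norm_mul_le_right _ (norm_nat_le_one _)
    rw [norm_pow, nf5]; norm_num
  have ncbar : ‖cbar‖ ≤ 1 := by
    rw [hcbar]
    apply norm_mul_le_right _ (norm_nat_le_one _)
    rw [norm_pow, nf5]; norm_num
  have nB : ‖B‖ = 1 := by rw [hB]; exact norm_Fq _
  have nC : ‖C‖ = 1 := by rw [hC]; exact norm_Fq _
  have nM : ‖(Mn r₁ s : Q5)‖ ≤ 1 := norm_nat_le_one _
  have key : Uf m (5*c+s) - (Mn r₁ s : Q5)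
      = ((A - abar) - (Mn r₁ s : Q5)*(B^2*(C - cbar) + (B - bbar)*(B + bbar)*cbar))
        / (B^2*C) := by
    rw [Uf, ← hA, ← hB, ← hC]
    have hB0 : B ≠ 0 := Fq_ne_zero _
    have hC0 : C ≠ 0 := Fq_ne_zero _
    field_simp
    linear_combination hMl
  rw [key, norm_div]
  have hden : ‖B^2*C‖ = 1 := by rw [norm_mul, norm_pow, nB, nC]; norm_num
  rw [hden, div_one]
  apply norm_sub_le_of_le ha
  apply norm_mul_le_right nM
  apply norm_add_le_of_le
  · apply norm_mul_le_right _ hcc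
    rw [norm_pow, nB]; norm_num
  · apply norm_mul_le_left (norm_mul_le_left hb _) ncbar
    exact norm_add_le_of_le (le_of_eq nB) nbbar

/-! ## the quadratic correction factor -/

noncomputable def Qq (m c : ℕ) : Q5 := ((m+5*c+1 : ℕ) : Q5) * ((m - 5*c : ℕ) : Q5) / (((5*c+1 : ℕ) : Q5))^2

lemma five_not_dvd_5c1 (c : ℕ) : ¬ (5 ∣ (5*c+1)) := by omega

lemma Qq_ne_den (c : ℕ) : (((5*c+1 : ℕ) : Q5)) ≠ 0 := by
  intro h
  have := norm_nat_eq_one (five_not_dvd_5c1 c)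
  rw [h] at this
  simp at this

lemma norm_Qq_le (m c : ℕ) : ‖Qq m c‖ ≤ 1 := by
  rw [Qq, norm_div, norm_pow, norm_nat_eq_one (five_not_dvd_5c1 c), one_pow, div_one]
  exact norm_mul_le_left (norm_nat_le_one _) (norm_nat_le_one _)

/-- The key algebraic congruence: Qq m c depends on c with gain 2, when m ≡ 1,3 mod 5. -/
lemma Qcong (m : ℕ) (hm : m % 5 = 1 ∨ m % 5 = 3) {j c c' t : ℕ} (hc : c = c' + 5^j*t)
    (hcm : 5*c+1 ≤ m) : ‖Qq m c - Qq m c'‖ ≤ pw (j+2) := by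
  have hcm' : 5*c' + 1 ≤ m := by omega
  set Nint : ℤ := ((m:ℤ)+5*c+1)*((m:ℤ)-5*c)*(5*(c':ℤ)+1)^2
      - ((m:ℤ)+5*c'+1)*((m:ℤ)-5*c')*(5*(c:ℤ)+1)^2 with hN
  have key : Qq m c - Qq m c' = (Nint : Q5) / ((((5*c+1 : ℕ) : Q5))^2 * (((5*c'+1 : ℕ) : Q5))^2) := by
    rw [Qq, Qq]
    have h1 : (((m - 5*c : ℕ)) : Q5) = (m:Q5) - 5*(c:Q5) := by
      push_cast [Nat.cast_sub (show 5*c ≤ m by omega)]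
      ring
    have h2 : (((m - 5*c' : ℕ)) : Q5) = (m:Q5) - 5*(c':Q5) := by
      push_cast [Nat.cast_sub (show 5*c' ≤ m by omega)]
      ring
    have e1 : (((m+5*c+1 : ℕ)) : Q5) = (m:Q5) + 5*(c:Q5) + 1 := by push_cast; ring
    have e2 : (((m+5*c'+1 : ℕ)) : Q5) = (m:Q5) + 5*(c':Q5) + 1 := by push_cast; ring
    have e3 : (((5*c+1 : ℕ)) : Q5) = 5*(c:Q5) + 1 := by push_cast; ring
    have e4 : (((5*c'+1 : ℕ)) : Q5) = 5*(c':Q5) + 1 := by push_cast; ring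
    have eN : ((Nint : ℤ) : Q5) = ((m:Q5) + 5*(c:Q5) + 1)*((m:Q5)-5*(c:Q5))*(5*(c':Q5)+1)^2
        - ((m:Q5)+5*(c':Q5)+1)*((m:Q5)-5*(c':Q5))*(5*(c:Q5)+1)^2 := by
      rw [hN]; push_cast; ring
    have d1 : (5*(c:Q5) + 1) ≠ 0 := by rw [← e3]; exact Qq_ne_den c
    have d2 : (5*(c':Q5) + 1) ≠ 0 := by rw [← e4]; exact Qq_ne_den c'
    rw [h1, h2, e1, e2, e3, e4, eN]
    field_simp
    try ring
  have hdvd : ((5:ℤ))^(j+2) ∣ Nint := by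
    have hfact : Nint = 5*((c':ℤ)-c)*((2*(m:ℤ)^2+2*m+1) + 5*((c:ℤ)+c')*((m:ℤ)^2+m+1) + 25*c*c') := by
      rw [hN]; ring
    have h5G : (5:ℤ) ∣ (2*(m:ℤ)^2+2*m+1) + 5*((c:ℤ)+c')*((m:ℤ)^2+m+1) + 25*(c:ℤ)*c' := by
      have hX : (5:ℤ) ∣ 2*(m:ℤ)^2+2*m+1 := by
        have hz : ((2*(m:ℤ)^2+2*m+1 : ℤ) : ZMod 5) = 0 := by
          have hmz : ((m:ℤ) : ZMod 5) = ((m % 5 : ℕ) : ZMod 5) := by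
            push_cast
            rw [ZMod.natCast_mod]
          push_cast
          rw [show ((m:ℤ) : ZMod 5) = ((m:ℕ) : ZMod 5) by push_cast; ring] at *
          rw [hmz]
          rcases hm with h | h <;> rw [h] <;> decide
        exact (ZMod.intCast_zmod_eq_zero_iff_dvd _ 5).mp hz
      obtain ⟨w, hw⟩ := hX
      exact ⟨w + ((c:ℤ)+c')*((m:ℤ)^2+m+1) + 5*c*c', by rw [hw]; ring⟩
    have hdc : ((5:ℤ))^j ∣ ((c':ℤ) - c) := by
      rw [hc]; push_cast; ring_nf
      exact ⟨-(t:ℤ), by ring⟩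
    obtain ⟨u, hu⟩ := hdc
    obtain ⟨v, hv⟩ := h5G
    rw [hfact, hu, hv]
    have hpe : (5:ℤ)^(j+2) = 5*5^j*5 := by ring
    rw [hpe]
    exact ⟨u*v, by ring⟩
  rw [key, norm_div]
  have hden : ‖(((5*c+1 : ℕ) : Q5))^2 * (((5*c'+1 : ℕ) : Q5))^2‖ = 1 := by
    rw [norm_mul, norm_pow, norm_pow, norm_nat_eq_one (five_not_dvd_5c1 c),
      norm_nat_eq_one (five_not_dvd_5c1 c')]
    norm_num
  rw [hden, div_one]
  exact norm_int_le _ _ hdvd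

/-- exact identity : Uf at s=1 equals Uf at s=0 times Qq. -/
lemma Uf_Q (m c : ℕ) (hm : m % 5 = 1 ∨ m % 5 = 3) (h : 5*c+1 ≤ m) :
    Uf m (5*c+1) = Uf m (5*c) * Qq m c := by
  have h1 : Fn (m+5*c+1) = Fn (m+5*c) * (m+5*c+1) :=
    Fn_succ_of_not_dvd (by omega)
  have h2 : Fn (5*c+1) = Fn (5*c) * (5*c+1) :=
    Fn_succ_of_not_dvd (by omega)
  have h3 : Fn (m-5*c) = Fn (m-5*c-1) * (m-5*c) := by
    have e : m - 5*c = (m - 5*c - 1) + 1 := by omega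
    rw [e, Fn_succ_of_not_dvd (by omega)]
    congr 1
  rw [Uf, Uf, Qq]
  have e1 : m + (5*c+1) = m+5*c+1 := by ring
  have e2 : m - (5*c+1) = m-5*c-1 := by omega
  have e3 : m + (5*c) = m+5*c := by ring
  rw [e1, e2, e3]
  rw [show Fq (m+5*c+1) = Fq (m+5*c) * ((m+5*c+1 : ℕ) : Q5) by
    rw [Fq, Fq, h1]; push_cast; ring]
  rw [show Fq (5*c+1) = Fq (5*c) * ((5*c+1 : ℕ) : Q5) by
    rw [Fq, Fq, h2]; push_cast; ring]
  rw [show Fq (m-5*c) = Fq (m-5*c-1) * ((m-5*c : ℕ) : Q5) by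
    rw [Fq, Fq, h3]; push_cast; ring]
  have d1 : Fq (5*c) ≠ 0 := Fq_ne_zero _
  have d2 : Fq (m-5*c-1) ≠ 0 := Fq_ne_zero _
  have d3 : (((5*c+1:ℕ)) : Q5) ≠ 0 := Qq_ne_den c
  have d4 : (((m-5*c:ℕ)) : Q5) ≠ 0 := by
    intro hz
    have := norm_nat_eq_one (show ¬ 5 ∣ (m-5*c) by omega)
    rw [hz] at this
    simp at this
  rw [_root_.div_mul_div_comm, div_eq_div_iff (by
      exact mul_ne_zero (pow_ne_zero 2 (mul_ne_zero d1 d3)) d2)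
    (mul_ne_zero (mul_ne_zero (pow_ne_zero 2 d1) (mul_ne_zero d2 d4)) (pow_ne_zero 2 d3))]
  ring

lemma sum_split (m₁ r₁ : ℕ) (hr : r₁ < 5) (g : ℕ → Q5) :
    ∑ b ∈ range (5*m₁+r₁+1), g b
      = (∑ s ∈ range (r₁+1), ∑ c ∈ range (m₁+1), g (5*c+s))
      + ∑ s ∈ Ico (r₁+1) 5, ∑ c ∈ range m₁, g (5*c+s) := by
  induction m₁ with
  | zero =>
    simp [Finset.sum_range_one]
  | succ n ih =>
    have e1 : 5*(n+1)+r₁+1 = (5*n+r₁+1) + 5 := by ring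
    rw [e1, Finset.sum_range_add, ih]
    have e2 : ∀ s ∈ range (r₁+1), ∑ c ∈ range (n+1+1), g (5*c+s)
        = (∑ c ∈ range (n+1), g (5*c+s)) + g (5*(n+1)+s) := by
      intro s _
      rw [Finset.sum_range_succ]
    have e3 : ∀ s ∈ Ico (r₁+1) 5, ∑ c ∈ range (n+1), g (5*c+s)
        = (∑ c ∈ range n, g (5*c+s)) + g (5*n+s) := by
      intro s _
      rw [Finset.sum_range_succ]
    rw [Finset.sum_congr rfl e2, Finset.sum_congr rfl e3, Finset.sum_add_distrib,
      Finset.sum_add_distrib]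
    have key : ∑ i ∈ range 5, g (5*n+r₁+1+i)
        = (∑ s ∈ Ico (r₁+1) 5, g (5*n+s)) + ∑ s ∈ range (r₁+1), g (5*(n+1)+s) := by
      rw [Finset.sum_Ico_eq_sum_range]
      interval_cases r₁ <;>
        simp [Finset.sum_range_succ] <;>
        ring_nf <;>
        (try rw [show 5*n+5 = 5+5*n by ring]) <;>
        abel_nf <;>
        congr 1 <;> omega
    rw [key]
    ring
/-! ## more weight-class helpers -/

lemma H1_congr {N : ℕ} {X Y : ℕ → Q5} (h : ∀ b, b ≤ N → X b = Y b) (hX : H1 N X) : H1 N Y := by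
  refine ⟨fun b hb => h b hb ▸ hX.1 b hb, fun j b b' hb hb' hm => ?_⟩
  rw [← h b hb, ← h b' hb']
  exact hX.2 j b b' hb hb' hm

lemma H0_congr {N : ℕ} {X Y : ℕ → Q5} (h : ∀ b, b ≤ N → X b = Y b) (hX : H0 N X) : H0 N Y := by
  refine ⟨fun b hb => h b hb ▸ hX.1 b hb, fun j b b' hb hb' hm => ?_⟩
  rw [← h b hb, ← h b' hb']
  exact hX.2 j b b' hb hb' hm

lemma H1_sq {N : ℕ} {X : ℕ → Q5} (hX : H1 N X) : H1 N (fun b => (X b)^2) := by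
  have := H1_mul hX hX
  apply H1_congr (fun b _ => by simp [sq]) this

lemma H0_sq {N : ℕ} {X : ℕ → Q5} (hX : H0 N X) : H0 N (fun b => (X b)^2) := by
  have := H0_mul hX hX
  apply H0_congr (fun b _ => by simp [sq]) this

lemma H0_Pf (β γ m₁ N : ℕ) (hβ : β ≤ 1) (hγ : γ ≤ 1) :
    H0 N (fun c => ((Pf β γ m₁ c : ℕ) : Q5)) := by
  have hmod : ∀ j c c', c ≡ c' [MOD 5^j] → Pf β γ m₁ c ≡ Pf β γ m₁ c' [MOD 5^j] := by
    intro j c c' hm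
    interval_cases β <;> interval_cases γ
    · exact Nat.ModEq.refl _
    · exact (hm.add_left m₁).add_right 1
    · exact hm.add_left m₁
    · exact Nat.ModEq.mul (hm.add_left m₁) ((hm.add_left m₁).add_right 1)
  exact ⟨fun b _ => norm_nat_le_one _,
    fun j b b' _ _ hm => norm_nat_modeq _ _ j (hmod j b b' hm)⟩

lemma norm_sq_le_one_of {x : Q5} (h : ‖x‖ ≤ 1) : ‖x^2‖ ≤ 1 := by
  rw [sq]
  exact norm_mul_le_left h h

/-- class decomposition of a partial sum -/
lemma classSum (m₁ r₁ s β γ : ℕ) (hr : r₁ < 5) (hs : s < 5)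
    (hβ : (s ≤ r₁ ∧ β = 0) ∨ (r₁ < s ∧ β = 1))
    (hγ : (r₁ + s < 5 ∧ γ = 0) ∨ (5 ≤ r₁ + s ∧ γ = 1))
    (W : ℕ → Q5) :
    ∑ c ∈ range (m₁+1-β), (Mn (5*m₁+r₁) (5*c+s) : Q5)^2 * W (5*c+s)
      = (5:Q5)^(2*(β+γ)) * ∑ c ∈ range (m₁+1-β), (Mn (m₁-β) c : Q5)^2 *
          ((Pf β γ m₁ c : Q5)^2 * ((Uf (5*m₁+r₁) (5*c+s))^2 * W (5*c+s))) := by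
  rw [Finset.mul_sum]
  apply Finset.sum_congr rfl
  intro c hc
  have hβ1 : β ≤ 1 := by rcases hβ with ⟨_,h⟩|⟨_,h⟩ <;> omega
  have hcm : c + β ≤ m₁ := by
    have := Finset.mem_range.mp hc
    omega
  rw [Mn_decompQ m₁ r₁ c s β γ hr hs hβ hγ hcm]
  rw [mul_pow, mul_pow, mul_pow, ← pow_mul]
  have : (β+γ)*2 = 2*(β+γ) := by ring
  rw [this]
  ring

/-! ## the main-class weight -/

noncomputable def W00 (m₁ r₁ : ℕ) (W : ℕ → Q5) (c : ℕ) : Q5 :=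
  ∑ s ∈ range (min r₁ (4-r₁) + 1), (Uf (5*m₁+r₁) (5*c+s))^2 * W (5*c+s)

lemma dg_one {r : ℕ} (h : r = 1 ∨ r = 3) : dg r = 1 := by unfold dg; simp [h]
lemma dg_zero {r : ℕ} (h : ¬(r = 1 ∨ r = 3)) : dg r = 0 := by unfold dg; simp [h]
lemma min13 {r : ℕ} (h : r = 1 ∨ r = 3) : min r (4-r) = 1 := by
  rcases h with h | h <;> subst h <;> decide

lemma sum_sq_13 {r : ℕ} (h : r = 1 ∨ r = 3) : (5:ℕ) ∣ (Mn r 0)^2 + (Mn r 1)^2 := by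
  rcases h with h | h <;> subst h <;> decide

lemma norm_sum_sq_13 {r : ℕ} (h : r = 1 ∨ r = 3) :
    ‖((Mn r 0 : Q5))^2 + ((Mn r 1 : Q5))^2‖ ≤ pw 1 := by
  have hdvd : (5:ℤ)^1 ∣ (((Mn r 0)^2 + (Mn r 1)^2 : ℕ) : ℤ) := by
    rw [pow_one]
    exact_mod_cast sum_sq_13 h
  have := norm_int_le _ 1 hdvd
  have hcast : ((((Mn r 0)^2 + (Mn r 1)^2 : ℕ) : ℤ) : Q5) = ((Mn r 0 : Q5))^2 + ((Mn r 1 : Q5))^2 := by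
    push_cast; ring
  rwa [hcast] at this

lemma term_norm_le {m : ℕ} {W : ℕ → Q5} (hW : Hb m W) {b : ℕ} (hb : b ≤ m) :
    ‖(Uf m b)^2 * W b‖ ≤ 1 :=
  norm_mul_le_left (norm_sq_le_one_of (le_of_eq (norm_Uf m b))) (hW b hb)

lemma W00_bound (m₁ r₁ : ℕ) (hr : r₁ < 5) {W : ℕ → Q5} (hW : H1 (5*m₁+r₁) W) {c : ℕ}
    (hc : c ≤ m₁) : ‖W00 m₁ r₁ W c‖ ≤ pw (dg r₁) := by
  by_cases h13 : r₁ = 1 ∨ r₁ = 3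
  · rw [dg_one h13, W00, min13 h13]
    rw [Finset.sum_range_succ, Finset.sum_range_one]
    have hr1 : 1 ≤ r₁ := by rcases h13 with h|h <;> omega
    set m := 5*m₁+r₁ with hm
    set U0 := Uf m (5*c+0) with hU0
    set U1 := Uf m (5*c+1) with hU1
    set L0 : Q5 := ((Mn r₁ 0 : ℕ) : Q5) with hL0
    set L1 : Q5 := ((Mn r₁ 1 : ℕ) : Q5) with hL1
    have hb0 : 5*c+0 ≤ m := by omega
    have hb1 : 5*c+1 ≤ m := by omega
    have hid : U0^2 * W (5*c+0) + U1^2 * W (5*c+1)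
        = (U0^2 - L0^2) * W (5*c+0) + (U1^2 - L1^2) * W (5*c+1)
          + L1^2 * (W (5*c+1) - W (5*c+0)) + (L0^2 + L1^2) * W (5*c+0) := by ring
    rw [hid]
    have hUL0 : ‖U0 - L0‖ ≤ pw 1 := Uf_Mloc m₁ r₁ c 0 hr (by omega) (by omega) hc
    have hUL1 : ‖U1 - L1‖ ≤ pw 1 := by
      apply Uf_Mloc m₁ r₁ c 1 hr hr1 (by rcases h13 with h|h <;> omega) hc
    have hL0n : ‖L0‖ ≤ 1 := norm_nat_le_one _
    have hL1n : ‖L1‖ ≤ 1 := norm_nat_le_one _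
    have hU0n : ‖U0‖ ≤ 1 := le_of_eq (norm_Uf _ _)
    have hU1n : ‖U1‖ ≤ 1 := le_of_eq (norm_Uf _ _)
    have hsq0 : ‖U0^2 - L0^2‖ ≤ pw 1 := by
      have : U0^2 - L0^2 = U0*U0 - L0*L0 := by ring
      rw [this]
      exact norm_mul_sub_mul hU0n hL0n hUL0 hUL0
    have hsq1 : ‖U1^2 - L1^2‖ ≤ pw 1 := by
      have : U1^2 - L1^2 = U1*U1 - L1*L1 := by ring
      rw [this]
      exact norm_mul_sub_mul hU1n hL1n hUL1 hUL1
    have hWd : ‖W (5*c+1) - W (5*c+0)‖ ≤ pw 1 := by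
      have := hW.2 0 (5*c+1) (5*c+0) hb1 hb0 (Nat.modEq_one)
      simpa using this
    apply norm_add_le_of_le
    apply norm_add_le_of_le
    apply norm_add_le_of_le
    · exact norm_mul_le_left hsq0 (hW.1 _ hb0)
    · exact norm_mul_le_left hsq1 (hW.1 _ hb1)
    · exact norm_mul_le_right (norm_sq_le_one_of hL1n) hWd
    · exact norm_mul_le_left (norm_sum_sq_13 h13) (hW.1 _ hb0)
  · rw [dg_zero h13, pw_zero, W00]
    apply norm_sum_le _ _ 1 (by norm_num)
    intro s hs
    have hs' : s ≤ r₁ := by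
      have := Finset.mem_range.mp hs
      omega
    exact term_norm_le hW.1 (by omega)

lemma W00_diff_ord (m₁ r₁ : ℕ) (hr : r₁ < 5) {W : ℕ → Q5} (hW : H1 (5*m₁+r₁) W)
    {j c c' t : ℕ} (hct : c = c' + 5^j*t) (hc : c ≤ m₁) (hc' : c' ≤ m₁) :
    ‖W00 m₁ r₁ W c - W00 m₁ r₁ W c'‖ ≤ pw (j+1+dg r₁) := by
  set m := 5*m₁+r₁ with hm
  have hmod : c ≡ c' [MOD 5^j] :=
    ((Nat.modEq_iff_dvd' (show c' ≤ c by omega)).mpr ⟨t, by omega⟩).symm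
  by_cases h13 : r₁ = 1 ∨ r₁ = 3
  · rw [dg_one h13]
    have hr1 : 1 ≤ r₁ := by rcases h13 with h|h <;> omega
    have hm5 : m % 5 = r₁ := by omega
    have hm13 : m % 5 = 1 ∨ m % 5 = 3 := by rw [hm5]; exact h13
    have hb1 : 5*c+1 ≤ m := by omega
    have hb1' : 5*c'+1 ≤ m := by omega
    have hb0 : 5*c+0 ≤ m := by omega
    have hb0' : 5*c'+0 ≤ m := by omega
    set U0c := Uf m (5*c+0) with hU0c
    set U0c' := Uf m (5*c'+0) with hU0c'
    set Qc := Qq m c with hQc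
    set Qc' := Qq m c' with hQc'
    have hE : 5*c+0 = 5*c := by ring
    have hE' : 5*c'+0 = 5*c' := by ring
    have hQ1 : Uf m (5*c+1) = U0c * Qc := by
      rw [hU0c, hE]
      exact Uf_Q m c hm13 hb1
    have hQ1' : Uf m (5*c'+1) = U0c' * Qc' := by
      rw [hU0c', hE']
      exact Uf_Q m c' hm13 hb1'
    have hQ : ‖Qc - Qc'‖ ≤ pw (j+2) := Qcong m hm13 hct hb1
    have hQn : ‖Qc‖ ≤ 1 := norm_Qq_le m c
    have hQn' : ‖Qc'‖ ≤ 1 := norm_Qq_le m c'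
    have hQ2 : ‖Qc^2 - Qc'^2‖ ≤ pw (j+2) := by
      have e : Qc^2 - Qc'^2 = Qc*Qc - Qc'*Qc' := by ring
      rw [e]
      exact norm_mul_sub_mul hQn hQn' hQ hQ
    have hU0d : ‖U0c - U0c'‖ ≤ pw (j+1) := Uf_diff m 0 hct hb0
    have hU0n : ‖U0c‖ ≤ 1 := le_of_eq (norm_Uf _ _)
    have hU0n' : ‖U0c'‖ ≤ 1 := le_of_eq (norm_Uf _ _)
    have hU0sq : ‖U0c^2 - U0c'^2‖ ≤ pw (j+1) := by
      have e : U0c^2 - U0c'^2 = U0c*U0c - U0c'*U0c' := by ring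
      rw [e]
      exact norm_mul_sub_mul hU0n hU0n' hU0d hU0d
    have hW0 : ‖W (5*c+0) - W (5*c'+0)‖ ≤ pw (j+2) := by
      exact hW.2 (j+1) _ _ hb0 hb0' (modeq_shift hmod)
    have hW1 : ‖W (5*c+1) - W (5*c'+1)‖ ≤ pw (j+2) := by
      exact hW.2 (j+1) _ _ hb1 hb1' (modeq_shift hmod)
    have hU0ne : U0c' ≠ 0 := by
      intro hz
      have := norm_Uf m (5*c'+0)
      rw [← hU0c', hz] at this
      simp at this
    -- bound for the mixed bracket
    have hU0norm : ‖U0c'^2‖ = 1 := by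
      rw [norm_pow, hU0c', norm_Uf, one_pow]
    have hBid : U0c'^2 * (W (5*c'+0) + Qc^2 * W (5*c'+1))
        = W00 m₁ r₁ W c' + U0c'^2 * (Qc^2 - Qc'^2) * W (5*c'+1) := by
      rw [W00, min13 h13, Finset.sum_range_succ, Finset.sum_range_one, hQ1']
      ring
    have hB : ‖W (5*c'+0) + Qc^2 * W (5*c'+1)‖ ≤ pw 1 := by
      have e1 : ‖W (5*c'+0) + Qc^2 * W (5*c'+1)‖
          = ‖U0c'^2 * (W (5*c'+0) + Qc^2 * W (5*c'+1))‖ := by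
        rw [norm_mul, hU0norm, one_mul]
      rw [e1, hBid]
      apply norm_add_le_of_le
      · have := W00_bound m₁ r₁ hr hW hc'
        rwa [dg_one h13] at this
      · refine (norm_mul_le_left (norm_mul_le_right (le_of_eq hU0norm) hQ2)
          (hW.1 _ hb1')).trans (pw_anti (by omega))
    -- main identity
    have hid : W00 m₁ r₁ W c - W00 m₁ r₁ W c'
        = U0c^2 * (W (5*c+0) - W (5*c'+0)) + (U0c*Qc)^2 * (W (5*c+1) - W (5*c'+1))
          + (U0c^2 - U0c'^2) * (W (5*c'+0) + Qc^2 * W (5*c'+1))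
          + U0c'^2 * (Qc^2 - Qc'^2) * W (5*c'+1) := by
      rw [W00, W00, min13 h13, Finset.sum_range_succ, Finset.sum_range_one,
        Finset.sum_range_succ, Finset.sum_range_one, hQ1, hQ1']
      ring
    rw [hid]
    have hp12 : pw (j+2) ≤ pw (j+1+1) := le_of_eq (by norm_num)
    apply norm_add_le_of_le
    apply norm_add_le_of_le
    apply norm_add_le_of_le
    · exact (norm_mul_le_right (norm_sq_le_one_of hU0n) hW0).trans hp12
    · refine (norm_mul_le_right (norm_sq_le_one_of ?_) hW1).trans hp12
      exact norm_mul_le_left hU0n hQn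
    · have := norm_mul_le_of_le hU0sq hB (by
        exact (norm_nonneg _).trans hU0sq)
      calc ‖(U0c^2 - U0c'^2) * (W (5*c'+0) + Qc^2 * W (5*c'+1))‖
          ≤ pw (j+1) * pw 1 := this
        _ = pw (j+1+1) := (pw_add (j+1) 1).symm
    · refine (norm_mul_le_left (norm_mul_le_right (norm_sq_le_one_of hU0n') hQ2)
        (hW.1 _ hb1')).trans hp12
  · rw [dg_zero h13]
    rw [W00, W00, ← Finset.sum_sub_distrib]
    apply norm_sum_le _ _ (pw (j+1+0)) (pw_nonneg _)
    intro s hs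
    have hs' : s ≤ r₁ := by
      have := Finset.mem_range.mp hs
      omega
    have hbc : 5*c+s ≤ m := by omega
    have hbc' : 5*c'+s ≤ m := by omega
    have hUd : ‖(Uf m (5*c+s))^2 - (Uf m (5*c'+s))^2‖ ≤ pw (j+1) := by
      have e : (Uf m (5*c+s))^2 - (Uf m (5*c'+s))^2
          = Uf m (5*c+s)*Uf m (5*c+s) - Uf m (5*c'+s)*Uf m (5*c'+s) := by ring
      rw [e]
      exact norm_mul_sub_mul (le_of_eq (norm_Uf _ _)) (le_of_eq (norm_Uf _ _))
        (Uf_diff m s hct hbc) (Uf_diff m s hct hbc)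
    have hWd : ‖W (5*c+s) - W (5*c'+s)‖ ≤ pw (j+1) := by
      exact (hW.2 (j+1) _ _ hbc hbc' (modeq_shift hmod)).trans (pw_anti (by omega))
    have := norm_mul_sub_mul (norm_sq_le_one_of (le_of_eq (norm_Uf m (5*c+s))))
      (hW.1 _ hbc') hUd hWd
    simpa using this

lemma W00_diff (m₁ r₁ : ℕ) (hr : r₁ < 5) {W : ℕ → Q5} (hW : H1 (5*m₁+r₁) W)
    {j c c' : ℕ} (hc : c ≤ m₁) (hc' : c' ≤ m₁) (hmod : c ≡ c' [MOD 5^j]) :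
    ‖W00 m₁ r₁ W c - W00 m₁ r₁ W c'‖ ≤ pw (j+1+dg r₁) := by
  rcases le_total c' c with hle | hle
  · obtain ⟨t, ht⟩ := (Nat.modEq_iff_dvd' hle).mp hmod.symm
    exact W00_diff_ord m₁ r₁ hr hW (show c = c' + 5^j*t by omega) hc hc'
  · obtain ⟨t, ht⟩ := (Nat.modEq_iff_dvd' hle).mp hmod
    rw [← norm_neg]
    simp only [neg_sub]
    exact W00_diff_ord m₁ r₁ hr hW (show c' = c + 5^j*t by omega) hc' hc

lemma pw_ne_zero (k : ℕ) : pw k ≠ 0 := ne_of_gt (pw_pos k)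

lemma Vlemma (m₁ r₁ : ℕ) (hr : r₁ < 5) {W : ℕ → Q5} (hW : H1 (5*m₁+r₁) W) :
    H1 m₁ (fun c => ((5:Q5)^(dg r₁))⁻¹ * W00 m₁ r₁ W c) := by
  have h5 : ‖((5:Q5)^(dg r₁))⁻¹‖ = (pw (dg r₁))⁻¹ := by
    rw [norm_inv, norm_five_pow]
  constructor
  · intro b hb
    rw [norm_mul, h5]
    calc (pw (dg r₁))⁻¹ * ‖W00 m₁ r₁ W b‖
        ≤ (pw (dg r₁))⁻¹ * pw (dg r₁) := by
          apply mul_le_mul_of_nonneg_left (W00_bound m₁ r₁ hr hW hb)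
          exact inv_nonneg.mpr (pw_nonneg _)
      _ = 1 := inv_mul_cancel₀ (pw_ne_zero _)
  · intro j b b' hb hb' hmod
    have e : ((5:Q5)^(dg r₁))⁻¹ * W00 m₁ r₁ W b - ((5:Q5)^(dg r₁))⁻¹ * W00 m₁ r₁ W b'
        = ((5:Q5)^(dg r₁))⁻¹ * (W00 m₁ r₁ W b - W00 m₁ r₁ W b') := by ring
    rw [e, norm_mul, h5]
    calc (pw (dg r₁))⁻¹ * ‖W00 m₁ r₁ W b - W00 m₁ r₁ W b'‖
        ≤ (pw (dg r₁))⁻¹ * pw (j+1+dg r₁) := by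
          apply mul_le_mul_of_nonneg_left (W00_diff m₁ r₁ hr hW hb hb' hmod)
          exact inv_nonneg.mpr (pw_nonneg _)
      _ = pw (j+1) := by
          rw [pw_add, mul_comm (pw (j+1)) (pw (dg r₁)), ← mul_assoc,
            inv_mul_cancel₀ (pw_ne_zero _), one_mul]

/-! ## the master theorem -/

noncomputable def Sw (m : ℕ) (W : ℕ → Q5) : Q5 := ∑ b ∈ range (m+1), (Mn m b : Q5)^2 * W b

lemma Sw_congr {m : ℕ} {X Y : ℕ → Q5} (h : ∀ b, b ≤ m → X b = Y b) : Sw m X = Sw m Y := by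
  unfold Sw
  apply Finset.sum_congr rfl
  intro b hb
  rw [h b (by have := Finset.mem_range.mp hb; omega)]

theorem master (m : ℕ) :
    (∀ W, H1 m W → ‖Sw m W‖ ≤ pw (al m)) ∧
    (∀ q X, H0 m q → H1 m X → ‖Sw m (fun b => q b * X b)‖ ≤ pw (al (m/5))) := by
  induction m using Nat.strong_induction_on with
  | _ m IH =>
  rcases Nat.eq_zero_or_pos m with rfl | hmpos
  · constructor
    · intro W hW
      have h0 : Sw 0 W = W 0 := by simp [Sw, Mn]
      rw [h0, al_zero, pw_zero]
      exact hW.1 0 le_rfl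
    · intro q X hq hX
      have h0 : Sw 0 (fun b => q b * X b) = q 0 * X 0 := by simp [Sw, Mn]
      rw [h0]
      simp only [Nat.zero_div, al_zero, pw_zero]
      exact norm_mul_le_left (hq.1 0 le_rfl) (hX.1 0 le_rfl)
  -- m ≥ 1
  set m₁ := m / 5 with hm₁def
  set r₁ := m % 5 with hr₁def
  have hr5 : r₁ < 5 := by omega
  have hm5 : m = 5*m₁+r₁ := by omega
  have hal : al m = dg r₁ + al m₁ := al_eq m (by omega)
  have hm₁lt : m₁ < m := by omega
  set k₀ := min r₁ (4-r₁) with hk₀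
  have hk₀r : k₀ ≤ r₁ := by omega
  -- peeling of the sum
  have peel : ∀ Wh : ℕ → Q5, Sw m Wh =
      ((∑ s ∈ range (k₀+1), ∑ c ∈ range (m₁+1), (Mn m (5*c+s):Q5)^2 * Wh (5*c+s))
      + ∑ s ∈ Ico (k₀+1) (r₁+1), ∑ c ∈ range (m₁+1), (Mn m (5*c+s):Q5)^2 * Wh (5*c+s))
      + ∑ s ∈ Ico (r₁+1) 5, ∑ c ∈ range m₁, (Mn m (5*c+s):Q5)^2 * Wh (5*c+s) := by
    intro Wh
    rw [Sw]
    have e0 : m + 1 = 5*m₁+r₁+1 := by omega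
    rw [e0]
    have hsplit := sum_split m₁ r₁ hr5 (fun b => (Mn m b : Q5)^2 * Wh b)
    rw [hsplit]
    have hP : ∑ s ∈ range (r₁+1), ∑ c ∈ range (m₁+1), (Mn m (5*c+s):Q5)^2 * Wh (5*c+s)
        = (∑ s ∈ range (k₀+1), ∑ c ∈ range (m₁+1), (Mn m (5*c+s):Q5)^2 * Wh (5*c+s))
          + ∑ s ∈ Ico (k₀+1) (r₁+1), ∑ c ∈ range (m₁+1), (Mn m (5*c+s):Q5)^2 * Wh (5*c+s) := by
      rw [Finset.range_eq_Ico,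
        ← Finset.sum_Ico_consecutive _ (Nat.zero_le (k₀+1)) (by omega : k₀+1 ≤ r₁+1),
        ← Finset.range_eq_Ico]
    rw [hP]
  -- the generic carry bound
  have hcarry : ∀ (β γ : ℕ) (q' X' : ℕ → Q5), β ≤ 1 → H0 (m₁-β) q' → H1 (m₁-β) X' →
      ‖(5:Q5)^(2*(β+γ)) * Sw (m₁-β) (fun c => q' c * X' c)‖
        ≤ pw (2*(β+γ) + al ((m₁-β)/5)) := by
    intro β γ q' X' hβ hq' hX'
    have hlt : m₁ - β < m := by omega
    have := (IH (m₁-β) hlt).2 q' X' hq' hX'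
    rw [norm_mul, norm_five_pow, pw_add]
    exact mul_le_mul_of_nonneg_left this (pw_nonneg _)
  -- hypotheses for the B2/B3 blocks, for a weight of the form q·X
  have hblocks : ∀ (q X : ℕ → Q5), H0 m q → H1 m X →
      (‖∑ s ∈ Ico (k₀+1) (r₁+1), ∑ c ∈ range (m₁+1),
          (Mn m (5*c+s):Q5)^2 * (fun b => q b * X b) (5*c+s)‖ ≤ pw (1 + al m₁))
      ∧ (‖∑ s ∈ Ico (r₁+1) 5, ∑ c ∈ range m₁,
          (Mn m (5*c+s):Q5)^2 * (fun b => q b * X b) (5*c+s)‖ ≤ pw (1 + al m₁)) := by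
    intro q X hq hX
    constructor
    · -- β = 0, γ = 1 block
      apply norm_sum_le _ _ _ (pw_nonneg _)
      intro s hs
      obtain ⟨hs1, hs2⟩ := Finset.mem_Ico.mp hs
      have hss : s ≤ r₁ := by omega
      have hs5 : s < 5 := by omega
      have hsge : 5 ≤ r₁ + s := by omega
      have hcs : ∀ c, c ∈ range (m₁+1) → 5*c + s ≤ m := by
        intro c hc
        have := Finset.mem_range.mp hc
        omega
      have hdec := classSum m₁ r₁ s 0 1 hr5 hs5 (Or.inl ⟨hss, rfl⟩) (Or.inr ⟨hsge, rfl⟩)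
        (fun b => q b * X b)
      rw [hm5]
      have e1 : m₁ + 1 - 0 = m₁ + 1 := by omega
      rw [e1] at hdec
      rw [hdec]
      set q' : ℕ → Q5 := fun c => (Pf 0 1 m₁ c : Q5)^2 * q (5*c+s) with hq'def
      set X' : ℕ → Q5 := fun c => (Uf (5*m₁+r₁) (5*c+s))^2 * X (5*c+s) with hX'def
      have hq' : H0 (m₁-0) q' := by
        rw [Nat.sub_zero]
        exact H0_mul (H0_sq (H0_Pf 0 1 m₁ m₁ (by omega) (by omega)))
          (H1_comp5 hq (by omega)).toH0
      have hX' : H1 (m₁-0) X' := by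
        rw [Nat.sub_zero]
        exact H1_mul (H1_sq (H1_Uf (5*m₁+r₁) s m₁ (by omega))) (H1_comp5' hX (by omega))
      have heq : ∑ c ∈ range (m₁+1), (Mn (m₁-0) c : Q5)^2 *
            ((Pf 0 1 m₁ c : Q5)^2 * ((Uf (5*m₁+r₁) (5*c+s))^2 * (q (5*c+s) * X (5*c+s))))
          = Sw (m₁-0) (fun c => q' c * X' c) := by
        rw [Sw, Nat.sub_zero]
        apply Finset.sum_congr rfl
        intro c _
        rw [hq'def, hX'def]
        ring
      rw [heq]
      have := hcarry 0 1 q' X' (by omega) hq' hX'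
      rw [Nat.sub_zero] at this
      refine this.trans (pw_anti ?_)
      have h1 := al_div m₁
      have hdg : dg r₁ ≤ 1 := by unfold dg; split <;> omega
      omega
    · -- β = 1 block
      rcases Nat.eq_zero_or_pos m₁ with hm₁0 | hm₁pos
      · have : ∀ s ∈ Ico (r₁+1) 5, ∑ c ∈ range m₁,
            (Mn m (5*c+s):Q5)^2 * (fun b => q b * X b) (5*c+s) = 0 := by
          intro s _
          rw [hm₁0]
          simp
        rw [Finset.sum_congr rfl this]
        simp [pw_nonneg]
      apply norm_sum_le _ _ _ (pw_nonneg _)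
      intro s hs
      obtain ⟨hs1, hs2⟩ := Finset.mem_Ico.mp hs
      have hss : r₁ < s := by omega
      have hs5 : s < 5 := by omega
      set γ := if r₁ + s < 5 then 0 else 1 with hγdef
      have hγ : (r₁ + s < 5 ∧ γ = 0) ∨ (5 ≤ r₁ + s ∧ γ = 1) := by
        by_cases h : r₁ + s < 5
        · left; exact ⟨h, by rw [hγdef]; simp [h]⟩
        · right; exact ⟨by omega, by rw [hγdef]; simp [h]⟩
      have hdec := classSum m₁ r₁ s 1 γ hr5 hs5 (Or.inr ⟨hss, rfl⟩) hγ
        (fun b => q b * X b)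
      have e1 : m₁ + 1 - 1 = m₁ := by omega
      rw [e1] at hdec
      rw [hm5, hdec]
      set q' : ℕ → Q5 := fun c => (Pf 1 γ m₁ c : Q5)^2 * q (5*c+s) with hq'def
      set X' : ℕ → Q5 := fun c => (Uf (5*m₁+r₁) (5*c+s))^2 * X (5*c+s) with hX'def
      have hγ1 : γ ≤ 1 := by rcases hγ with ⟨_,h⟩|⟨_,h⟩ <;> omega
      have hbound : ∀ c, c ≤ m₁ - 1 → 5*c+s ≤ m := by
        intro c hc
        omega
      have hq' : H0 (m₁-1) q' := by
        apply H0_mul (H0_sq (H0_Pf 1 γ m₁ (m₁-1) (by omega) hγ1))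
        exact (H1_comp5 hq (by omega : 5*(m₁-1) + s ≤ m)).toH0
      have hX' : H1 (m₁-1) X' := by
        apply H1_mul (H1_sq (H1_Uf (5*m₁+r₁) s (m₁-1) (by omega)))
        exact H1_comp5' hX (by omega : 5*(m₁-1) + s ≤ m)
      have heq : ∑ c ∈ range m₁, (Mn (m₁-1) c : Q5)^2 *
            ((Pf 1 γ m₁ c : Q5)^2 * ((Uf (5*m₁+r₁) (5*c+s))^2 * (q (5*c+s) * X (5*c+s))))
          = Sw (m₁-1) (fun c => q' c * X' c) := by
        rw [Sw, show m₁ - 1 + 1 = m₁ by omega]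
        apply Finset.sum_congr rfl
        intro c _
        rw [hq'def, hX'def]
        ring
      rw [heq]
      have := hcarry 1 γ q' X' (by omega) hq' hX'
      refine this.trans (pw_anti ?_)
      have h1 := al_pred_div m₁ hm₁pos
      have hdg : dg r₁ ≤ 1 := by unfold dg; split <;> omega
      omega
  constructor
  · -- part 1
    intro W hW
    rw [peel W]
    have hWm : H1 (5*m₁+r₁) W := by rw [← hm5]; exact hW
    -- main block
    have hmain : ∑ s ∈ range (k₀+1), ∑ c ∈ range (m₁+1), (Mn m (5*c+s):Q5)^2 * W (5*c+s)
        = (5:Q5)^(dg r₁) * Sw m₁ (fun c => ((5:Q5)^(dg r₁))⁻¹ * W00 m₁ r₁ W c) := by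
      rw [Finset.sum_comm, Sw, Finset.mul_sum]
      apply Finset.sum_congr rfl
      intro c hc
      have hcm : c ≤ m₁ := by have := Finset.mem_range.mp hc; omega
      have hWc : ∑ s ∈ range (k₀+1), (Mn m (5*c+s):Q5)^2 * W (5*c+s)
          = (Mn m₁ c : Q5)^2 * W00 m₁ r₁ W c := by
        rw [W00, Finset.mul_sum]
        apply Finset.sum_congr rfl
        intro s hs
        have hsk : s ≤ k₀ := by have := Finset.mem_range.mp hs; omega
        have := Mn_decompQ m₁ r₁ c s 0 0 hr5 (by omega) (Or.inl ⟨by omega, rfl⟩)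
          (Or.inl ⟨by omega, rfl⟩) (by omega)
        rw [hm5, this]
        have hPf : (Pf 0 0 m₁ c : Q5) = 1 := by norm_num [Pf]
        rw [hPf]
        norm_num
        ring
      rw [hWc]
      have h50 : ((5:Q5)^(dg r₁)) ≠ 0 := by
        apply pow_ne_zero
        intro h5z
        have : ‖(5:Q5)‖ = 0 := by rw [h5z]; simp
        rw [show ((5:Q5)) = ((5:ℕ):Q5) by norm_num] at this
        have h51 := norm_five_pow 1
        rw [pow_one] at h51
        rw [show ((5:Q5)) = ((5:ℕ):Q5) by norm_num] at h51
        rw [this] at h51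
        have := pw_pos 1
        rw [← h51] at this
        exact lt_irrefl 0 this
      have ht : (5:Q5)^(dg r₁) * ((5:Q5)^(dg r₁))⁻¹ = 1 := mul_inv_cancel₀ h50
      linear_combination (-((Mn m₁ c : Q5)^2 * W00 m₁ r₁ W c)) * ht
    have hmainb : ‖∑ s ∈ range (k₀+1), ∑ c ∈ range (m₁+1),
        (Mn m (5*c+s):Q5)^2 * W (5*c+s)‖ ≤ pw (al m) := by
      rw [hmain, norm_mul, norm_five_pow, hal, pw_add]
      apply mul_le_mul_of_nonneg_left _ (pw_nonneg _)
      exact (IH m₁ hm₁lt).1 _ (Vlemma m₁ r₁ hr5 hWm)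
    -- carry blocks, writing W = 1·W
    have hqX := hblocks (fun _ => (1:Q5)) W (H1_const 1 (by norm_num)).toH0 hW
    have hrw : ∀ (S : Finset ℕ) (T : ℕ → Finset ℕ),
        ∑ s ∈ S, ∑ c ∈ T s, (Mn m (5*c+s):Q5)^2 * (fun b => (1:Q5) * W b) (5*c+s)
        = ∑ s ∈ S, ∑ c ∈ T s, (Mn m (5*c+s):Q5)^2 * W (5*c+s) := by
      intro S T
      apply Finset.sum_congr rfl
      intro s _
      apply Finset.sum_congr rfl
      intro c _
      norm_num
    obtain ⟨hB2, hB3⟩ := hqX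
    rw [hrw] at hB2 hB3
    have hle : pw (1 + al m₁) ≤ pw (al m) := by
      apply pw_anti
      have : dg r₁ ≤ 1 := by unfold dg; split <;> omega
      omega
    apply norm_add_le_of_le
    apply norm_add_le_of_le
    · exact hmainb
    · exact hB2.trans hle
    · exact hB3.trans hle
  · -- part 2
    intro q X hq hX
    rw [peel (fun b => q b * X b)]
    obtain ⟨hB2, hB3⟩ := hblocks q X hq hX
    have htarget : al (m/5) = al m₁ := by rw [hm₁def]
    -- main block
    have hmainb : ‖∑ s ∈ range (k₀+1), ∑ c ∈ range (m₁+1),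
        (Mn m (5*c+s):Q5)^2 * (fun b => q b * X b) (5*c+s)‖ ≤ pw (al m₁) := by
      apply norm_sum_le _ _ _ (pw_nonneg _)
      intro s hs
      have hsk : s ≤ k₀ := by have := Finset.mem_range.mp hs; omega
      set Y : ℕ → Q5 := fun c => (Uf (5*m₁+r₁) (5*c+s))^2 * (q (5*c+s) * X (5*c+s)) with hYdef
      have hY : H1 m₁ Y := by
        apply H1_mul (H1_sq (H1_Uf (5*m₁+r₁) s m₁ (by omega)))
        exact H1_mul (H1_comp5 hq (by omega)) (H1_comp5' hX (by omega))
      have heq : ∑ c ∈ range (m₁+1), (Mn m (5*c+s):Q5)^2 * (fun b => q b * X b) (5*c+s)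
          = Sw m₁ Y := by
        rw [Sw]
        apply Finset.sum_congr rfl
        intro c hc
        have hcm : c ≤ m₁ := by have := Finset.mem_range.mp hc; omega
        have := Mn_decompQ m₁ r₁ c s 0 0 hr5 (by omega) (Or.inl ⟨by omega, rfl⟩)
          (Or.inl ⟨by omega, rfl⟩) (by omega)
        rw [hm5, this, hYdef]
        have hPf : (Pf 0 0 m₁ c : Q5) = 1 := by norm_num [Pf]
        rw [hPf]
        norm_num
        ring
      rw [heq]
      exact (IH m₁ hm₁lt).1 Y hY
    rw [htarget]
    have hle : pw (1 + al m₁) ≤ pw (al m₁) := pw_anti (by omega)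
    apply norm_add_le_of_le
    apply norm_add_le_of_le
    · exact hmainb
    · exact hB2.trans hle
    · exact hB3.trans hle

lemma cast_A1 (n : ℕ) : ((A1 n : ℤ) : Q5) = Sw n (fun _ => 1) := by
  unfold A1 Sw Mn
  push_cast
  apply Finset.sum_congr rfl
  intro b _
  ring

theorem key_dvd (n : ℕ) : (5:ℤ)^(al n) ∣ A1 n := by
  have h := (master n).1 (fun _ => 1) (H1_const 1 (by norm_num))
  rw [← cast_A1 n] at h
  have h2 : ‖((A1 n : ℤ) : Q5)‖ ≤ (5:ℝ)^(-(al n : ℤ)) := by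
    rw [← pw_eq_zpow]
    exact h
  have := (Padic.norm_int_le_pow_iff_dvd (p := 5) (A1 n) (al n)).mp (by exact_mod_cast h2)
  exact_mod_cast this

end BK

theorem beukers_conjecture_A (n : ℕ) :
    (5 : ℤ) ^ ((Nat.digits 5 n).filter (fun d => d = 1 ∨ d = 3)).length ∣ A1 n :=
  BK.key_dvd n
end

section
/- For every prime p ≡ 3 (mod 4), the Apéry number A2((p-1)/2) = \sum_{k=0}^{(p-1)/2} \binom{(p-1)/2}{k}^2 \binom{(p-1)/2+k}{k} is divisible by p. -/
def A2 (n : ℕ) : ℤ :=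
  ∑ k ∈ Finset.range (n + 1), (n.choose k : ℤ) ^ 2 * ((n + k).choose k : ℤ)

theorem beukers_stienstra (p : ℕ) (hp : p.Prime) (hp4 : p % 4 = 3) :
    (p : ℤ) ∣ A2 ((p - 1) / 2) := by
  haveI : Fact p.Prime := ⟨hp⟩
  set m := (p - 1) / 2 with hmdef
  have hp1 : 2 * m + 1 = p := by omega
  have hmodd : Odd m := ⟨(p - 3) / 4, by omega⟩
  -- ascFactorial vs descFactorial mod p
  have hasc : ∀ k, k ≤ m →
      (((m + 1).ascFactorial k : ZMod p)) = (-1) ^ k * (m.descFactorial k : ZMod p) := by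
    intro k hk
    induction k with
    | zero => simp
    | succ k ih =>
      have hk' : k ≤ m := Nat.le_of_succ_le hk
      rw [Nat.ascFactorial_succ, Nat.descFactorial_succ]
      push_cast
      rw [ih hk']
      have hzero : ((m : ZMod p) + 1 + (k : ZMod p)) = -((m : ZMod p) - (k : ZMod p)) := by
        have h0 : ((2 * m + 1 : ℕ) : ZMod p) = 0 := by rw [hp1]; exact ZMod.natCast_self p
        push_cast at h0
        linear_combination h0
      have hcast : ((m - k : ℕ) : ZMod p) = (m : ZMod p) - (k : ZMod p) := by
        have := Nat.cast_sub (R := ZMod p) hk'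
        exact this
      rw [hcast, hzero]
      ring
  -- key congruence for binomials
  have hkey : ∀ k, k ≤ m →
      (((m + k).choose k : ZMod p)) = (-1) ^ k * (m.choose k : ZMod p) := by
    intro k hk
    have hfact : ((k.factorial : ℕ) : ZMod p) ≠ 0 := by
      rw [Ne, ZMod.natCast_eq_zero_iff]
      intro hdvd
      have := (Nat.Prime.dvd_factorial hp).mp hdvd
      omega
    have h1 : ((m + 1).ascFactorial k : ℕ) = k.factorial * (m + k).choose k :=
      Nat.ascFactorial_eq_factorial_mul_choose m k
    have h2 : (m.descFactorial k : ℕ) = k.factorial * m.choose k :=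
      Nat.descFactorial_eq_factorial_mul_choose m k
    have h3 := hasc k hk
    rw [h1, h2] at h3
    push_cast at h3
    have h4 : ((k.factorial : ℕ) : ZMod p) * (((m + k).choose k : ℕ) : ZMod p)
        = ((k.factorial : ℕ) : ZMod p) * ((-1) ^ k * ((m.choose k : ℕ) : ZMod p)) := by
      linear_combination h3
    exact mul_left_cancel₀ hfact h4
  -- the alternating sum of cubes vanishes for odd m (over ℤ)
  have haltsum : ∑ k ∈ Finset.range (m + 1), (-1 : ℤ) ^ k * (m.choose k : ℤ) ^ 3 = 0 := by
    have hrefl := Finset.sum_range_reflect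
      (fun k => (-1 : ℤ) ^ k * (m.choose k : ℤ) ^ 3) (m + 1)
    have hneg : ∀ k ∈ Finset.range (m + 1),
        (fun k => (-1 : ℤ) ^ k * (m.choose k : ℤ) ^ 3) (m + 1 - 1 - k)
          = -((-1 : ℤ) ^ k * (m.choose k : ℤ) ^ 3) := by
      intro k hkmem
      have hk : k ≤ m := by
        simp only [Finset.mem_range] at hkmem; omega
      simp only
      have h1 : m + 1 - 1 - k = m - k := by omega
      rw [h1, Nat.choose_symm hk]
      have hmul : (-1 : ℤ) ^ (m - k) * (-1) ^ k = -1 := by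
        rw [← pow_add, show m - k + k = m by omega]
        exact hmodd.neg_one_pow
      have hsq : (-1 : ℤ) ^ k * (-1) ^ k = 1 := by
        rw [← pow_add, ← two_mul, pow_mul]
        norm_num
      have h2 : (-1 : ℤ) ^ (m - k) = -(-1 : ℤ) ^ k := by
        calc (-1 : ℤ) ^ (m - k) = (-1) ^ (m - k) * ((-1) ^ k * (-1) ^ k) := by
              rw [hsq, mul_one]
          _ = ((-1) ^ (m - k) * (-1) ^ k) * (-1) ^ k := by ring
          _ = -(-1) ^ k := by rw [hmul]; ring
      rw [h2]; ring
    have hS : ∑ k ∈ Finset.range (m + 1), (-1 : ℤ) ^ k * (m.choose k : ℤ) ^ 3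
        = -∑ k ∈ Finset.range (m + 1), (-1 : ℤ) ^ k * (m.choose k : ℤ) ^ 3 := by
      conv_lhs => rw [← hrefl]
      rw [Finset.sum_congr rfl hneg, Finset.sum_neg_distrib]
    linarith
  -- put everything together
  rw [← ZMod.intCast_zmod_eq_zero_iff_dvd]
  show ((A2 m : ℤ) : ZMod p) = 0
  rw [A2]
  push_cast
  have hsum : ∑ k ∈ Finset.range (m + 1),
        ((m.choose k : ZMod p)) ^ 2 * (((m + k).choose k : ℕ) : ZMod p)
      = ∑ k ∈ Finset.range (m + 1), (-1 : ZMod p) ^ k * (m.choose k : ZMod p) ^ 3 := by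
    refine Finset.sum_congr rfl fun k hkmem => ?_
    have hk : k ≤ m := by simp only [Finset.mem_range] at hkmem; omega
    rw [hkey k hk]; ring
  rw [hsum]
  have : ((∑ k ∈ Finset.range (m + 1), (-1 : ℤ) ^ k * (m.choose k : ℤ) ^ 3 : ℤ) : ZMod p)
      = ∑ k ∈ Finset.range (m + 1), (-1 : ZMod p) ^ k * (m.choose k : ZMod p) ^ 3 := by
    push_cast
    rfl
  rw [← this, haltsum]
  exact Int.cast_zero
end

section
/- For every prime p, every v ∈ {0,...,p-1}, and every natural number n, A2(v + n p) ≡ A2(v) A2(n) (mod p), where A2(n) = \sum_{k=0}^n \binom{n}{k}^2 \binom{n+k}{k}. -/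
section aux

variable {p : ℕ} [Fact p.Prime]

lemma lucasZ (n k : ℕ) :
    (n.choose k : ZMod p) = (Nat.choose (n % p) (k % p) : ZMod p) *
      (Nat.choose (n / p) (k / p) : ZMod p) := by
  have := (ZMod.intCast_eq_intCast_iff _ _ _).mpr
    (Choose.choose_modEq_choose_mod_mul_choose_div (n := n) (k := k) (p := p))
  push_cast at this
  exact this

end aux

theorem apery2_lucas (p : ℕ) (hp : p.Prime) (v n : ℕ) (hv : v < p) :
    A2 (v + n * p) ≡ A2 v * A2 n [ZMOD p] := by
  haveI : Fact p.Prime := ⟨hp⟩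
  have hp0 : 0 < p := hp.pos
  rw [← ZMod.intCast_eq_intCast_iff]
  simp only [A2]
  push_cast
  set t : ℕ → ZMod p := fun k =>
    (Nat.choose (v + n * p) k : ZMod p) ^ 2 * (Nat.choose (v + n * p + k) k : ZMod p) with ht
  set g : ℕ → ZMod p := fun a =>
    (Nat.choose v a : ZMod p) ^ 2 * (Nat.choose (v + a) a : ZMod p) with hg
  set h : ℕ → ZMod p := fun b =>
    (Nat.choose n b : ZMod p) ^ 2 * (Nat.choose (n + b) b : ZMod p) with hh
  have hmodN : (v + n * p) % p = v := by
    rw [Nat.add_mul_mod_self_right, Nat.mod_eq_of_lt hv]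
  have hdivN : (v + n * p) / p = n := by
    rw [Nat.add_mul_div_right _ _ hp0, Nat.div_eq_of_lt hv, zero_add]
  have key : ∀ a ∈ Finset.range p, ∀ b ∈ Finset.range (n + 1),
      t (a + b * p) = g a * h b := by
    intro a ha b _
    rw [Finset.mem_range] at ha
    have hmodK : (a + b * p) % p = a := by
      rw [Nat.add_mul_mod_self_right, Nat.mod_eq_of_lt ha]
    have hdivK : (a + b * p) / p = b := by
      rw [Nat.add_mul_div_right _ _ hp0, Nat.div_eq_of_lt ha, zero_add]
    have hsum : v + n * p + (a + b * p) = (v + a) + (n + b) * p := by ring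
    rcases lt_or_ge (v + a) p with hlt | hge
    · have hmodS : ((v + a) + (n + b) * p) % p = v + a := by
        rw [Nat.add_mul_mod_self_right, Nat.mod_eq_of_lt hlt]
      have hdivS : ((v + a) + (n + b) * p) / p = n + b := by
        rw [Nat.add_mul_div_right _ _ hp0, Nat.div_eq_of_lt hlt, zero_add]
      simp only [ht, hg, hh, hsum]
      rw [lucasZ (v + n * p), lucasZ ((v + a) + (n + b) * p),
        hmodN, hdivN, hmodK, hdivK, hmodS, hdivS]
      ring
    · -- carry case: both sides vanish
      have hva : v + a - p < a := by omega
      have hmodS : (v + a) % p = v + a - p := by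
        rw [Nat.mod_eq_sub_mod hge, Nat.mod_eq_of_lt (by omega)]
      have hS : ((v + a) + (n + b) * p) % p = v + a - p := by
        rw [Nat.add_mul_mod_self_right, hmodS]
      have h1 : (Nat.choose (v + n * p + (a + b * p)) (a + b * p) : ZMod p) = 0 := by
        rw [hsum, lucasZ, hS, hmodK, Nat.choose_eq_zero_of_lt hva]
        simp
      have h2 : (Nat.choose (v + a) a : ZMod p) = 0 := by
        rw [lucasZ, hmodS, Nat.mod_eq_of_lt ha, Nat.choose_eq_zero_of_lt hva]
        simp
      simp only [ht, hg, hh, h1, h2, mul_zero, zero_mul]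
  calc (∑ k ∈ Finset.range (v + n * p + 1), t k : ZMod p)
      = ∑ k ∈ Finset.range ((n + 1) * p), t k := by
        apply Finset.sum_subset
        · exact Finset.range_subset_range.mpr (by nlinarith)
        · intro k _ hk
          rw [Finset.mem_range, not_lt] at hk
          simp only [ht, Nat.choose_eq_zero_of_lt (by omega : v + n * p < k)]
          simp
    _ = ∑ x ∈ Finset.range p ×ˢ Finset.range (n + 1), t (x.1 + x.2 * p) := by
        apply Finset.sum_nbij' (fun k => (k % p, k / p)) (fun x => x.1 + x.2 * p)
        · intro k hk
          rw [Finset.mem_range] at hk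
          refine Finset.mem_product.mpr ⟨Finset.mem_range.mpr (Nat.mod_lt _ hp0),
            Finset.mem_range.mpr ?_⟩
          rw [Nat.div_lt_iff_lt_mul hp0]
          exact hk
        · intro x hx
          rw [Finset.mem_product, Finset.mem_range, Finset.mem_range] at hx
          rw [Finset.mem_range]
          have : x.1 + x.2 * p ≤ (p - 1) + n * p := by
            have := Nat.mul_le_mul_right p (Nat.lt_succ_iff.mp hx.2)
            omega
          have hp1 : (n + 1) * p = n * p + p := by ring
          omega
        · intro k _
          simp [Nat.mod_add_div']
        · intro x hx
          rw [Finset.mem_product, Finset.mem_range, Finset.mem_range] at hx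
          ext
          · simp [Nat.add_mul_mod_self_right, Nat.mod_eq_of_lt hx.1]
          · simp [Nat.add_mul_div_right _ _ hp0, Nat.div_eq_of_lt hx.1]
        · intro k _
          rw [Nat.mod_add_div']
    _ = ∑ x ∈ Finset.range p ×ˢ Finset.range (n + 1), g x.1 * h x.2 := by
        refine Finset.sum_congr rfl fun x hx => ?_
        rw [Finset.mem_product] at hx
        exact key x.1 hx.1 x.2 hx.2
    _ = (∑ a ∈ Finset.range p, g a) * (∑ b ∈ Finset.range (n + 1), h b) := by
        rw [Finset.sum_product, Finset.sum_mul]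
        exact Finset.sum_congr rfl fun a _ => by rw [Finset.mul_sum]
    _ = (∑ a ∈ Finset.range (v + 1), g a) * (∑ b ∈ Finset.range (n + 1), h b) := by
        congr 1
        symm
        apply Finset.sum_subset (Finset.range_subset_range.mpr (by omega))
        intro a _ ha
        rw [Finset.mem_range, not_lt] at ha
        simp only [hg, Nat.choose_eq_zero_of_lt (by omega : v < a)]
        simp
end

section
/- For every prime p, the Franel numbers F(n) = \sum_{k=0}^n \binom{n}{k}^3 satisfy the p-Lucas property: for all v ∈ {0,...,p-1} and n ∈ ℕ, F(v + n p) ≡ F(v) F(n) (mod p). -/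
def franel (n : ℕ) : ℤ := ∑ k ∈ Finset.range (n + 1), (n.choose k : ℤ) ^ 3

theorem franel_lucas (p : ℕ) (hp : p.Prime) (v n : ℕ) (hv : v < p) :
    franel (v + n * p) ≡ franel v * franel n [ZMOD p] := by
  haveI : Fact p.Prime := ⟨hp⟩
  have hp0 : 0 < p := hp.pos
  rw [← ZMod.intCast_eq_intCast_iff]
  unfold franel
  push_cast
  set g : ℕ → ZMod p := fun a => (v.choose a : ZMod p) ^ 3 with hg
  set h : ℕ → ZMod p := fun b => (n.choose b : ZMod p) ^ 3 with hh
  -- Lucas: each term factors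
  have hm : ∀ k : ℕ, ((v + n * p).choose k : ZMod p) ^ 3 = g (k % p) * h (k / p) := by
    intro k
    have hc := Choose.choose_modEq_choose_mod_mul_choose_div (n := v + n * p) (k := k) (p := p)
    rw [← ZMod.intCast_eq_intCast_iff] at hc
    push_cast at hc
    rw [Nat.add_mul_mod_self_right, Nat.mod_eq_of_lt hv,
      Nat.add_mul_div_right _ _ hp0, Nat.div_eq_of_lt hv, zero_add] at hc
    rw [hc, hg, hh, mul_pow]
  rw [Finset.sum_congr rfl fun k _ => hm k]
  -- extend range to (n+1)*p
  have hle : v + n * p + 1 ≤ (n + 1) * p := by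
    have : v + 1 ≤ p := hv
    calc v + n * p + 1 = n * p + (v + 1) := by ring
    _ ≤ n * p + p := by omega
    _ = (n + 1) * p := by ring
  have hext : ∑ k ∈ Finset.range (v + n * p + 1), g (k % p) * h (k / p)
      = ∑ k ∈ Finset.range ((n + 1) * p), g (k % p) * h (k / p) := by
    apply Finset.sum_subset (Finset.range_subset_range.mpr hle)
    intro k hk hk'
    simp only [Finset.mem_range] at hk hk'
    have h1 : n * p ≤ k := by omega
    have h2 : k < (n + 1) * p := hk
    have hmod : v < k % p := by
      have := Nat.mod_add_div k p
      have hdiv : k / p = n := by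
        apply Nat.div_eq_of_lt_le
        · simpa [mul_comm] using h1
        · simpa [mul_comm] using h2
      rw [hdiv] at this
      have hmul : p * n = n * p := mul_comm p n
      omega
    have : v.choose (k % p) = 0 := Nat.choose_eq_zero_of_lt hmod
    simp [hg, this]
  rw [hext]
  -- split the sum over base-p digits
  have key : ∀ m : ℕ, ∑ k ∈ Finset.range (m * p), g (k % p) * h (k / p)
      = (∑ a ∈ Finset.range p, g a) * (∑ b ∈ Finset.range m, h b) := by
    intro m
    induction m with
    | zero => simp
    | succ m ih =>
      have : (m + 1) * p = m * p + p := by ring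
      rw [this, Finset.sum_range_add, ih]
      have : ∀ i ∈ Finset.range p, g ((m * p + i) % p) * h ((m * p + i) / p) = g i * h m := by
        intro i hi
        simp only [Finset.mem_range] at hi
        rw [mul_comm m p, Nat.mul_add_mod, Nat.mod_eq_of_lt hi,
          Nat.mul_add_div hp0, Nat.div_eq_of_lt hi, add_zero]
      rw [Finset.sum_congr rfl this, ← Finset.sum_mul, Finset.sum_range_succ, mul_add]
  rw [key]
  -- shrink ∑_{a<p} g a to ∑_{a<v+1} g a
  have hsh : ∑ a ∈ Finset.range p, g a = ∑ a ∈ Finset.range (v + 1), g a := by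
    symm
    apply Finset.sum_subset (Finset.range_subset_range.mpr (by omega))
    intro a _ ha'
    simp only [Finset.mem_range] at ha'
    simp [hg, Nat.choose_eq_zero_of_lt (by omega : v < a)]
  rw [hsh]
end

section
/- For every prime p, the sequence A5(n) = \sum_{k=0}^n \binom{n}{k}^4 satisfies A5(p-1) ≡ 0 (mod p). -/
lemma choose_sub_one_cast (p : ℕ) (hp : p.Prime) (k : ℕ) (hk : k ≤ p - 1) :
    (((p - 1).choose k : ℕ) : ZMod p) = (-1) ^ k := by
  induction k with
  | zero => simp
  | succ n ih =>
    have hn : n ≤ p - 1 := Nat.le_of_succ_le hk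
    have hpos : 0 < p := hp.pos
    have hpascal : (p - 1).choose n + (p - 1).choose (n + 1) = p.choose (n + 1) := by
      have h1 : p = (p - 1) + 1 := (Nat.succ_pred_eq_of_pos hpos).symm
      conv_rhs => rw [h1, Nat.choose_succ_succ]
    have hdvd : p ∣ p.choose (n + 1) := hp.dvd_choose_self (Nat.succ_ne_zero n)
      (by omega)
    have h0 : ((p.choose (n + 1) : ℕ) : ZMod p) = 0 :=
      (ZMod.natCast_eq_zero_iff _ _).mpr hdvd
    have := congrArg (fun m : ℕ => (m : ZMod p)) hpascal
    simp only [Nat.cast_add] at this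
    rw [h0, ih hn] at this
    have : (((p - 1).choose (n + 1) : ℕ) : ZMod p) = -(-1) ^ n := by linear_combination this
    rw [this, pow_succ]
    ring

theorem calkin (p : ℕ) (hp : p.Prime) :
    (p : ℤ) ∣ ∑ k ∈ Finset.range p, ((p - 1).choose k : ℤ) ^ 4 := by
  have : ((∑ k ∈ Finset.range p, ((p - 1).choose k : ℤ) ^ 4 : ℤ) : ZMod p) = 0 := by
    push_cast
    have : ∀ k ∈ Finset.range p, (((p - 1).choose k : ℕ) : ZMod p) ^ 4 = 1 := by
      intro k hk
      rw [choose_sub_one_cast p hp k (by have := Finset.mem_range.mp hk; omega)]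
      rw [← pow_mul, mul_comm, pow_mul]
      norm_num
    rw [Finset.sum_congr rfl this]
    simp
  exact (ZMod.intCast_zmod_eq_zero_iff_dvd _ _).mp this
end

section
/- Let p be a prime, d ≥ 1, and let e = (e_1,...,e_u), f = (f_1,...,f_v) be tuples of vectors in ℕ^d with \sum e_i = \sum f_i. Then for all a ∈ {0,...,p-1}^d and all n ∈ ℕ^d, the ratio Q(a + n p) / (Q(a) Q(n)), where Q(m) = \prod_i (e_i · m)! / \prod_i (f_i · m)!, is congruent modulo p (as p-adic numbers) to \prod_{i=1}^u \prod_{j=1}^{⌊e_i·a/p⌋} (1 + (e_i·n)/j) / \prod_{i=1}^v \prod_{j=1}^{⌊f_i·a/p⌋} (1 + (f_i·n)/j), i.e. their quotient lies in 1 + p ℤ_p. -/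
open Finset

/-- The factorial ratio `Q_{e,f}(m) = ∏ (e_i·m)! / ∏ (f_i·m)!` as a rational number. -/
def Qef {d u v : ℕ} (e : Fin u → Fin d → ℕ) (f : Fin v → Fin d → ℕ)
    (m : Fin d → ℕ) : ℚ :=
  (∏ i, ((∑ j, e i j * m j).factorial : ℚ)) / ∏ i, ((∑ j, f i j * m j).factorial : ℚ)


lemma fact_add_prod (x k : ℕ) : (x + k).factorial = x.factorial * ∏ t ∈ Icc 1 k, (x + t) := by
  induction k with
  | zero => simp
  | succ k ih =>
    rw [← add_assoc, Nat.factorial_succ, ih, Finset.prod_Icc_succ_top (Nat.le_add_left 1 k)]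
    ring

lemma fact_ratio_prod (q N : ℕ) :
    (((q + N).factorial : ℚ)) = q.factorial * N.factorial * ∏ j ∈ Icc 1 q, (1 + (N : ℚ) / j) := by
  induction q with
  | zero => simp
  | succ q ih =>
    rw [Finset.prod_Icc_succ_top (Nat.le_add_left 1 q)]
    have h1 : (q + 1 + N).factorial = (q + N).factorial * (q + N + 1) := by
      rw [show q + 1 + N = (q + N) + 1 by ring, Nat.factorial_succ]; ring
    have hq1 : ((q:ℚ) + 1) ≠ 0 := by positivity
    push_cast [h1, ih, Nat.factorial_succ]
    field_simp
    ring


lemma prod_erase_zero (p : ℕ) [hp : Fact p.Prime] :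
    ∏ y ∈ Finset.univ.erase (0 : ZMod p), y = -1 := by
  haveI := Fact.out (p := p.Prime)
  rw [← ZMod.wilsons_lemma p, ← Finset.prod_range_add_one_eq_factorial]
  push_cast
  refine (Finset.prod_nbij' (fun x : ℕ => ((x : ZMod p) + 1)) (fun y => y.val - 1) ?_ ?_ ?_ ?_ ?_).symm
  · intro x hx
    simp only [Finset.mem_range] at hx
    simp only [Finset.mem_erase, Finset.mem_univ, and_true]
    have : ((x : ZMod p) + 1) = ((x+1 : ℕ) : ZMod p) := by push_cast; ring
    rw [this, Ne, ZMod.natCast_eq_zero_iff]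
    intro hdvd
    have := Nat.le_of_dvd (Nat.succ_pos x) hdvd
    omega
  · intro y hy
    simp only [Finset.mem_erase, Finset.mem_univ, and_true] at hy
    simp only [Finset.mem_range]
    have h1 : y.val ≠ 0 := fun h => hy (by rwa [← ZMod.val_eq_zero])
    have h2 : y.val < p := ZMod.val_lt y
    omega
  · intro x hx
    simp only [Finset.mem_range] at hx
    show ((x : ZMod p) + 1).val - 1 = x
    have : ((x : ZMod p) + 1) = ((x+1 : ℕ) : ZMod p) := by push_cast; ring
    rw [this, ZMod.val_cast_of_lt (by omega)]
    omega
  · intro y hy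
    simp only [Finset.mem_erase, Finset.mem_univ, and_true] at hy
    have h1 : y.val ≠ 0 := fun h => hy (by rwa [← ZMod.val_eq_zero])
    show ((y.val - 1 : ℕ) : ZMod p) + 1 = y
    have : ((y.val - 1 : ℕ) : ZMod p) + 1 = ((y.val - 1 + 1 : ℕ) : ZMod p) := by push_cast; ring
    rw [this, Nat.sub_add_cancel (Nat.one_le_iff_ne_zero.mpr h1)]
    simp [ZMod.natCast_val, ZMod.cast_id]
  · intro x hx; ring

lemma eq_of_dvd_lt_two (p x : ℕ) (h1 : 0 < x) (h2 : x < 2 * p) (hd : p ∣ x) : x = p := by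
  have hle := Nat.le_of_dvd h1 hd
  have hd2 : p ∣ x - p := Nat.dvd_sub hd dvd_rfl
  have := Nat.eq_zero_of_dvd_of_lt hd2 (by omega)
  omega

lemma block_prod (p : ℕ) [hp : Fact p.Prime] (r M : ℕ) (hr : r < p) :
    ∃ w : ℕ, ∏ t ∈ Icc 1 p, (r + M * p + t) = (M + 1) * p * w ∧ (w : ZMod p) = -1 := by
  haveI hpp := Fact.out (p := p.Prime)
  have hp1 : 1 ≤ p := hpp.one_lt.le
  refine ⟨∏ t ∈ (Icc 1 p).erase (p - r), (r + M * p + t), ?_, ?_⟩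
  · have hmem : p - r ∈ Icc 1 p := by simp only [Finset.mem_Icc]; omega
    rw [← Finset.mul_prod_erase _ _ hmem]
    have h0 : r + (p - r) = p := by omega
    have : r + M * p + (p - r) = (M + 1) * p := by
      calc r + M * p + (p - r) = M * p + (r + (p - r)) := by ring
        _ = (M + 1) * p := by rw [h0]; ring
    rw [this]
  · push_cast
    have key : ∀ t ∈ (Icc 1 p).erase (p - r),
        ((r : ZMod p) + (M : ZMod p) * p + t) = ((r : ZMod p) + t) := by
      intro t ht; simp [ZMod.natCast_self]
    rw [Finset.prod_congr rfl key, ← prod_erase_zero p]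
    refine Finset.prod_nbij' (fun t : ℕ => ((r : ZMod p) + (t : ZMod p)))
      (fun y => if y = (r : ZMod p) then p else (y - (r : ZMod p)).val) ?_ ?_ ?_ ?_ ?_
    · intro t ht
      simp only [Finset.mem_erase, Finset.mem_Icc] at ht
      simp only [Finset.mem_erase, Finset.mem_univ, and_true]
      have hcast : (r : ZMod p) + (t : ZMod p) = ((r + t : ℕ) : ZMod p) := by push_cast; ring
      rw [hcast, Ne, ZMod.natCast_eq_zero_iff]
      intro hdvd
      have := eq_of_dvd_lt_two p (r + t) (by omega) (by omega) hdvd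
      omega
    · intro y hy
      simp only [Finset.mem_erase, Finset.mem_univ, and_true] at hy
      simp only [Finset.mem_erase, Finset.mem_Icc]
      by_cases hyr : y = (r : ZMod p)
      · rw [if_pos hyr]
        have hr0 : r ≠ 0 := by rintro rfl; exact hy (by simpa using hyr)
        exact ⟨by omega, by omega, by omega⟩
      · rw [if_neg hyr]
        have hval : (y - (r : ZMod p)).val < p := ZMod.val_lt _
        have hne0 : (y - (r : ZMod p)).val ≠ 0 := by
          rw [Ne, ZMod.val_eq_zero, sub_eq_zero]; exact hyr
        refine ⟨?_, by omega, by omega⟩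
        intro hteq
        apply hy
        have h1 : y - (r : ZMod p) = ((p - r : ℕ) : ZMod p) := by
          rw [← hteq]; simp [ZMod.natCast_val, ZMod.cast_id]
        have h2 : y = ((r + (p - r) : ℕ) : ZMod p) := by push_cast at h1 ⊢; rw [← h1]; ring
        rw [show r + (p - r) = p by omega] at h2
        simpa using h2
    · intro t ht
      simp only [Finset.mem_erase, Finset.mem_Icc] at ht
      show (if (r : ZMod p) + t = (r : ZMod p) then p else ((r : ZMod p) + t - r).val) = t
      by_cases htp : (t : ZMod p) = 0
      · have hdvd : p ∣ t := (ZMod.natCast_eq_zero_iff t p).mp htp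
        have ht2 : t = p := eq_of_dvd_lt_two p t (by omega) (by omega) hdvd
        rw [if_pos (by simp [htp]), ht2]
      · rw [if_neg (by intro h; apply htp; have := sub_eq_zero.mpr h; simpa using this)]
        have htlt : t < p := by
          rcases Nat.lt_or_ge t p with h | h
          · exact h
          · exfalso; apply htp
            have : t = p := by omega
            simp [this, ZMod.natCast_self]
        rw [add_sub_cancel_left, ZMod.val_cast_of_lt htlt]
    · intro y hy
      simp only [Finset.mem_erase, Finset.mem_univ, and_true] at hy
      show (r : ZMod p) + (((if y = (r : ZMod p) then p else (y - (r : ZMod p)).val) : ℕ) : ZMod p) = y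
      by_cases hyr : y = (r : ZMod p)
      · rw [if_pos hyr, hyr, ZMod.natCast_self, add_zero]
      · rw [if_neg hyr]
        simp [ZMod.natCast_val, ZMod.cast_id]
    · intro t ht; rfl

lemma fact_padic (p : ℕ) [hp : Fact p.Prime] (r M : ℕ) (hr : r < p) :
    ∃ w : ℕ, (r + M * p).factorial = p ^ M * M.factorial * w ∧
      (w : ZMod p) = (-1) ^ M * r.factorial := by
  induction M with
  | zero => exact ⟨r.factorial, by simp, by simp⟩
  | succ M ih =>
    obtain ⟨w, hw1, hw2⟩ := ih
    obtain ⟨w', hb1, hb2⟩ := block_prod p r M hr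
    refine ⟨w * w', ?_, ?_⟩
    · have : r + (M + 1) * p = (r + M * p) + p := by ring
      rw [this, fact_add_prod, hw1, hb1, Nat.factorial_succ]
      ring
    · push_cast [hw2, hb2]
      ring
lemma unit_ratio (p : ℕ) [hp : Fact p.Prime] (SN SD : ℕ)
    (hcong : (SN : ZMod p) = SD) (hSD : ¬ p ∣ SD) :
    ∃ z : ℤ_[p], ((SN / SD : ℚ) : ℚ_[p]) = 1 + p * z := by
  have hmod : SN ≡ SD [MOD p] := (ZMod.natCast_eq_natCast_iff _ _ _).mp hcong
  obtain ⟨k, hk⟩ : (p : ℤ) ∣ (SD : ℤ) - SN := hmod.dvd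
  have hunit : IsUnit (SD : ℤ_[p]) := by
    rw [PadicInt.isUnit_iff]
    refine le_antisymm (PadicInt.norm_le_one _) ?_
    by_contra hlt
    push_neg at hlt
    have h1 : ‖((SD : ℤ) : ℤ_[p])‖ < 1 := by push_cast; exact hlt
    rw [PadicInt.norm_int_lt_one_iff_dvd] at h1
    exact hSD (by exact_mod_cast h1)
  obtain ⟨U, hU⟩ := hunit
  refine ⟨(-k) * ↑U⁻¹, ?_⟩
  have hSDne : ((SD : ℕ) : ℚ_[p]) ≠ 0 := by
    have : SD ≠ 0 := by rintro rfl; exact hSD (dvd_zero p)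
    exact Nat.cast_ne_zero.mpr this
  have key : ((-k : ℤ_[p]) * ↑U⁻¹ * (SD : ℤ_[p])) = (-k : ℤ_[p]) := by
    rw [mul_assoc, ← hU, Units.inv_mul, mul_one]
  have h3 : (SD : ℤ_[p]) - (SN : ℤ_[p]) = p * k := by exact_mod_cast congrArg (Int.cast : ℤ → ℤ_[p]) hk
  have h2 : (SN : ℤ_[p]) = (SD : ℤ_[p]) + p * ((-k) * ↑U⁻¹ * SD) := by
    rw [key]; linear_combination -h3
  have h4 := congrArg (fun x : ℤ_[p] => (x : ℚ_[p])) h2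
  push_cast at h4 ⊢
  rw [div_eq_iff hSDne]
  push_cast
  linear_combination h4

lemma idx (p : ℕ) [hp : Fact p.Prime] (r q Nn W w : ℕ)
    (hW : (r + (q + Nn) * p).factorial = p ^ (q + Nn) * (q + Nn).factorial * W)
    (hw : (r + q * p).factorial = p ^ q * q.factorial * w) :
    ((r + (q + Nn) * p).factorial : ℚ) * w =
      (p : ℚ) ^ Nn * (∏ t ∈ Icc 1 q, (1 + (Nn : ℚ) / t)) * ((r + q * p).factorial : ℚ) *
        (Nn.factorial : ℚ) * W := by
  rw [hW, hw]
  push_cast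
  rw [fact_ratio_prod q Nn, pow_add]
  ring

lemma side (p : ℕ) [hp : Fact p.Prime] {d u : ℕ} (e : Fin u → Fin d → ℕ)
    (a n : Fin d → ℕ) (ha : ∀ j, a j < p) :
    ∃ W w : ℕ,
      (∏ i, ((∑ j, e i j * (a j + n j * p)).factorial : ℚ)) * (w : ℚ) =
          (p : ℚ) ^ (∑ i, ∑ j, e i j * n j) *
            (∏ i, ∏ t ∈ Icc 1 ((∑ j, e i j * a j) / p), (1 + ((∑ j, e i j * n j : ℕ) : ℚ) / t)) *
            (∏ i, ((∑ j, e i j * a j).factorial : ℚ)) *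
            (∏ i, ((∑ j, e i j * n j).factorial : ℚ)) * (W : ℚ) ∧
        (W : ZMod p) = (-1) ^ ((∑ i, (∑ j, e i j * a j) / p) + ∑ i, ∑ j, e i j * n j) *
            ∏ i, (((∑ j, e i j * a j) % p).factorial : ZMod p) ∧
        (w : ZMod p) = (-1) ^ (∑ i, (∑ j, e i j * a j) / p) *
            ∏ i, (((∑ j, e i j * a j) % p).factorial : ZMod p) ∧
        w ≠ 0 ∧ W ≠ 0 := by
  haveI hpp := Fact.out (p := p.Prime)
  have hp0 : 0 < p := hpp.pos
  set A : Fin u → ℕ := fun i => ∑ j, e i j * a j with hA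
  set N : Fin u → ℕ := fun i => ∑ j, e i j * n j with hN
  have hsum : ∀ i, (∑ j, e i j * (a j + n j * p)) = A i % p + (A i / p + N i) * p := by
    intro i
    have h1 : (∑ j, e i j * (a j + n j * p)) = A i + N i * p := by
      rw [hN]
      simp only []
      rw [Finset.sum_mul, ← Finset.sum_add_distrib]
      exact Finset.sum_congr rfl fun j _ => by ring
    rw [h1]
    conv_lhs => rw [← Nat.mod_add_div' (A i) p]
    ring
  have hr : ∀ i, A i % p < p := fun i => Nat.mod_lt _ hp0
  have hWex : ∀ i, ∃ W : ℕ, (A i % p + (A i / p + N i) * p).factorial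
      = p ^ (A i / p + N i) * (A i / p + N i).factorial * W ∧
      (W : ZMod p) = (-1) ^ (A i / p + N i) * (A i % p).factorial :=
    fun i => fact_padic p _ _ (hr i)
  have hwex : ∀ i, ∃ w : ℕ, (A i % p + (A i / p) * p).factorial
      = p ^ (A i / p) * (A i / p).factorial * w ∧
      (w : ZMod p) = (-1) ^ (A i / p) * (A i % p).factorial :=
    fun i => fact_padic p _ _ (hr i)
  choose W hW1 hW2 using hWex
  choose w hw1 hw2 using hwex
  have hAi : ∀ i, A i % p + (A i / p) * p = A i := fun i => Nat.mod_add_div' (A i) p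
  have hwne : ∀ i, w i ≠ 0 := by
    intro i h
    have := hw1 i
    rw [h, mul_zero] at this
    exact Nat.factorial_ne_zero _ this
  have hWne : ∀ i, W i ≠ 0 := by
    intro i h
    have := hW1 i
    rw [h, mul_zero] at this
    exact Nat.factorial_ne_zero _ this
  have hidx : ∀ i, ((∑ j, e i j * (a j + n j * p)).factorial : ℚ) * (w i : ℚ) =
      (p : ℚ) ^ (N i) * (∏ t ∈ Icc 1 (A i / p), (1 + (N i : ℚ) / t)) *
        ((A i).factorial : ℚ) * ((N i).factorial : ℚ) * (W i : ℚ) := by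
    intro i
    rw [hsum i]
    rw [show ((A i).factorial : ℚ) = ((A i % p + A i / p * p).factorial : ℚ) by rw [hAi i]]
    exact idx p _ _ _ _ _ (hW1 i) (hw1 i)
  simp only [hA, hN] at hidx hW2 hw2
  refine ⟨∏ i, W i, ∏ i, w i, ?_, ?_, ?_, ?_, ?_⟩
  · rw [Nat.cast_prod, Nat.cast_prod, ← Finset.prod_mul_distrib,
      Finset.prod_congr rfl (fun i _ => hidx i), Finset.prod_mul_distrib,
      Finset.prod_mul_distrib, Finset.prod_mul_distrib, Finset.prod_mul_distrib,
      Finset.prod_pow_eq_pow_sum]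
  · rw [Nat.cast_prod, Finset.prod_congr rfl (fun i _ => hW2 i), Finset.prod_mul_distrib,
      Finset.prod_pow_eq_pow_sum, ← Finset.sum_add_distrib]
  · rw [Nat.cast_prod, Finset.prod_congr rfl (fun i _ => hw2 i), Finset.prod_mul_distrib,
      Finset.prod_pow_eq_pow_sum]
  · exact Finset.prod_ne_zero_iff.mpr (fun i _ => hwne i)
  · exact Finset.prod_ne_zero_iff.mpr (fun i _ => hWne i)

theorem factorial_ratio_congruence (p : ℕ) [Fact p.Prime] (d u v : ℕ)
    (e : Fin u → Fin d → ℕ) (f : Fin v → Fin d → ℕ)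
    (hef : ∀ j, ∑ i, e i j = ∑ i, f i j)
    (a n : Fin d → ℕ) (ha : ∀ j, a j < p) :
    ∃ z : ℤ_[p],
      ((Qef e f (fun j => a j + n j * p) / (Qef e f a * Qef e f n) : ℚ) : ℚ_[p]) =
        (((∏ i, ∏ j ∈ Finset.Icc 1 ((∑ j, e i j * a j) / p),
              (1 + (∑ k, e i k * n k : ℚ) / j)) /
            ∏ i, ∏ j ∈ Finset.Icc 1 ((∑ j, f i j * a j) / p),
              (1 + (∑ k, f i k * n k : ℚ) / j) : ℚ) : ℚ_[p]) * (1 + p * z) := by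
  haveI hpp := Fact.out (p := p.Prime)
  obtain ⟨We, we, heqe, hWe, hwe, hwene, hWene⟩ := side p e a n ha
  obtain ⟨Wf, wf, heqf, hWf, hwf, hwfne, hWfne⟩ := side p f a n ha
  -- equality of weighted sums
  have hswap : ∀ {u : ℕ} (g : Fin u → Fin d → ℕ),
      (∑ i, ∑ j, g i j * n j) = ∑ j, (∑ i, g i j) * n j := by
    intro u g
    rw [Finset.sum_comm]
    exact Finset.sum_congr rfl fun j _ => (Finset.sum_mul _ _ _).symm
  have hNN : (∑ i, ∑ j, e i j * n j) = ∑ i, ∑ j, f i j * n j := by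
    rw [hswap e, hswap f]
    exact Finset.sum_congr rfl fun j _ => by rw [hef]
  rw [← hNN] at heqf
  -- congruence of the unit parts
  have hRene : (∏ i, (((∑ j, e i j * a j) % p).factorial : ZMod p)) ≠ 0 := by
    refine Finset.prod_ne_zero_iff.mpr fun i _ => ?_
    rw [Ne, ZMod.natCast_eq_zero_iff]
    intro hd
    have h1 := (Nat.Prime.dvd_factorial hpp).mp hd
    have h2 : (∑ j, e i j * a j) % p < p := Nat.mod_lt _ hpp.pos
    omega
  have hRfne : (∏ i, (((∑ j, f i j * a j) % p).factorial : ZMod p)) ≠ 0 := by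
    refine Finset.prod_ne_zero_iff.mpr fun i _ => ?_
    rw [Ne, ZMod.natCast_eq_zero_iff]
    intro hd
    have h1 := (Nat.Prime.dvd_factorial hpp).mp hd
    have h2 : (∑ j, f i j * a j) % p < p := Nat.mod_lt _ hpp.pos
    omega
  have hneg1 : (-1 : ZMod p) ≠ 0 := by
    haveI : Fact (1 < p) := ⟨hpp.one_lt⟩
    simpa using (neg_ne_zero.mpr (one_ne_zero : (1 : ZMod p) ≠ 0))
  have hcong : ((We * wf : ℕ) : ZMod p) = ((we * Wf : ℕ) : ZMod p) := by
    push_cast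
    rw [hWe, hwf, hwe, hWf, ← hNN]
    ring
  have hnotdvd : ¬ p ∣ we * Wf := by
    intro hdvd
    have h0 : ((we * Wf : ℕ) : ZMod p) = 0 := (ZMod.natCast_eq_zero_iff _ p).mpr hdvd
    push_cast at h0
    rw [hwe, hWf] at h0
    exact (mul_ne_zero (mul_ne_zero (pow_ne_zero _ hneg1) hRene)
      (mul_ne_zero (pow_ne_zero _ hneg1) hRfne)) h0
  obtain ⟨z, hz⟩ := unit_ratio p (We * wf) (we * Wf) hcong hnotdvd
  refine ⟨z, ?_⟩
  -- the rational identity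
  have hP : (∏ i, ∏ j ∈ Finset.Icc 1 ((∑ j, e i j * a j) / p),
        (1 + (∑ k, e i k * n k : ℚ) / j)) =
      ∏ i, ∏ t ∈ Icc 1 ((∑ j, e i j * a j) / p), (1 + ((∑ j, e i j * n j : ℕ) : ℚ) / t) := by
    push_cast
    rfl
  have hPf : (∏ i, ∏ j ∈ Finset.Icc 1 ((∑ j, f i j * a j) / p),
        (1 + (∑ k, f i k * n k : ℚ) / j)) =
      ∏ i, ∏ t ∈ Icc 1 ((∑ j, f i j * a j) / p), (1 + ((∑ j, f i j * n j : ℕ) : ℚ) / t) := by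
    push_cast
    rfl
  have hfact_ne : ∀ {u : ℕ} (g : Fin u → Fin d → ℕ) (m : Fin d → ℕ),
      (∏ i, ((∑ j, g i j * m j).factorial : ℚ)) ≠ 0 := by
    intro u g m
    exact Finset.prod_ne_zero_iff.mpr fun i _ =>
      Nat.cast_ne_zero.mpr (Nat.factorial_ne_zero _)
  have hPfne : (∏ i, ∏ t ∈ Icc 1 ((∑ j, f i j * a j) / p),
      (1 + ((∑ j, f i j * n j : ℕ) : ℚ) / t)) ≠ 0 := by
    refine Finset.prod_ne_zero_iff.mpr fun i _ => Finset.prod_ne_zero_iff.mpr fun t _ => ?_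
    positivity
  have hQQ : (Qef e f (fun j => a j + n j * p) / (Qef e f a * Qef e f n) : ℚ) =
      ((∏ i, ∏ j ∈ Finset.Icc 1 ((∑ j, e i j * a j) / p),
              (1 + (∑ k, e i k * n k : ℚ) / j)) /
            ∏ i, ∏ j ∈ Finset.Icc 1 ((∑ j, f i j * a j) / p),
              (1 + (∑ k, f i k * n k : ℚ) / j)) * ((We * wf : ℕ) / (we * Wf : ℕ) : ℚ) := by
    rw [hP, hPf]
    simp only [Qef]
    push_cast
    have hwene' : ((we : ℚ)) ≠ 0 := Nat.cast_ne_zero.mpr hwene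
    have hwfne' : ((wf : ℚ)) ≠ 0 := Nat.cast_ne_zero.mpr hwfne
    have hWfne' : ((Wf : ℚ)) ≠ 0 := Nat.cast_ne_zero.mpr hWfne
    have h1 := hfact_ne e (fun j => a j + n j * p)
    have h2 := hfact_ne f (fun j => a j + n j * p)
    have h3 := hfact_ne e a
    have h4 := hfact_ne f a
    have h5 := hfact_ne e n
    have h6 := hfact_ne f n
    push_cast at heqe heqf
    field_simp
    linear_combination ((∏ i, ((∑ j, f i j * a j).factorial : ℚ)) *
        (∏ i, ((∑ j, f i j * n j).factorial : ℚ)) *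
        (∏ i, ∏ t ∈ Icc 1 ((∑ j, f i j * a j) / p), (1 + (∑ k, (f i k : ℚ) * n k) / t)) *
        (Wf : ℚ)) * heqe -
      ((∏ i, ∏ t ∈ Icc 1 ((∑ j, e i j * a j) / p), (1 + (∑ k, (e i k : ℚ) * n k) / t)) *
        (We : ℚ) * (∏ i, ((∑ j, e i j * a j).factorial : ℚ)) *
        (∏ i, ((∑ j, e i j * n j).factorial : ℚ))) * heqf
  rw [hQQ]
  have : ((((∏ i, ∏ j ∈ Finset.Icc 1 ((∑ j, e i j * a j) / p),
              (1 + (∑ k, e i k * n k : ℚ) / j)) /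
            ∏ i, ∏ j ∈ Finset.Icc 1 ((∑ j, f i j * a j) / p),
              (1 + (∑ k, f i k * n k : ℚ) / j)) * ((We * wf : ℕ) / (we * Wf : ℕ) : ℚ) : ℚ) : ℚ_[p]) =
      (((∏ i, ∏ j ∈ Finset.Icc 1 ((∑ j, e i j * a j) / p),
              (1 + (∑ k, e i k * n k : ℚ) / j)) /
            ∏ i, ∏ j ∈ Finset.Icc 1 ((∑ j, f i j * a j) / p),
              (1 + (∑ k, f i k * n k : ℚ) / j) : ℚ) : ℚ_[p]) * (((We * wf : ℕ) / (we * Wf : ℕ) : ℚ) : ℚ_[p]) := by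
    push_cast
    ring
  rw [this, hz]
end

section
/- Let e, f be disjoint tuples of vectors in ℕ^d with |e| = |f| such that the Landau function Δ(x) = \sum_i ⌊e_i·x⌋ − \sum_i ⌊f_i·x⌋ satisfies Δ(x) ≥ 1 for all x ∈ [0,1)^d for which some component vector d of e or f has d·x ≥ 1. Then for every prime p, the family Q_{e,f}(n) = \prod_i (e_i·n)!/\prod_i (f_i·n)! is integer-valued and satisfies the p-Lucas property: Q(a + n p) ≡ Q(a) Q(n) (mod p) for all a ∈ {0,...,p-1}^d and n ∈ ℕ^d. -/
open Finset

/-- Landau's function `Δ_{e,f}(x) = ∑ ⌊e_i·x⌋ − ∑ ⌊f_i·x⌋`. -/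
noncomputable def Landau {d u v : ℕ} (e : Fin u → Fin d → ℕ) (f : Fin v → Fin d → ℕ)
    (x : Fin d → ℝ) : ℤ :=
  (∑ i, ⌊∑ j, (e i j : ℝ) * x j⌋) - ∑ i, ⌊∑ j, (f i j : ℝ) * x j⌋

/-! ### Auxiliary lemmas -/

lemma my_floor_div (N M : ℕ) (hM : 0 < M) : ⌊(N : ℝ) / M⌋ = ((N / M : ℕ) : ℤ) := by
  have hMR : (0 : ℝ) < M := by exact_mod_cast hM
  refine Int.floor_eq_iff.2 ⟨?_, ?_⟩
  · rw [le_div_iff₀ hMR]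
    exact_mod_cast Nat.div_mul_le_self N M
  · rw [div_lt_iff₀ hMR]
    have h : N < (N / M + 1) * M := by
      have h1 := Nat.div_add_mod N M
      have h2 := Nat.mod_lt N hM
      calc N = M * (N / M) + N % M := h1.symm
        _ < M * (N / M) + M := by omega
        _ = (N / M + 1) * M := by ring
    exact_mod_cast h

/-- The product of the nonzero elements of `ZMod p` is `-1`. -/
lemma my_prod_erase_zero (p : ℕ) [Fact p.Prime] :
    ∏ x ∈ Finset.univ.erase (0 : ZMod p), x = -1 := by
  have h : Finset.univ.erase (0 : ZMod p)
      = Finset.univ.image (Units.val : (ZMod p)ˣ → ZMod p) := by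
    ext x
    constructor
    · intro hx
      have hx0 : x ≠ 0 := (Finset.mem_erase.1 hx).1
      obtain ⟨u, hu⟩ := isUnit_iff_ne_zero.2 hx0
      exact Finset.mem_image.2 ⟨u, Finset.mem_univ u, hu⟩
    · intro hx
      obtain ⟨u, -, rfl⟩ := Finset.mem_image.1 hx
      exact Finset.mem_erase.2 ⟨u.ne_zero, Finset.mem_univ _⟩
  rw [h, Finset.prod_image (fun a _ b _ hab => Units.ext hab)]
  simp_rw [← Units.coeHom_apply]
  rw [← map_prod (Units.coeHom (ZMod p))]
  rw [FiniteField.prod_univ_units_id_eq_neg_one]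
  simp

lemma my_factorial_add_prod (a s : ℕ) :
    (a + s).factorial = a.factorial * ∏ j ∈ Finset.range s, (a + 1 + j) := by
  induction s with
  | zero => simp
  | succ s ih =>
    rw [Finset.prod_range_succ, ← Nat.add_assoc, Nat.factorial_succ, ih]
    ring

/-- Decomposition of `(p*q + r)!` extracting powers of `p`, with the unit part
congruent to `(-1)^q` modulo `p` (by Wilson's theorem). -/
lemma my_factorial_block (p : ℕ) (hp : p.Prime) (r : ℕ) (hr : r < p) (q : ℕ) :
    ∃ U : ℕ, (p * q + r).factorial = p ^ q * q.factorial * r.factorial * U ∧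
      (U : ZMod p) = (-1) ^ q := by
  haveI : Fact p.Prime := ⟨hp⟩
  induction q with
  | zero => exact ⟨1, by simp, by simp⟩
  | succ q ih =>
    obtain ⟨U, hU, hUmod⟩ := ih
    have hppos : 0 < p := hp.pos
    set j0 : ℕ := p - r - 1 with hj0
    have hj0mem : j0 ∈ Finset.range p := Finset.mem_range.2 (by omega)
    have hcast : ∀ j : ℕ, ((p * q + r + 1 + j : ℕ) : ZMod p) = ((r + 1 + j : ℕ) : ZMod p) := by
      intro j
      push_cast
      simp [ZMod.natCast_self]
    have hinj : ∀ x ∈ (Finset.range p).erase j0, ∀ y ∈ (Finset.range p).erase j0,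
        ((r + 1 + x : ℕ) : ZMod p) = ((r + 1 + y : ℕ) : ZMod p) → x = y := by
      intro x hx y hy hxy
      have hx' := Finset.mem_range.1 (Finset.mem_of_mem_erase hx)
      have hy' := Finset.mem_range.1 (Finset.mem_of_mem_erase hy)
      have hxy' : ((x : ℕ) : ZMod p) = ((y : ℕ) : ZMod p) := by
        push_cast at hxy ⊢
        linear_combination hxy
      have hval := congrArg ZMod.val hxy'
      rwa [ZMod.val_cast_of_lt hx', ZMod.val_cast_of_lt hy'] at hval
    have himg : ((Finset.range p).erase j0).image (fun j => ((r + 1 + j : ℕ) : ZMod p))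
        = Finset.univ.erase (0 : ZMod p) := by
      apply Finset.eq_of_subset_of_card_le
      · intro x hx
        simp only [Finset.mem_image] at hx
        obtain ⟨j, hj, rfl⟩ := hx
        have hj1 := Finset.mem_range.1 (Finset.mem_of_mem_erase hj)
        have hj2 := Finset.ne_of_mem_erase hj
        refine Finset.mem_erase.2 ⟨?_, Finset.mem_univ _⟩
        rw [Ne, ZMod.natCast_eq_zero_iff]
        intro hdvd
        rcases hdvd with ⟨c, hc⟩
        have hc0 : c ≠ 0 := by rintro rfl; omega
        have hc2 : c < 2 := by
          by_contra hcon
          push_neg at hcon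
          have h2p : p * 2 ≤ p * c := Nat.mul_le_mul_left p hcon
          omega
        have hc1 : c = 1 := by omega
        subst hc1
        omega
      · rw [Finset.card_image_of_injOn (fun x hx y hy => hinj x hx y hy),
          Finset.card_erase_of_mem hj0mem, Finset.card_erase_of_mem (Finset.mem_univ _),
          Finset.card_range, Finset.card_univ, ZMod.card]
    have hprod : ((∏ j ∈ (Finset.range p).erase j0, (p * q + r + 1 + j) : ℕ) : ZMod p) = -1 := by
      rw [Nat.cast_prod]
      rw [Finset.prod_congr rfl fun j _ => hcast j]
      rw [← my_prod_erase_zero p, ← himg, Finset.prod_image hinj]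
    refine ⟨U * ∏ j ∈ (Finset.range p).erase j0, (p * q + r + 1 + j), ?_, ?_⟩
    · have key : p * (q + 1) + r = (p * q + r) + p := by ring
      rw [key, my_factorial_add_prod, hU, ← Finset.mul_prod_erase _ _ hj0mem]
      have hterm : p * q + r + 1 + j0 = p * (q + 1) := by omega
      rw [hterm, Nat.factorial_succ]
      ring
    · rw [Nat.cast_mul, hUmod, hprod]
      ring

section Main

variable {d u v : ℕ} (e : Fin u → Fin d → ℕ) (f : Fin v → Fin d → ℕ)

/-- The key consequence of the strengthened Landau hypothesis, transferred to
natural-number division. -/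
lemma my_key_div
    (hΔ : ∀ x : Fin d → ℝ, (∀ j, 0 ≤ x j ∧ x j < 1) →
      ((∃ i, 1 ≤ ∑ j, (e i j : ℝ) * x j) ∨ (∃ i, 1 ≤ ∑ j, (f i j : ℝ) * x j)) →
      1 ≤ Landau e f x)
    (M : ℕ) (hM : 0 < M) (r : Fin d → ℕ) (hr : ∀ j, r j < M) :
    (∑ i, (∑ j, f i j * r j) / M) ≤ (∑ i, (∑ j, e i j * r j) / M) ∧
    (((∃ i, M ≤ ∑ j, e i j * r j) ∨ (∃ i, M ≤ ∑ j, f i j * r j)) →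
      (∑ i, (∑ j, f i j * r j) / M) + 1 ≤ ∑ i, (∑ j, e i j * r j) / M) := by
  have hMR : (0 : ℝ) < M := by exact_mod_cast hM
  set x : Fin d → ℝ := fun j => (r j : ℝ) / M with hx
  have hxmem : ∀ j, 0 ≤ x j ∧ x j < 1 := by
    intro j
    simp only [hx]
    constructor
    · positivity
    · rw [div_lt_one hMR]
      exact_mod_cast hr j
  have hsum : ∀ w : Fin d → ℕ, ∑ j, (w j : ℝ) * x j = ((∑ j, w j * r j : ℕ) : ℝ) / M := by
    intro w
    simp only [hx]
    push_cast
    rw [Finset.sum_div]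
    exact Finset.sum_congr rfl fun j _ => (mul_div_assoc _ _ _).symm
  have hfl : ∀ w : Fin d → ℕ, ⌊∑ j, (w j : ℝ) * x j⌋ = (((∑ j, w j * r j) / M : ℕ) : ℤ) := by
    intro w
    rw [hsum w, my_floor_div _ _ hM]
  have hone : ∀ w : Fin d → ℕ, (1 ≤ ∑ j, (w j : ℝ) * x j ↔ M ≤ ∑ j, w j * r j) := by
    intro w
    rw [hsum w, le_div_iff₀ hMR, one_mul]
    exact_mod_cast Iff.rfl
  have hLan : Landau e f x
      = ((∑ i, (∑ j, e i j * r j) / M : ℕ) : ℤ) - ((∑ i, (∑ j, f i j * r j) / M : ℕ) : ℤ) := by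
    unfold Landau
    rw [Finset.sum_congr rfl fun i _ => hfl (e i), Finset.sum_congr rfl fun i _ => hfl (f i)]
    push_cast
    ring
  by_cases hcond : (∃ i, M ≤ ∑ j, e i j * r j) ∨ (∃ i, M ≤ ∑ j, f i j * r j)
  · have hcond' : (∃ i, 1 ≤ ∑ j, (e i j : ℝ) * x j) ∨ (∃ i, 1 ≤ ∑ j, (f i j : ℝ) * x j) := by
      rcases hcond with ⟨i, hi⟩ | ⟨i, hi⟩
      · exact Or.inl ⟨i, (hone (e i)).2 hi⟩
      · exact Or.inr ⟨i, (hone (f i)).2 hi⟩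
    have h1 := hΔ x hxmem hcond'
    rw [hLan] at h1
    exact ⟨by omega, fun _ => by omega⟩
  · push_neg at hcond
    obtain ⟨hce, hcf⟩ := hcond
    have hzE : ∀ i, (∑ j, e i j * r j) / M = 0 := fun i => Nat.div_eq_of_lt (hce i)
    have hzF : ∀ i, (∑ j, f i j * r j) / M = 0 := fun i => Nat.div_eq_of_lt (hcf i)
    constructor
    · rw [Finset.sum_congr rfl fun i _ => hzE i, Finset.sum_congr rfl fun i _ => hzF i]
      simp
    · intro h
      rcases h with ⟨i, hi⟩ | ⟨i, hi⟩
      · exact absurd hi (Nat.not_le.2 (hce i))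
      · exact absurd hi (Nat.not_le.2 (hcf i))

/-- Swapping sums using `hef`. -/
lemma my_swap (hef : ∀ j, ∑ i, e i j = ∑ i, f i j) (w : Fin d → ℕ) :
    ∑ i, ∑ j, e i j * w j = ∑ i, ∑ j, f i j * w j := by
  have h1 : ∑ i, ∑ j, e i j * w j = ∑ j, ∑ i, e i j * w j := Finset.sum_comm
  have h2 : ∑ i, ∑ j, f i j * w j = ∑ j, ∑ i, f i j * w j := Finset.sum_comm
  rw [h1, h2]
  refine Finset.sum_congr rfl fun j _ => ?_
  rw [← Finset.sum_mul, ← Finset.sum_mul, hef j]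

/-- Non-strict inequality of quotient sums, for an arbitrary argument. -/
lemma my_sumdiv_le (hef : ∀ j, ∑ i, e i j = ∑ i, f i j)
    (hΔ : ∀ x : Fin d → ℝ, (∀ j, 0 ≤ x j ∧ x j < 1) →
      ((∃ i, 1 ≤ ∑ j, (e i j : ℝ) * x j) ∨ (∃ i, 1 ≤ ∑ j, (f i j : ℝ) * x j)) →
      1 ≤ Landau e f x)
    (M : ℕ) (hM : 0 < M) (n : Fin d → ℕ) :
    ∑ i, (∑ j, f i j * n j) / M ≤ ∑ i, (∑ j, e i j * n j) / M := by
  set q : Fin d → ℕ := fun j => n j / M with hq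
  set r : Fin d → ℕ := fun j => n j % M with hrdef
  have hr : ∀ j, r j < M := fun j => Nat.mod_lt _ hM
  have hsplit : ∀ w : Fin d → ℕ,
      (∑ j, w j * n j) / M = (∑ j, w j * q j) + (∑ j, w j * r j) / M := by
    intro w
    have hn : ∑ j, w j * n j = M * (∑ j, w j * q j) + ∑ j, w j * r j := by
      rw [Finset.mul_sum, ← Finset.sum_add_distrib]
      refine Finset.sum_congr rfl fun j _ => ?_
      have hmod : M * q j + r j = n j := Nat.div_add_mod (n j) M
      calc w j * n j = w j * (M * q j + r j) := by rw [hmod]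
        _ = M * (w j * q j) + w j * r j := by ring
    rw [hn, Nat.mul_add_div hM]
  rw [Finset.sum_congr rfl fun i _ => hsplit (e i),
    Finset.sum_congr rfl fun i _ => hsplit (f i),
    Finset.sum_add_distrib, Finset.sum_add_distrib]
  have hqeq := my_swap e f hef q
  have hle := (my_key_div e f hΔ M hM r hr).1
  omega

/-- Legendre's formula for the `p`-adic valuation of a product of factorials. -/
lemma my_fact_prod_factorization (p : ℕ) (hp : p.Prime) {w : ℕ} (N : Fin w → ℕ) (b : ℕ)
    (hb : ∀ i, Nat.log p (N i) < b) :
    (∏ i, (N i).factorial).factorization p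
      = ∑ i, ∑ k ∈ Finset.Ico 1 b, N i / p ^ k := by
  rw [Nat.factorization_prod (fun i _ => Nat.factorial_ne_zero _)]
  rw [Finsupp.finset_sum_apply]
  refine Finset.sum_congr rfl fun i _ => ?_
  have h1 := hp.emultiplicity_factorial (hb i)
  have h3 := multiplicity_eq_of_emultiplicity_eq_some h1
  have h2 := Nat.multiplicity_eq_factorization hp (Nat.factorial_ne_zero (N i))
  rw [← h2]
  exact h3

/-- Integrality: the denominator product divides the numerator product. -/
lemma my_dvd (hef : ∀ j, ∑ i, e i j = ∑ i, f i j)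
    (hΔ : ∀ x : Fin d → ℝ, (∀ j, 0 ≤ x j ∧ x j < 1) →
      ((∃ i, 1 ≤ ∑ j, (e i j : ℝ) * x j) ∨ (∃ i, 1 ≤ ∑ j, (f i j : ℝ) * x j)) →
      1 ≤ Landau e f x)
    (n : Fin d → ℕ) :
    (∏ i, (∑ j, f i j * n j).factorial) ∣ ∏ i, (∑ j, e i j * n j).factorial := by
  have hD : (∏ i, (∑ j, f i j * n j).factorial) ≠ 0 :=
    Finset.prod_ne_zero_iff.2 fun i _ => Nat.factorial_ne_zero _
  have hN : (∏ i, (∑ j, e i j * n j).factorial) ≠ 0 :=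
    Finset.prod_ne_zero_iff.2 fun i _ => Nat.factorial_ne_zero _
  rw [← Nat.factorization_le_iff_dvd hD hN, Finsupp.le_def]
  intro p
  by_cases hp : p.Prime
  · set b : ℕ := (∑ i, ∑ j, e i j * n j) + (∑ i, ∑ j, f i j * n j) + 1 with hbdef
    have hbE : ∀ i, Nat.log p (∑ j, e i j * n j) < b := by
      intro i
      have h1 : Nat.log p (∑ j, e i j * n j) ≤ ∑ j, e i j * n j := Nat.log_le_self _ _
      have h2 : (∑ j, e i j * n j) ≤ ∑ i, ∑ j, e i j * n j :=
        Finset.single_le_sum (f := fun i => ∑ j, e i j * n j)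
          (fun i _ => Nat.zero_le _) (Finset.mem_univ i)
      omega
    have hbF : ∀ i, Nat.log p (∑ j, f i j * n j) < b := by
      intro i
      have h1 : Nat.log p (∑ j, f i j * n j) ≤ ∑ j, f i j * n j := Nat.log_le_self _ _
      have h2 : (∑ j, f i j * n j) ≤ ∑ i, ∑ j, f i j * n j :=
        Finset.single_le_sum (f := fun i => ∑ j, f i j * n j)
          (fun i _ => Nat.zero_le _) (Finset.mem_univ i)
      omega
    rw [my_fact_prod_factorization p hp _ b hbE, my_fact_prod_factorization p hp _ b hbF]
    have hc1 : ∑ i, ∑ k ∈ Finset.Ico 1 b, (∑ j, e i j * n j) / p ^ k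
        = ∑ k ∈ Finset.Ico 1 b, ∑ i, (∑ j, e i j * n j) / p ^ k := Finset.sum_comm
    have hc2 : ∑ i, ∑ k ∈ Finset.Ico 1 b, (∑ j, f i j * n j) / p ^ k
        = ∑ k ∈ Finset.Ico 1 b, ∑ i, (∑ j, f i j * n j) / p ^ k := Finset.sum_comm
    rw [hc1, hc2]
    exact Finset.sum_le_sum fun k _ => my_sumdiv_le e f hef hΔ (p ^ k) (pow_pos hp.pos k) n
  · simp [Nat.factorization_eq_zero_of_not_prime _ hp]

/-- Strict divisibility: one extra power of `p` divides the ratio. -/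
lemma my_dvd_strict (hef : ∀ j, ∑ i, e i j = ∑ i, f i j)
    (hΔ : ∀ x : Fin d → ℝ, (∀ j, 0 ≤ x j ∧ x j < 1) →
      ((∃ i, 1 ≤ ∑ j, (e i j : ℝ) * x j) ∨ (∃ i, 1 ≤ ∑ j, (f i j : ℝ) * x j)) →
      1 ≤ Landau e f x)
    (p : ℕ) (hp : p.Prime) (m : Fin d → ℕ)
    (hstrict : (∑ i, (∑ j, f i j * m j) / p) + 1 ≤ ∑ i, (∑ j, e i j * m j) / p) :
    (p * ∏ i, (∑ j, f i j * m j).factorial) ∣ ∏ i, (∑ j, e i j * m j).factorial := by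
  have hD : (∏ i, (∑ j, f i j * m j).factorial) ≠ 0 :=
    Finset.prod_ne_zero_iff.2 fun i _ => Nat.factorial_ne_zero _
  have hN : (∏ i, (∑ j, e i j * m j).factorial) ≠ 0 :=
    Finset.prod_ne_zero_iff.2 fun i _ => Nat.factorial_ne_zero _
  rw [← Nat.factorization_le_iff_dvd (Nat.mul_ne_zero hp.ne_zero hD) hN, Finsupp.le_def]
  intro q
  rw [Nat.factorization_mul hp.ne_zero hD, Finsupp.add_apply]
  by_cases hq : q.Prime
  · set b : ℕ := (∑ i, ∑ j, e i j * m j) + (∑ i, ∑ j, f i j * m j) + 2 with hbdef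
    have hbE : ∀ i, Nat.log q (∑ j, e i j * m j) < b := by
      intro i
      have h1 : Nat.log q (∑ j, e i j * m j) ≤ ∑ j, e i j * m j := Nat.log_le_self _ _
      have h2 : (∑ j, e i j * m j) ≤ ∑ i, ∑ j, e i j * m j :=
        Finset.single_le_sum (f := fun i => ∑ j, e i j * m j)
          (fun i _ => Nat.zero_le _) (Finset.mem_univ i)
      omega
    have hbF : ∀ i, Nat.log q (∑ j, f i j * m j) < b := by
      intro i
      have h1 : Nat.log q (∑ j, f i j * m j) ≤ ∑ j, f i j * m j := Nat.log_le_self _ _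
      have h2 : (∑ j, f i j * m j) ≤ ∑ i, ∑ j, f i j * m j :=
        Finset.single_le_sum (f := fun i => ∑ j, f i j * m j)
          (fun i _ => Nat.zero_le _) (Finset.mem_univ i)
      omega
    rw [my_fact_prod_factorization q hq _ b hbE, my_fact_prod_factorization q hq _ b hbF]
    have hc1 : ∑ i, ∑ k ∈ Finset.Ico 1 b, (∑ j, e i j * m j) / q ^ k
        = ∑ k ∈ Finset.Ico 1 b, ∑ i, (∑ j, e i j * m j) / q ^ k := Finset.sum_comm
    have hc2 : ∑ i, ∑ k ∈ Finset.Ico 1 b, (∑ j, f i j * m j) / q ^ k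
        = ∑ k ∈ Finset.Ico 1 b, ∑ i, (∑ j, f i j * m j) / q ^ k := Finset.sum_comm
    rw [hc1, hc2]
    have hb2 : 1 ∈ Finset.Ico 1 b := by rw [Finset.mem_Ico]; omega
    rw [← Finset.sum_erase_add _ _ hb2, ← Finset.sum_erase_add _ _ hb2]
    have hrest : ∑ k ∈ (Finset.Ico 1 b).erase 1, ∑ i, (∑ j, f i j * m j) / q ^ k
        ≤ ∑ k ∈ (Finset.Ico 1 b).erase 1, ∑ i, (∑ j, e i j * m j) / q ^ k :=
      Finset.sum_le_sum fun k _ => my_sumdiv_le e f hef hΔ (q ^ k) (pow_pos hq.pos k) m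
    by_cases hqp : q = p
    · subst hqp
      have hfq : (Nat.factorization q) q = 1 := by
        rw [hq.factorization, Finsupp.single_eq_same]
      rw [hfq]
      have h1 : ∑ i, (∑ j, f i j * m j) / q ^ 1 + 1 ≤ ∑ i, (∑ j, e i j * m j) / q ^ 1 := by
        simpa [pow_one] using hstrict
      omega
    · have hfq : (Nat.factorization p) q = 0 := by
        rw [hp.factorization, Finsupp.single_eq_of_ne' (fun h => hqp h.symm)]
      rw [hfq]
      have h1 : ∑ i, (∑ j, f i j * m j) / q ^ 1 ≤ ∑ i, (∑ j, e i j * m j) / q ^ 1 :=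
        my_sumdiv_le e f hef hΔ (q ^ 1) (pow_pos hq.pos 1) m
      omega
  · simp [Nat.factorization_eq_zero_of_not_prime _ hq]

/-- `Qef` equals the natural-number quotient. -/
lemma my_Qef_eq (n : Fin d → ℕ)
    (hdvd : (∏ i, (∑ j, f i j * n j).factorial) ∣ ∏ i, (∑ j, e i j * n j).factorial) :
    Qef e f n
      = (((∏ i, (∑ j, e i j * n j).factorial) / ∏ i, (∑ j, f i j * n j).factorial : ℕ) : ℚ) := by
  have hD : ((∏ i, (∑ j, f i j * n j).factorial : ℕ) : ℚ) ≠ 0 :=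
    Nat.cast_ne_zero.2 (Finset.prod_ne_zero_iff.2 fun i _ => Nat.factorial_ne_zero _)
  unfold Qef
  rw [Nat.cast_div hdvd hD, Nat.cast_prod, Nat.cast_prod]

end Main

theorem factorial_ratio_integral_and_lucas (d u v : ℕ)
    (e : Fin u → Fin d → ℕ) (f : Fin v → Fin d → ℕ)
    (hef : ∀ j, ∑ i, e i j = ∑ i, f i j)
    (hΔ : ∀ x : Fin d → ℝ, (∀ j, 0 ≤ x j ∧ x j < 1) →
      ((∃ i, 1 ≤ ∑ j, (e i j : ℝ) * x j) ∨ (∃ i, 1 ≤ ∑ j, (f i j : ℝ) * x j)) →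
      1 ≤ Landau e f x) :
    (∀ n : Fin d → ℕ, ∃ z : ℤ, Qef e f n = z) ∧
      (∀ p : ℕ, p.Prime → ∀ a n : Fin d → ℕ, (∀ j, a j < p) →
        ∃ z : ℤ, Qef e f (fun j => a j + n j * p) - Qef e f a * Qef e f n = p * z) := by
  constructor
  · intro n
    refine ⟨(((∏ i, (∑ j, e i j * n j).factorial) / ∏ i, (∑ j, f i j * n j).factorial : ℕ) : ℤ), ?_⟩
    rw [my_Qef_eq e f n (my_dvd e f hef hΔ n)]
    norm_cast
  · intro p hp a n ha
    haveI : Fact p.Prime := ⟨hp⟩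
    set m : Fin d → ℕ := fun j => a j + n j * p with hm
    have hdm := my_dvd e f hef hΔ m
    have hda := my_dvd e f hef hΔ a
    have hdn := my_dvd e f hef hΔ n
    set z1 : ℕ := (∏ i, (∑ j, e i j * m j).factorial) / ∏ i, (∑ j, f i j * m j).factorial with hz1
    set z2 : ℕ := (∏ i, (∑ j, e i j * a j).factorial) / ∏ i, (∑ j, f i j * a j).factorial with hz2
    set z3 : ℕ := (∏ i, (∑ j, e i j * n j).factorial) / ∏ i, (∑ j, f i j * n j).factorial with hz3
    have hQm := my_Qef_eq e f m hdm
    have hQa := my_Qef_eq e f a hda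
    have hQn := my_Qef_eq e f n hdn
    have hswapn := my_swap e f hef n
    have hmE : ∀ (g : Fin d → ℕ), ∑ j, g j * m j = p * (∑ j, g j * n j) + ∑ j, g j * a j := by
      intro g
      simp only [hm]
      calc ∑ j, g j * (a j + n j * p) = ∑ j, (p * (g j * n j) + g j * a j) :=
            Finset.sum_congr rfl fun j _ => by ring
        _ = (∑ j, p * (g j * n j)) + ∑ j, g j * a j := Finset.sum_add_distrib
        _ = p * (∑ j, g j * n j) + ∑ j, g j * a j := by rw [← Finset.mul_sum]
    by_cases hsmall : (∀ i, ∑ j, e i j * a j < p) ∧ (∀ i, ∑ j, f i j * a j < p)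
    · -- unit case: use the factorial block decomposition and Wilson's theorem
      obtain ⟨hsE, hsF⟩ := hsmall
      choose U hU1 hU2 using fun i => my_factorial_block p hp _ (hsE i) (∑ j, e i j * n j)
      choose V hV1 hV2 using fun i => my_factorial_block p hp _ (hsF i) (∑ j, f i j * n j)
      set E : ℕ := ∑ i, ∑ j, e i j * n j with hE
      have hNm : ∏ i, (∑ j, e i j * m j).factorial
          = p ^ E * (∏ i, (∑ j, e i j * n j).factorial)
            * (∏ i, (∑ j, e i j * a j).factorial) * ∏ i, U i := by
        calc ∏ i, (∑ j, e i j * m j).factorial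
            = ∏ i, (p ^ (∑ j, e i j * n j) * (∑ j, e i j * n j).factorial
                * (∑ j, e i j * a j).factorial * U i) := by
              refine Finset.prod_congr rfl fun i _ => ?_
              rw [hmE (e i), hU1 i]
          _ = p ^ E * (∏ i, (∑ j, e i j * n j).factorial)
              * (∏ i, (∑ j, e i j * a j).factorial) * ∏ i, U i := by
              rw [Finset.prod_mul_distrib, Finset.prod_mul_distrib, Finset.prod_mul_distrib,
                Finset.prod_pow_eq_pow_sum]
      have hDm : ∏ i, (∑ j, f i j * m j).factorial
          = p ^ E * (∏ i, (∑ j, f i j * n j).factorial)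
            * (∏ i, (∑ j, f i j * a j).factorial) * ∏ i, V i := by
        calc ∏ i, (∑ j, f i j * m j).factorial
            = ∏ i, (p ^ (∑ j, f i j * n j) * (∑ j, f i j * n j).factorial
                * (∑ j, f i j * a j).factorial * V i) := by
              refine Finset.prod_congr rfl fun i _ => ?_
              rw [hmE (f i), hV1 i]
          _ = p ^ (∑ i, ∑ j, f i j * n j) * (∏ i, (∑ j, f i j * n j).factorial)
              * (∏ i, (∑ j, f i j * a j).factorial) * ∏ i, V i := by
              rw [Finset.prod_mul_distrib, Finset.prod_mul_distrib, Finset.prod_mul_distrib,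
                Finset.prod_pow_eq_pow_sum]
          _ = p ^ E * (∏ i, (∑ j, f i j * n j).factorial)
              * (∏ i, (∑ j, f i j * a j).factorial) * ∏ i, V i := by
              rw [hswapn]
      have hUcast : ((∏ i, U i : ℕ) : ZMod p) = (-1) ^ E := by
        rw [Nat.cast_prod, Finset.prod_congr rfl fun i _ => hU2 i, Finset.prod_pow_eq_pow_sum]
      have hVcast : ((∏ i, V i : ℕ) : ZMod p) = (-1) ^ E := by
        rw [Nat.cast_prod, Finset.prod_congr rfl fun i _ => hV2 i, Finset.prod_pow_eq_pow_sum,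
          hswapn]
      have h1 : z1 * (∏ i, (∑ j, f i j * m j).factorial) = ∏ i, (∑ j, e i j * m j).factorial :=
        Nat.div_mul_cancel hdm
      have h2 : z2 * (∏ i, (∑ j, f i j * a j).factorial) = ∏ i, (∑ j, e i j * a j).factorial :=
        Nat.div_mul_cancel hda
      have h3 : z3 * (∏ i, (∑ j, f i j * n j).factorial) = ∏ i, (∑ j, e i j * n j).factorial :=
        Nat.div_mul_cancel hdn
      have hKpos : 0 < p ^ E * (∏ i, (∑ j, f i j * n j).factorial)
          * ∏ i, (∑ j, f i j * a j).factorial := by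
        have hp0 : 0 < p ^ E := pow_pos hp.pos E
        have hd1 : 0 < ∏ i, (∑ j, f i j * n j).factorial :=
          Finset.prod_pos fun i _ => Nat.factorial_pos _
        have hd2 : 0 < ∏ i, (∑ j, f i j * a j).factorial :=
          Finset.prod_pos fun i _ => Nat.factorial_pos _
        positivity
      have hbig : z1 * (∏ i, V i) * (p ^ E * (∏ i, (∑ j, f i j * n j).factorial)
          * ∏ i, (∑ j, f i j * a j).factorial)
          = z2 * z3 * (∏ i, U i) * (p ^ E * (∏ i, (∑ j, f i j * n j).factorial)
          * ∏ i, (∑ j, f i j * a j).factorial) := by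
        calc z1 * (∏ i, V i) * (p ^ E * (∏ i, (∑ j, f i j * n j).factorial)
              * ∏ i, (∑ j, f i j * a j).factorial)
            = z1 * (p ^ E * (∏ i, (∑ j, f i j * n j).factorial)
              * (∏ i, (∑ j, f i j * a j).factorial) * ∏ i, V i) := by ring
          _ = z1 * ∏ i, (∑ j, f i j * m j).factorial := by rw [← hDm]
          _ = ∏ i, (∑ j, e i j * m j).factorial := h1
          _ = p ^ E * (∏ i, (∑ j, e i j * n j).factorial)
              * (∏ i, (∑ j, e i j * a j).factorial) * ∏ i, U i := hNm
          _ = p ^ E * (z3 * ∏ i, (∑ j, f i j * n j).factorial)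
              * (z2 * ∏ i, (∑ j, f i j * a j).factorial) * ∏ i, U i := by rw [h3, h2]
          _ = z2 * z3 * (∏ i, U i) * (p ^ E * (∏ i, (∑ j, f i j * n j).factorial)
              * ∏ i, (∑ j, f i j * a j).factorial) := by ring
      have hcancel : z1 * ∏ i, V i = z2 * z3 * ∏ i, U i :=
        Nat.eq_of_mul_eq_mul_right hKpos hbig
      have hc : ((z1 : ℕ) : ZMod p) * ((∏ i, V i : ℕ) : ZMod p)
          = ((z2 : ℕ) : ZMod p) * ((z3 : ℕ) : ZMod p) * ((∏ i, U i : ℕ) : ZMod p) := by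
        have := congrArg (fun t : ℕ => (t : ZMod p)) hcancel
        push_cast at this
        exact_mod_cast this
      rw [hUcast, hVcast] at hc
      have hne : ((-1 : ZMod p)) ^ E ≠ 0 := pow_ne_zero _ (neg_ne_zero.2 one_ne_zero)
      have hz : ((z1 : ℕ) : ZMod p) = ((z2 : ℕ) : ZMod p) * ((z3 : ℕ) : ZMod p) :=
        mul_right_cancel₀ hne hc
      have hdvdZ : (p : ℤ) ∣ (z1 : ℤ) - (z2 : ℤ) * (z3 : ℤ) := by
        rw [← ZMod.intCast_zmod_eq_zero_iff_dvd]
        push_cast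
        rw [hz]
        ring
      obtain ⟨w, hw⟩ := hdvdZ
      refine ⟨w, ?_⟩
      rw [hQm, hQa, hQn, ← hz1, ← hz2, ← hz3]
      have hcast := congrArg (fun t : ℤ => (t : ℚ)) hw
      push_cast at hcast ⊢
      linarith
    · -- non-unit case: `p` divides both `Q(a+pn)` and `Q(a)`
      rw [not_and_or] at hsmall
      push_neg at hsmall
      have hstrict_a := (my_key_div e f hΔ p hp.pos a ha).2 hsmall
      have hdiv : ∀ (g : Fin d → ℕ), (∑ j, g j * m j) / p = (∑ j, g j * n j) + (∑ j, g j * a j) / p := by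
        intro g
        rw [hmE g, Nat.mul_add_div hp.pos]
      have hstrict_m : (∑ i, (∑ j, f i j * m j) / p) + 1 ≤ ∑ i, (∑ j, e i j * m j) / p := by
        rw [Finset.sum_congr rfl fun i (_ : i ∈ Finset.univ) => hdiv (e i),
          Finset.sum_congr rfl fun i (_ : i ∈ Finset.univ) => hdiv (f i),
          Finset.sum_add_distrib, Finset.sum_add_distrib]
        omega
      have hpm : p ∣ z1 := by
        rw [hz1, Nat.dvd_div_iff_mul_dvd hdm]
        have := my_dvd_strict e f hef hΔ p hp m hstrict_m
        rwa [Nat.mul_comm] at this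
      have hpa : p ∣ z2 := by
        rw [hz2, Nat.dvd_div_iff_mul_dvd hda]
        have := my_dvd_strict e f hef hΔ p hp a hstrict_a
        rwa [Nat.mul_comm] at this
      obtain ⟨w1, hw1⟩ := hpm
      obtain ⟨w2, hw2⟩ := hpa
      refine ⟨(w1 : ℤ) - (w2 : ℤ) * (z3 : ℤ), ?_⟩
      rw [hQm, hQa, hQn, ← hz1, ← hz2, ← hz3, hw1, hw2]
      push_cast
      ring
end

section
/- Let e, f be tuples of vectors in ℕ^d with |e| = |f| and with Δ_{e,f}(x) ≥ 1 for all x ∈ D_{e,f}. Then for every prime p and every n ∈ ℕ^d, the p-adic valuation of Q_{e,f}(n) is at least α_p(Q_{e,f}, n), the number of base-p digit vectors n_k of n (writing n = \sum_k n_k p^k with n_k ∈ {0,...,p-1}^d) such that n_k / p ∈ D_{e,f}. -/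
open Finset

lemma floor_nat_div_nat (a Q : ℕ) : ⌊(a : ℝ) / (Q : ℝ)⌋ = ((a / Q : ℕ) : ℤ) := by
  rw [← Int.natCast_floor_eq_floor (by positivity), Nat.floor_div_natCast, Nat.floor_natCast]

lemma key_ineq {d u v : ℕ} (e : Fin u → Fin d → ℕ) (f : Fin v → Fin d → ℕ)
    (hef : ∀ j, ∑ i, e i j = ∑ i, f i j)
    (hΔ : ∀ x : Fin d → ℝ, (∀ j, 0 ≤ x j ∧ x j < 1) →
      ((∃ i, 1 ≤ ∑ j, (e i j : ℝ) * x j) ∨ (∃ i, 1 ≤ ∑ j, (f i j : ℝ) * x j)) →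
      1 ≤ Landau e f x)
    (Q : ℕ) (hQ : 0 < Q) (n : Fin d → ℕ) :
    (∑ i, (∑ j, f i j * n j) / Q) +
      (if (∃ i, Q ≤ ∑ j, e i j * (n j % Q)) ∨ (∃ i, Q ≤ ∑ j, f i j * (n j % Q)) then 1 else 0)
      ≤ ∑ i, (∑ j, e i j * n j) / Q := by
  classical
  have hdecomp : ∀ (c : Fin d → ℕ),
      (∑ j, c j * n j) / Q = (∑ j, c j * (n j / Q)) + (∑ j, c j * (n j % Q)) / Q := by
    intro c
    have h1 : ∑ j, c j * n j = Q * (∑ j, c j * (n j / Q)) + ∑ j, c j * (n j % Q) := by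
      rw [Finset.mul_sum, ← Finset.sum_add_distrib]
      refine Finset.sum_congr rfl fun j _ => ?_
      conv_lhs => rw [← Nat.div_add_mod (n j) Q]
      ring
    rw [h1, Nat.mul_add_div hQ]
  have hswap : ∑ i, ∑ j, e i j * (n j / Q) = ∑ i, ∑ j, f i j * (n j / Q) := by
    have h1 : ∑ i, ∑ j, e i j * (n j / Q) = ∑ j, (∑ i, e i j) * (n j / Q) := by
      rw [Finset.sum_comm]
      exact Finset.sum_congr rfl fun j _ => (Finset.sum_mul _ _ _).symm
    have h2 : ∑ i, ∑ j, f i j * (n j / Q) = ∑ j, (∑ i, f i j) * (n j / Q) := by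
      rw [Finset.sum_comm]
      exact Finset.sum_congr rfl fun j _ => (Finset.sum_mul _ _ _).symm
    rw [h1, h2]
    exact Finset.sum_congr rfl fun j _ => by rw [hef]
  simp only [hdecomp, Finset.sum_add_distrib, hswap]
  rw [add_assoc]
  refine Nat.add_le_add_left ?_ _
  -- now work with r j = n j % Q
  set x : Fin d → ℝ := fun j => ((n j % Q : ℕ) : ℝ) / Q with hx
  have hx01 : ∀ j, 0 ≤ x j ∧ x j < 1 := by
    intro j
    constructor
    · positivity
    · rw [hx]
      simp only
      rw [div_lt_one (by exact_mod_cast hQ)]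
      exact_mod_cast Nat.mod_lt _ hQ
  have hxval : ∀ (c : Fin d → ℕ),
      ∑ j, (c j : ℝ) * x j = ((∑ j, c j * (n j % Q) : ℕ) : ℝ) / Q := by
    intro c
    rw [hx, Nat.cast_sum, Finset.sum_div]
    refine Finset.sum_congr rfl fun j _ => ?_
    simp only
    push_cast
    ring
  have hfloor : ∀ (c : Fin d → ℕ),
      ⌊∑ j, (c j : ℝ) * x j⌋ = (((∑ j, c j * (n j % Q)) / Q : ℕ) : ℤ) := by
    intro c
    rw [hxval, floor_nat_div_nat]
  have hLandau : Landau e f x =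
      ((∑ i, (∑ j, e i j * (n j % Q)) / Q : ℕ) : ℤ) -
      ((∑ i, (∑ j, f i j * (n j % Q)) / Q : ℕ) : ℤ) := by
    unfold Landau
    push_cast
    rw [Finset.sum_congr rfl fun i _ => hfloor (e i), Finset.sum_congr rfl fun i _ => hfloor (f i)]
    push_cast
    ring
  by_cases hC : (∃ i, Q ≤ ∑ j, e i j * (n j % Q)) ∨ (∃ i, Q ≤ ∑ j, f i j * (n j % Q))
  · rw [if_pos hC]
    have hD : (∃ i, 1 ≤ ∑ j, (e i j : ℝ) * x j) ∨ (∃ i, 1 ≤ ∑ j, (f i j : ℝ) * x j) := by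
      have hval : ∀ (c : Fin d → ℕ), Q ≤ ∑ j, c j * (n j % Q) →
          1 ≤ ∑ j, (c j : ℝ) * x j := by
        intro c hc
        rw [hxval, le_div_iff₀ (by exact_mod_cast hQ), one_mul]
        exact_mod_cast hc
      rcases hC with ⟨i, hi⟩ | ⟨i, hi⟩
      · exact Or.inl ⟨i, hval _ hi⟩
      · exact Or.inr ⟨i, hval _ hi⟩
    have h1 := hΔ x hx01 hD
    rw [hLandau] at h1
    have : ((∑ i, (∑ j, f i j * (n j % Q)) / Q : ℕ) : ℤ) + 1
        ≤ ((∑ i, (∑ j, e i j * (n j % Q)) / Q : ℕ) : ℤ) := by omega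
    exact_mod_cast this
  · rw [if_neg hC]
    push_neg at hC
    obtain ⟨he, hf⟩ := hC
    have h1 : ∀ i, (∑ j, f i j * (n j % Q)) / Q = 0 := fun i => Nat.div_eq_of_lt (hf i)
    have h2 : ∀ i, (∑ j, e i j * (n j % Q)) / Q = 0 := fun i => Nat.div_eq_of_lt (he i)
    simp [h1, h2]


lemma digit_sum_lt (p : ℕ) (a : ℕ → ℕ) (ha : ∀ m, a m < p) (t : ℕ) :
    ∑ m ∈ Finset.range t, a m * p ^ m < p ^ t := by
  induction t with
  | zero => simp
  | succ t ih =>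
    rw [Finset.sum_range_succ, pow_succ]
    have h1 : a t + 1 ≤ p := ha t
    calc ∑ m ∈ range t, a m * p ^ m + a t * p ^ t
        < p ^ t + a t * p ^ t := by omega
      _ = (1 + a t) * p ^ t := by ring
      _ ≤ p * p ^ t := Nat.mul_le_mul_right _ (by omega)
      _ = p ^ t * p := by ring

theorem factorial_ratio_digit_valuation (d u v : ℕ)
    (e : Fin u → Fin d → ℕ) (f : Fin v → Fin d → ℕ)
    (hef : ∀ j, ∑ i, e i j = ∑ i, f i j)
    (hΔ : ∀ x : Fin d → ℝ, (∀ j, 0 ≤ x j ∧ x j < 1) →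
      ((∃ i, 1 ≤ ∑ j, (e i j : ℝ) * x j) ∨ (∃ i, 1 ≤ ∑ j, (f i j : ℝ) * x j)) →
      1 ≤ Landau e f x)
    (p : ℕ) (hp : p.Prime) (n : Fin d → ℕ)
    (N : ℕ) (dig : ℕ → Fin d → ℕ) (hdig : ∀ k, ∀ j, dig k j < p)
    (hn : ∀ j, n j = ∑ k ∈ Finset.range (N + 1), dig k j * p ^ k) :
    ∃ z : ℤ, Qef e f n =
      (p : ℚ) ^ (((Finset.range (N + 1)).filter (fun k =>
          (∃ i, p ≤ ∑ j, e i j * dig k j) ∨ ∃ i, p ≤ ∑ j, f i j * dig k j)).card) * z := by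
  classical
  have hppos : 0 < p := hp.pos
  set α := (((Finset.range (N + 1)).filter (fun k =>
      (∃ i, p ≤ ∑ j, e i j * dig k j) ∨ ∃ i, p ≤ ∑ j, f i j * dig k j)).card) with hα
  set A := ∏ i, (∑ j, e i j * n j).factorial with hA
  set B := ∏ i, (∑ j, f i j * n j).factorial with hB
  have hAne : A ≠ 0 := Finset.prod_ne_zero_iff.mpr fun i _ => (Nat.factorial_pos _).ne'
  have hBne : B ≠ 0 := Finset.prod_ne_zero_iff.mpr fun i _ => (Nat.factorial_pos _).ne'
  -- digits determine residues
  have hmod : ∀ k, k ≤ N → ∀ j, n j % p ^ (k+1) = ∑ m ∈ Finset.range (k+1), dig m j * p ^ m := by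
    intro k hk j
    have hsplit : n j = (∑ m ∈ Finset.range (k+1), dig m j * p ^ m)
        + ∑ m ∈ Finset.Ico (k+1) (N+1), dig m j * p ^ m := by
      rw [hn j, Finset.range_eq_Ico,
        ← Finset.sum_Ico_consecutive _ (Nat.zero_le (k+1)) (show k+1 ≤ N+1 by omega), ← Finset.range_eq_Ico]
    have hdvd2 : p ^ (k+1) ∣ ∑ m ∈ Finset.Ico (k+1) (N+1), dig m j * p ^ m :=
      Finset.dvd_sum fun m hm => Dvd.dvd.mul_left (pow_dvd_pow p (Finset.mem_Ico.mp hm).1) _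
    obtain ⟨w, hw⟩ := hdvd2
    rw [hsplit, hw, Nat.add_mul_mod_self_left,
      Nat.mod_eq_of_lt (digit_sum_lt p _ (fun m => hdig m j) (k+1))]
  have hmodge : ∀ k, k ≤ N → ∀ j, dig k j * p ^ k ≤ n j % p ^ (k+1) := by
    intro k hk j
    rw [hmod k hk j]
    exact Finset.single_le_sum (f := fun m => dig m j * p ^ m)
      (fun _ _ => Nat.zero_le _) (Finset.self_mem_range_succ k)
  -- the divisibility
  have hdvd : B * p ^ α ∣ A := by
    rw [← Nat.factorization_le_iff_dvd (mul_ne_zero hBne (pow_ne_zero _ hppos.ne')) hAne]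
    intro q
    by_cases hq : q.Prime
    · haveI : Fact q.Prime := ⟨hq⟩
      set b := N + 2 + (∑ i, ∑ j, e i j * n j) + (∑ i, ∑ j, f i j * n j) with hb
      have hfactA : A.factorization q = ∑ ℓ ∈ Finset.Ico 1 b, ∑ i, (∑ j, e i j * n j) / q ^ ℓ := by
        rw [hA, Nat.factorization_prod (fun i _ => (Nat.factorial_pos _).ne'), Finset.sum_apply',
          Finset.sum_comm]
        refine Finset.sum_congr rfl fun i _ => ?_
        rw [Nat.factorization_def _ hq]
        refine padicValNat_factorial ?_
        have h1 := Nat.log_le_self q (∑ j, e i j * n j)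
        have h2 : (∑ j, e i j * n j) ≤ ∑ i, ∑ j, e i j * n j :=
          Finset.single_le_sum (f := fun i => ∑ j, e i j * n j)
            (fun _ _ => Nat.zero_le _) (Finset.mem_univ i)
        omega
      have hfactB : B.factorization q = ∑ ℓ ∈ Finset.Ico 1 b, ∑ i, (∑ j, f i j * n j) / q ^ ℓ := by
        rw [hB, Nat.factorization_prod (fun i _ => (Nat.factorial_pos _).ne'), Finset.sum_apply',
          Finset.sum_comm]
        refine Finset.sum_congr rfl fun i _ => ?_
        rw [Nat.factorization_def _ hq]
        refine padicValNat_factorial ?_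
        have h1 := Nat.log_le_self q (∑ j, f i j * n j)
        have h2 : (∑ j, f i j * n j) ≤ ∑ i, ∑ j, f i j * n j :=
          Finset.single_le_sum (f := fun i => ∑ j, f i j * n j)
            (fun _ _ => Nat.zero_le _) (Finset.mem_univ i)
        omega
      rw [Nat.factorization_mul hBne (pow_ne_zero _ hppos.ne'), Finsupp.add_apply,
        Nat.Prime.factorization_pow hp, Finsupp.single_apply, hfactA, hfactB]
      by_cases hpq : p = q
      · subst hpq
        rw [if_pos rfl]
        -- indicator function along the levels
        set g : ℕ → ℕ := fun ℓ => if 1 ≤ ℓ ∧ ℓ ≤ N + 1 ∧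
            ((∃ i, p ≤ ∑ j, e i j * dig (ℓ-1) j) ∨ ∃ i, p ≤ ∑ j, f i j * dig (ℓ-1) j)
          then 1 else 0 with hg
        have hgα : ∑ ℓ ∈ Finset.Ico 1 b, g ℓ = α := by
          have hsub : Finset.Ico 1 (N+2) ⊆ Finset.Ico 1 b := by
            apply Finset.Ico_subset_Ico le_rfl; omega
          rw [← Finset.sum_subset hsub (fun x hx hnx => by
            simp only [Finset.mem_Ico, not_and, not_lt] at hx hnx
            simp only [hg]
            rw [if_neg]
            rintro ⟨h1, h2, -⟩
            have := hnx hx.1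
            omega)]
          rw [Finset.sum_Ico_eq_sum_range, show N + 2 - 1 = N + 1 from rfl]
          rw [hα, Finset.card_filter]
          refine Finset.sum_congr rfl fun k hk => ?_
          have hkN : k ≤ N := by
            have := Finset.mem_range.mp hk; omega
          simp only [hg, show 1 + k - 1 = k from by omega]
          by_cases hc : (∃ i, p ≤ ∑ j, e i j * dig k j) ∨ ∃ i, p ≤ ∑ j, f i j * dig k j
          · rw [if_pos ⟨by omega, by omega, hc⟩, if_pos hc]
          · rw [if_neg (fun h => hc h.2.2), if_neg hc]
        calc (∑ ℓ ∈ Finset.Ico 1 b, ∑ i, (∑ j, f i j * n j) / p ^ ℓ) + α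
            = ∑ ℓ ∈ Finset.Ico 1 b, ((∑ i, (∑ j, f i j * n j) / p ^ ℓ) + g ℓ) := by
              rw [Finset.sum_add_distrib, hgα]
          _ ≤ ∑ ℓ ∈ Finset.Ico 1 b, ∑ i, (∑ j, e i j * n j) / p ^ ℓ := by
              refine Finset.sum_le_sum fun ℓ hℓ => ?_
              have hk := key_ineq e f hef hΔ (p ^ ℓ) (pow_pos hppos ℓ) n
              by_cases hgl : 1 ≤ ℓ ∧ ℓ ≤ N + 1 ∧
                  ((∃ i, p ≤ ∑ j, e i j * dig (ℓ-1) j) ∨ ∃ i, p ≤ ∑ j, f i j * dig (ℓ-1) j)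
              · obtain ⟨h1, h2, h3⟩ := hgl
                set k := ℓ - 1 with hkdef
                have hℓk : ℓ = k + 1 := by omega
                have hkN : k ≤ N := by omega
                have hC : (∃ i, p ^ ℓ ≤ ∑ j, e i j * (n j % p ^ ℓ)) ∨
                    (∃ i, p ^ ℓ ≤ ∑ j, f i j * (n j % p ^ ℓ)) := by
                  have hkey : ∀ (c : Fin d → ℕ), p ≤ ∑ j, c j * dig k j →
                      p ^ ℓ ≤ ∑ j, c j * (n j % p ^ ℓ) := by
                    intro c hc
                    calc p ^ ℓ = p * p ^ k := by rw [hℓk]; ring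
                      _ ≤ (∑ j, c j * dig k j) * p ^ k := Nat.mul_le_mul_right _ hc
                      _ = ∑ j, c j * (dig k j * p ^ k) := by
                          rw [Finset.sum_mul]
                          exact Finset.sum_congr rfl fun j _ => by ring
                      _ ≤ ∑ j, c j * (n j % p ^ ℓ) := by
                          refine Finset.sum_le_sum fun j _ => ?_
                          exact Nat.mul_le_mul_left _ (hℓk ▸ hmodge k hkN j)
                  rcases h3 with ⟨i, hi⟩ | ⟨i, hi⟩
                  · exact Or.inl ⟨i, hkey _ hi⟩
                  · exact Or.inr ⟨i, hkey _ hi⟩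
                rw [if_pos hC] at hk
                have : g ℓ ≤ 1 := by simp only [hg]; split <;> omega
                omega
              · have : g ℓ = 0 := by simp only [hg]; rw [if_neg hgl]
                rw [this, Nat.add_zero]
                exact le_trans (Nat.le_add_right _ _) hk
      · rw [if_neg hpq, Nat.add_zero]
        refine Finset.sum_le_sum fun ℓ hℓ => ?_
        have hk := key_ineq e f hef hΔ (q ^ ℓ) (pow_pos hq.pos ℓ) n
        exact le_trans (Nat.le_add_right _ _) hk
    · rw [Nat.factorization_eq_zero_of_not_prime _ hq]
      exact Nat.zero_le _
  obtain ⟨w, hw⟩ := hdvd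
  refine ⟨(w : ℤ), ?_⟩
  have hQef : Qef e f n = (A : ℚ) / (B : ℚ) := by
    rw [Qef, hA, hB]
    push_cast
    ring
  rw [hQef, hw]
  have hB0 : (B : ℚ) ≠ 0 := Nat.cast_ne_zero.mpr hBne
  push_cast
  field_simp
end

section
/- Let p be a prime and m, n natural numbers. Then Γ_p((m+n)p) / (Γ_p(mp) Γ_p(np)) = \prod_{λ=1, p ∤ λ}^{mp} (1 + n p / λ); in particular this ratio lies in 1 + p ℤ_p. -/
open Finset

/-- The `p`-adic Gamma function on natural numbers:
`Γ_p(n) = (−1)^n ∏_{1 ≤ λ ≤ n−1, p ∤ λ} λ`, as an integer. -/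
def padicGammaNat (p n : ℕ) : ℤ :=
  (-1) ^ n * ∏ l ∈ (Finset.Ico 1 n).filter (fun l => ¬ p ∣ l), (l : ℤ)

lemma set_eq (p k : ℕ) :
    (Finset.Icc 1 (k * p)).filter (fun l => ¬ p ∣ l) =
      (Finset.Ico 1 (k * p)).filter (fun l => ¬ p ∣ l) := by
  ext l
  simp only [mem_filter, mem_Icc, mem_Ico]
  constructor
  · rintro ⟨⟨h1, h2⟩, h3⟩
    refine ⟨⟨h1, ?_⟩, h3⟩
    rcases lt_or_eq_of_le h2 with h | h
    · exact h
    · exact absurd (h ▸ dvd_mul_left p k) h3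
  · rintro ⟨⟨h1, h2⟩, h3⟩
    exact ⟨⟨h1, le_of_lt h2⟩, h3⟩

lemma key_prod (p m n : ℕ) (hp : 0 < p) :
    ∏ l ∈ (Finset.Ico 1 ((m + n) * p)).filter (fun l => ¬ p ∣ l), (l : ℤ) =
      (∏ l ∈ (Finset.Ico 1 (n * p)).filter (fun l => ¬ p ∣ l), (l : ℤ)) *
        ∏ l ∈ (Finset.Icc 1 (m * p)).filter (fun l => ¬ p ∣ l), ((l : ℤ) + n * p) := by
  have hdn : p ∣ n * p := dvd_mul_left p n
  have hdm : p ∣ m * p := dvd_mul_left p m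
  have hmn : (m + n) * p = m * p + n * p := by ring
  rcases Nat.eq_zero_or_pos n with hn | hn
  · subst hn
    simp [set_eq p m]
  · have h1 : 1 ≤ n * p := Nat.mul_pos hn hp
    have h2 : n * p ≤ (m + n) * p := by nlinarith
    rw [← Finset.Ico_union_Ico_eq_Ico h1 h2, Finset.filter_union,
      Finset.prod_union (Finset.disjoint_filter_filter (Finset.Ico_disjoint_Ico_consecutive 1 (n*p) ((m+n)*p)))]
    congr 1
    refine Finset.prod_nbij' (fun l => l - n * p) (fun l => l + n * p) ?_ ?_ ?_ ?_ ?_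
    · -- l ∈ Ico (np) ((m+n)p) filter → l - np ∈ Icc 1 (mp) filter
      intro l hl
      simp only [mem_filter, mem_Ico, mem_Icc] at hl ⊢
      obtain ⟨⟨ha, hb⟩, hc⟩ := hl
      have hd : ¬ p ∣ (l - n * p) := by
        intro h
        exact hc (by
          have : l = (l - n * p) + n * p := by omega
          rw [this]; exact Nat.dvd_add h hdn)
      refine ⟨⟨?_, by omega⟩, hd⟩
      rcases Nat.eq_zero_or_pos (l - n * p) with h0 | h0
      · exact absurd (h0 ▸ dvd_zero p) hd
      · exact h0
    · -- l ∈ Icc 1 (mp) filter → l + np ∈ Ico (np) ((m+n)p) filter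
      intro l hl
      simp only [mem_filter, mem_Ico, mem_Icc] at hl ⊢
      obtain ⟨⟨ha, hb⟩, hc⟩ := hl
      have hne : l ≠ m * p := fun h => hc (h ▸ hdm)
      refine ⟨⟨by omega, by omega⟩, ?_⟩
      intro h
      exact hc ((Nat.dvd_add_right hdn).mp (by rwa [Nat.add_comm] at h))
    · intro l hl
      simp only [mem_filter, mem_Ico] at hl
      omega
    · intro l hl
      simp only [mem_filter, mem_Icc] at hl
      omega
    · intro l hl
      simp only [mem_filter, mem_Ico] at hl
      push_cast [Nat.cast_sub hl.1.1]
      ring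

theorem padic_gamma_ratio (p : ℕ) [Fact p.Prime] (m n : ℕ) :
    ((padicGammaNat p ((m + n) * p) : ℚ) /
        (padicGammaNat p (m * p) * padicGammaNat p (n * p)) =
      ∏ l ∈ (Finset.Icc 1 (m * p)).filter (fun l => ¬ p ∣ l),
        (1 + (n * p : ℚ) / l)) ∧
    ∃ z : ℤ_[p],
      (((padicGammaNat p ((m + n) * p) : ℚ) /
          (padicGammaNat p (m * p) * padicGammaNat p (n * p)) : ℚ) : ℚ_[p]) =
        1 + p * z := by
  have hp : 0 < p := (Fact.out : p.Prime).pos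
  set T := (Finset.Icc 1 (m * p)).filter (fun l => ¬ p ∣ l) with hT
  have hTl : ∀ l ∈ T, (1 : ℕ) ≤ l := by
    intro l hl
    simp only [hT, mem_filter, mem_Icc] at hl
    exact hl.1.1
  have hBpos : (0 : ℚ) < ∏ l ∈ T, (l : ℚ) := by
    apply Finset.prod_pos
    intro l hl
    exact_mod_cast Nat.lt_of_lt_of_le Nat.zero_lt_one (hTl l hl)
  have hCpos : (0 : ℚ) < ∏ l ∈ (Finset.Ico 1 (n * p)).filter (fun l => ¬ p ∣ l), (l : ℚ) := by
    apply Finset.prod_pos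
    intro l hl
    simp only [mem_filter, mem_Ico] at hl
    exact_mod_cast hl.1.1
  have hkey : (∏ l ∈ (Finset.Ico 1 ((m + n) * p)).filter (fun l => ¬ p ∣ l), (l : ℚ)) =
      (∏ l ∈ (Finset.Ico 1 (n * p)).filter (fun l => ¬ p ∣ l), (l : ℚ)) *
        ∏ l ∈ T, ((l : ℚ) + n * p) := by
    have h := congrArg (fun x : ℤ => (x : ℚ)) (key_prod p m n hp)
    push_cast at h
    simpa [hT] using h
  have hB : (∏ l ∈ (Finset.Ico 1 (m * p)).filter (fun l => ¬ p ∣ l), (l : ℚ)) =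
      ∏ l ∈ T, (l : ℚ) := by rw [hT, set_eq]
  have hmain : ((padicGammaNat p ((m + n) * p) : ℚ) /
        (padicGammaNat p (m * p) * padicGammaNat p (n * p)) =
      ∏ l ∈ T, (1 + (n * p : ℚ) / l)) := by
    have hRHS : (∏ l ∈ T, (1 + (n * p : ℚ) / l)) =
        (∏ l ∈ T, ((l : ℚ) + n * p)) / ∏ l ∈ T, (l : ℚ) := by
      rw [← Finset.prod_div_distrib]
      apply Finset.prod_congr rfl
      intro l hl
      have hl0 : (l : ℚ) ≠ 0 := by
        have := hTl l hl
        positivity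
      field_simp
    rw [hRHS]
    unfold padicGammaNat
    push_cast
    rw [hkey, hB]
    have hsign : ((-1 : ℚ)) ^ ((m + n) * p) = (-1 : ℚ) ^ (m * p) * (-1 : ℚ) ^ (n * p) := by
      rw [← pow_add]; ring_nf
    rw [hsign]
    have h1 : ((-1 : ℚ)) ^ (m * p) ≠ 0 := by positivity
    have h2 : ((-1 : ℚ)) ^ (n * p) ≠ 0 := by positivity
    field_simp
  refine ⟨hmain, ?_⟩
  rw [hmain]
  push_cast
  have hmul : ∀ x y : ℚ_[p], (∃ z : ℤ_[p], x = 1 + (p : ℚ_[p]) * z) →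
      (∃ z : ℤ_[p], y = 1 + (p : ℚ_[p]) * z) → ∃ z : ℤ_[p], x * y = 1 + (p : ℚ_[p]) * z := by
    rintro x y ⟨a, ha⟩ ⟨b, hb⟩
    refine ⟨a + b + p * a * b, ?_⟩
    rw [ha, hb]
    push_cast
    ring
  refine Finset.prod_induction _ (fun x => ∃ z : ℤ_[p], x = 1 + (p : ℚ_[p]) * z) hmul ⟨0, by simp⟩ ?_
  intro l hl
  have hpl : ¬ p ∣ l := by
    simp only [hT, mem_filter] at hl
    exact hl.2
  have hnorm_l : ‖((l : ℕ) : ℚ_[p])‖ = 1 := by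
    apply le_antisymm
    · exact_mod_cast Padic.norm_int_le_one ((l : ℤ))
    · by_contra h
      push_neg at h
      have : ‖(((l : ℤ)) : ℚ_[p])‖ < 1 := by exact_mod_cast h
      rw [Padic.norm_intCast_lt_one_iff] at this
      exact hpl (by exact_mod_cast this)
  have hz : ‖((n : ℚ_[p]) / (l : ℚ_[p]))‖ ≤ 1 := by
    rw [norm_div, hnorm_l, div_one]
    exact_mod_cast Padic.norm_int_le_one ((n : ℤ))
  refine ⟨⟨(n : ℚ_[p]) / (l : ℚ_[p]), hz⟩, ?_⟩
  have : ((⟨(n : ℚ_[p]) / (l : ℚ_[p]), hz⟩ : ℤ_[p]) : ℚ_[p]) = (n : ℚ_[p]) / (l : ℚ_[p]) := rfl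
  rw [this]
  ring
end

section
/- Let p be a prime, and suppose an integer sequence A with A(0) coprime to p satisfies the p-Lucas property and the recurrence \sum_{k=0}^q P_k(n−k) A(n−k) = 0 for all n, with P_k ∈ ℤ_p[X], P_0 mapping p-adic units to p-adic units, and P_k(X) divisible by \prod_{i=1}^{k−1}(X+i)^2 for 2 ≤ k ≤ q (type I operator). Fix r ≥ 1 and assume: for all n and all i ≤ r, if α_p(A,n) ≥ i then p^i divides A(n). Then for every n_0 ∈ {0,...,p−1} with p | A(n_0) and every m with α_p(A,m) ≥ r, p^{r+1} divides A(n_0 + m p). -/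
open Finset Polynomial

/-- `alphaDigits p A n` is the number of base-`p` digits `d` of `n` with `p ∣ A d`. -/
def alphaDigits (p : ℕ) (A : ℤ → ℤ) (n : ℕ) : ℕ :=
  ((Nat.digits p n).filter (fun d => A d % p = 0)).length

namespace AlphaAux
variable {p : ℕ} {A : ℤ → ℤ}

lemma alpha_zero : alphaDigits p A 0 = 0 := by simp [alphaDigits]

lemma alpha_eq (hp : 1 < p) {x : ℕ} (hx : 0 < x) :
    alphaDigits p A x
      = (if A ((x % p : ℕ)) % (p : ℤ) = 0 then 1 else 0) + alphaDigits p A (x / p) := by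
  unfold alphaDigits
  rw [Nat.digits_def' hp hx,
    show ((x % p : ℕ) : ℤ) = (x : ℤ) % (p : ℤ) from Int.natCast_mod x p]
  by_cases h : A ((x : ℤ) % (p : ℤ)) % (p : ℤ) = 0
  · have hd : (p : ℤ) ∣ A ((x : ℤ) % (p : ℤ)) := Int.dvd_of_emod_eq_zero h
    simp [h, hd, List.filter_cons, Nat.add_comm]
  · have hd : ¬ (p : ℤ) ∣ A ((x : ℤ) % (p : ℤ)) := fun hd => h (Int.emod_eq_zero_of_dvd hd)
    simp [h, hd, List.filter_cons]

lemma alpha_div_le (hp : 1 < p) (x : ℕ) : alphaDigits p A (x / p) ≤ alphaDigits p A x := by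
  rcases Nat.eq_zero_or_pos x with h | h
  · simp [h, Nat.zero_div]
  · rw [alpha_eq hp h]; omega

lemma alpha_pred (hp : 1 < p) (h0 : A 0 % p ≠ 0) :
    ∀ m : ℕ, 1 ≤ m → alphaDigits p A m ≤ alphaDigits p A (m - 1) + 1 := by
  intro m
  induction m using Nat.strong_induction_on with
  | _ m ih =>
  intro hm
  have hp0 : 0 < p := by omega
  rcases Nat.eq_zero_or_pos (m % p) with hmp | hmp
  · -- m % p = 0
    obtain ⟨c, hc⟩ := Nat.dvd_of_mod_eq_zero hmp
    rcases c with _ | b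
    · omega
    have hm' : m = b * p + p := by rw [hc, Nat.mul_succ, mul_comm]
    have h1 : m - 1 = (p - 1) + b * p := by omega
    have hmod : (m - 1) % p = p - 1 := by
      rw [h1, Nat.add_mul_mod_self_right, Nat.mod_eq_of_lt (by omega)]
    have hdiv : (m - 1) / p = b := by
      rw [h1, Nat.add_mul_div_right _ _ hp0, Nat.div_eq_of_lt (by omega)]
      omega
    have hmdiv : m / p = b + 1 := by
      rw [hc, Nat.mul_div_cancel_left _ hp0]
    have key : alphaDigits p A (b + 1) ≤ alphaDigits p A b + 1 := by
      have hb1 : b ≤ b * p := Nat.le_mul_of_pos_right b hp0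
      have := ih (b + 1) (by omega) (by omega)
      simpa using this
    rcases Nat.eq_zero_or_pos (m - 1) with hz | hz
    · -- m = 1, impossible since p ∣ m and p ≥ 2
      have hble : p ≤ b * p + p := Nat.le_add_left _ _
      omega
    rw [alpha_eq hp (by omega : 0 < m), alpha_eq hp hz, hmp, hmod, hdiv, hmdiv]
    simp only [Nat.cast_zero, if_neg h0]
    split_ifs <;> omega
  · -- m % p ≥ 1
    rcases Nat.lt_or_ge 1 m with h1 | h1
    case inr =>
      -- m = 1
      have hm1 : m = 1 := by omega
      subst hm1
      rw [alpha_eq hp (by omega : (0:ℕ) < 1), Nat.mod_eq_of_lt hp, Nat.div_eq_of_lt hp]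
      simp only [Nat.sub_self, alpha_zero]
      split_ifs <;> simp [alpha_zero]
    case inl =>
      have hb : m % p < p := Nat.mod_lt m hp0
      have hab : p * (m / p) + m % p = m := Nat.div_add_mod m p
      have hab' : m / p * p = p * (m / p) := mul_comm _ _
      have h2 : m - 1 = (m % p - 1) + m / p * p := by rw [hab']; omega
      have hmod : (m - 1) % p = m % p - 1 := by
        rw [h2, Nat.add_mul_mod_self_right, Nat.mod_eq_of_lt (by omega)]
      have hdiv : (m - 1) / p = m / p := by
        rw [h2, Nat.add_mul_div_right _ _ hp0, Nat.div_eq_of_lt (by omega)]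
        omega
      rw [alpha_eq hp (by omega : 0 < m), alpha_eq hp (by omega : 0 < m - 1), hmod, hdiv]
      split_ifs <;> omega

lemma alpha_sub (hp : 1 < p) (h0 : A 0 % p ≠ 0) (m : ℕ) :
    ∀ t : ℕ, t ≤ m → alphaDigits p A m ≤ alphaDigits p A (m - t) + t := by
  intro t
  induction t with
  | zero => simp
  | succ t ih =>
    intro ht
    have h1 := ih (by omega)
    have h2 := alpha_pred hp h0 (m - t) (by omega)
    have : m - (t + 1) = m - t - 1 := by omega
    rw [this]; omega

end AlphaAux

open AlphaAux

section Main

variable {p : ℕ} [hp : Fact p.Prime] {A : ℤ → ℤ}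

theorem key_cong
    (hAneg : ∀ m : ℤ, m < 0 → A m = 0)
    (hA0 : ¬ (p : ℤ) ∣ A 0)
    (q : ℕ) (P : ℕ → Polynomial ℤ_[p])
    (hrec : ∀ n : ℤ,
      ∑ k ∈ Finset.range (q + 1), (P k).eval ((n - k : ℤ) : ℤ_[p]) * (A (n - k) : ℤ_[p]) = 0)
    (hP0 : ∀ z : ℤ_[p], IsUnit z → IsUnit ((P 0).eval z))
    (hPk : ∀ k, 2 ≤ k → k ≤ q →
      (∏ i ∈ Finset.Icc 1 (k - 1), (X + C (i : ℤ_[p])) ^ 2) ∣ P k)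
    (r : ℕ) (hr : 1 ≤ r)
    (hU : ∀ n : ℕ, ∀ i ≤ r, i ≤ alphaDigits p A n → (p : ℤ) ^ i ∣ A n)
    (m : ℕ) (hm : r ≤ alphaDigits p A m) :
    ∀ w : ℕ, w < p →
      (p : ℤ_[p]) ^ (r + 1) ∣
        ((A 0 : ℤ) : ℤ_[p]) * ((A ((w : ℤ) + (m : ℤ) * (p : ℤ)) : ℤ) : ℤ_[p])
          - ((A (w : ℤ) : ℤ) : ℤ_[p]) * ((A ((m : ℤ) * (p : ℤ)) : ℤ) : ℤ_[p]) := by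
  have hp1 : 1 < p := hp.out.one_lt
  have hp0 : 0 < p := by omega
  have hA0m : A 0 % (p : ℤ) ≠ 0 := fun h => hA0 (Int.dvd_of_emod_eq_zero h)
  have hm1 : 1 ≤ m := by
    by_contra h
    have : m = 0 := by omega
    subst this
    rw [alpha_zero] at hm; omega
  -- alphaDigits of m * p
  have hamp : alphaDigits p A (m * p) = alphaDigits p A m := by
    have h1 := alpha_eq (A := A) hp1 (Nat.mul_pos hm1 hp0)
    rw [Nat.mul_mod_left, Nat.mul_div_cancel _ hp0] at h1
    simpa [hA0m] using h1
  have hαmp : r ≤ alphaDigits p A (m * p) := by rw [hamp]; exact hm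
  have hAmp : (p : ℤ_[p]) ^ r ∣ ((A ((m : ℤ) * (p : ℤ)) : ℤ) : ℤ_[p]) := by
    have harg : ((m * p : ℕ) : ℤ) = (m : ℤ) * (p : ℤ) := by push_cast; ring
    rw [← harg, PadicInt.pow_p_dvd_int_iff]
    exact hU (m * p) r le_rfl hαmp
  intro w
  induction w using Nat.strong_induction_on with
  | _ w ih =>
  intro hw
  rcases Nat.eq_zero_or_pos w with rfl | hw1
  · simp
  -- w ≥ 1
  set n : ℤ := (w : ℤ) + (m : ℤ) * (p : ℤ) with hn
  set G : ℕ → ℤ_[p] := fun k =>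
    ((A 0 : ℤ) : ℤ_[p]) * ((P k).eval ((n - k : ℤ) : ℤ_[p]) * ((A (n - k) : ℤ) : ℤ_[p]))
      - ((P k).eval (((w : ℤ) - k : ℤ) : ℤ_[p]) * ((A ((w : ℤ) - k) : ℤ) : ℤ_[p]))
        * ((A ((m : ℤ) * (p : ℤ)) : ℤ) : ℤ_[p]) with hG
  have hterm : ∀ k ∈ Finset.Ico 1 (q + 1), (p : ℤ_[p]) ^ (r + 1) ∣ G k := by
    intro k hk
    rw [Finset.mem_Ico] at hk
    obtain ⟨hk1, hkq'⟩ := hk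
    have hkq : k ≤ q := by omega
    simp only [hG]
    by_cases hkw : k ≤ w
    · -- use induction hypothesis at w - k
      have e1 : n - (k : ℤ) = ((w - k : ℕ) : ℤ) + (m : ℤ) * (p : ℤ) := by
        rw [hn]; push_cast [Nat.cast_sub hkw]; ring
      have e2 : (w : ℤ) - (k : ℤ) = ((w - k : ℕ) : ℤ) := by
        push_cast [Nat.cast_sub hkw]; ring
      have IH := ih (w - k) (by omega) (by omega)
      have hd1 : (p : ℤ_[p]) ∣
          ((P k).eval ((n - k : ℤ) : ℤ_[p]) - (P k).eval (((w : ℤ) - k : ℤ) : ℤ_[p])) := by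
        refine dvd_trans ?_ (Polynomial.sub_dvd_eval_sub _ _ (P k))
        have hdf : ((n - k : ℤ) : ℤ_[p]) - (((w : ℤ) - k : ℤ) : ℤ_[p])
            = (p : ℤ_[p]) * (m : ℤ_[p]) := by
          rw [hn]; push_cast; ring
        rw [hdf]; exact dvd_mul_right _ _
      have heq :
          ((A 0 : ℤ) : ℤ_[p]) * ((P k).eval ((n - k : ℤ) : ℤ_[p]) * ((A (n - k) : ℤ) : ℤ_[p]))
            - ((P k).eval (((w : ℤ) - k : ℤ) : ℤ_[p]) * ((A ((w : ℤ) - k) : ℤ) : ℤ_[p]))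
              * ((A ((m : ℤ) * (p : ℤ)) : ℤ) : ℤ_[p])
          = (P k).eval ((n - k : ℤ) : ℤ_[p])
              * (((A 0 : ℤ) : ℤ_[p]) * ((A (n - k) : ℤ) : ℤ_[p])
                - ((A ((w : ℤ) - k) : ℤ) : ℤ_[p]) * ((A ((m : ℤ) * (p : ℤ)) : ℤ) : ℤ_[p]))
            + ((P k).eval ((n - k : ℤ) : ℤ_[p]) - (P k).eval (((w : ℤ) - k : ℤ) : ℤ_[p]))
              * (((A ((w : ℤ) - k) : ℤ) : ℤ_[p]) * ((A ((m : ℤ) * (p : ℤ)) : ℤ) : ℤ_[p])) := by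
        ring
      rw [heq]
      refine dvd_add ?_ ?_
      · refine Dvd.dvd.mul_left ?_ _
        rw [e1, e2]
        exact IH
      · rw [pow_succ']
        exact mul_dvd_mul hd1 (hAmp.mul_left _)
    · -- k > w
      have hz : A ((w : ℤ) - (k : ℤ)) = 0 := hAneg _ (by omega)
      rw [hz]
      simp only [Int.cast_zero, mul_zero, zero_mul, sub_zero]
      refine Dvd.dvd.mul_left ?_ _
      by_cases hneg : n - (k : ℤ) < 0
      · rw [hAneg _ hneg]; simp
      · have hkM : k ≤ w + m * p := by
          rw [hn] at hneg; push_cast at hneg ⊢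
          zify; push_cast; omega
        set N : ℕ := w + m * p - k with hN
        clear_value N
        have hNeq : n - (k : ℤ) = (N : ℤ) := by
          rw [hn, hN]; push_cast [Nat.cast_sub hkM]; ring
        rw [hNeq]
        have hk2 : 2 ≤ k := by omega
        have hNlt : N < m * p := by omega
        set s : ℕ := N / p with hs
        clear_value s
        have hsm : s < m := by rw [hs]; exact (Nat.div_lt_iff_lt_mul hp0).mpr hNlt
        have hdm : p * s + N % p = N := by rw [hs]; exact Nat.div_add_mod N p
        have hmodlt : N % p < p := Nat.mod_lt _ hp0
        have hNub : N < (s + 1) * p := by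
          have h1 : (s + 1) * p = p * s + p := by ring
          omega
        -- the evaluated product divides (P k).eval N
        have hPkdvd : (∏ i ∈ Finset.Icc 1 (k - 1), (((N : ℤ) : ℤ_[p]) + (i : ℤ_[p])) ^ 2)
            ∣ (P k).eval ((N : ℤ) : ℤ_[p]) := by
          have h1 := Polynomial.eval_dvd (x := ((N : ℤ) : ℤ_[p])) (hPk k hk2 hkq)
          simpa [eval_prod] using h1
        -- power of p divides the sub-product
        have hinj : ∀ a ∈ Finset.Icc (s + 1) m, ∀ b ∈ Finset.Icc (s + 1) m,
            a * p - N = b * p - N → a = b := by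
          intro a ha b hb hab
          rw [Finset.mem_Icc] at ha hb
          have h1 : (s + 1) * p ≤ a * p := Nat.mul_le_mul_right p ha.1
          have h2 : (s + 1) * p ≤ b * p := Nat.mul_le_mul_right p hb.1
          have h3 : a * p = b * p := by omega
          exact Nat.eq_of_mul_eq_mul_right hp0 h3
        have hSsub : (Finset.Icc (s + 1) m).image (fun σ => σ * p - N)
            ⊆ Finset.Icc 1 (k - 1) := by
          intro i hi
          simp only [Finset.mem_image, Finset.mem_Icc] at hi ⊢
          obtain ⟨σ, ⟨hσ1, hσ2⟩, rfl⟩ := hi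
          have h1 : (s + 1) * p ≤ σ * p := Nat.mul_le_mul_right p hσ1
          have h2 : σ * p ≤ m * p := Nat.mul_le_mul_right p hσ2
          omega
        have hppow : (p : ℤ_[p]) ^ (2 * (m - s))
            ∣ ∏ i ∈ (Finset.Icc (s + 1) m).image (fun σ => σ * p - N),
                (((N : ℤ) : ℤ_[p]) + (i : ℤ_[p])) ^ 2 := by
          rw [Finset.prod_image hinj]
          have h2 : (p : ℤ_[p]) ^ (2 * (m - s))
              = ∏ _σ ∈ Finset.Icc (s + 1) m, (p : ℤ_[p]) ^ 2 := by
            rw [Finset.prod_const, Nat.card_Icc, ← pow_mul]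
            congr 1
            omega
          rw [h2]
          refine Finset.prod_dvd_prod_of_dvd _ _ ?_
          intro σ hσ
          rw [Finset.mem_Icc] at hσ
          have hNσ : N ≤ σ * p := by
            have h1 : (s + 1) * p ≤ σ * p := Nat.mul_le_mul_right p hσ.1
            omega
          have hcast : ((N : ℤ) : ℤ_[p]) + ((σ * p - N : ℕ) : ℤ_[p])
              = (σ : ℤ_[p]) * (p : ℤ_[p]) := by
            push_cast [Nat.cast_sub hNσ]; ring
          rw [hcast, mul_pow]
          exact Dvd.dvd.mul_left dvd_rfl _
        have hchain : (p : ℤ_[p]) ^ (2 * (m - s)) ∣ (P k).eval ((N : ℤ) : ℤ_[p]) :=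
          (hppow.trans (Finset.prod_dvd_prod_of_subset _ _ _ hSsub)).trans hPkdvd
        by_cases hcase : r + 1 ≤ 2 * (m - s)
        · exact ((pow_dvd_pow _ hcase).trans hchain).mul_right _
        · have hi0r : r + 1 - 2 * (m - s) ≤ r := by omega
          have hαN : r + 1 - 2 * (m - s) ≤ alphaDigits p A N := by
            have h1 : alphaDigits p A s ≤ alphaDigits p A N := by
              rw [hs]; exact alpha_div_le hp1 N
            have h2 := alpha_sub hp1 hA0m m (m - s) (by omega)
            have h3 : m - (m - s) = s := by omega
            rw [h3] at h2
            omega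
          have hcast2 : (p : ℤ_[p]) ^ (r + 1 - 2 * (m - s)) ∣ ((A (N : ℤ) : ℤ) : ℤ_[p]) := by
            rw [PadicInt.pow_p_dvd_int_iff]
            exact hU N _ hi0r hαN
          have hsplit : (p : ℤ_[p]) ^ (r + 1)
              = (p : ℤ_[p]) ^ (2 * (m - s)) * (p : ℤ_[p]) ^ (r + 1 - 2 * (m - s)) := by
            rw [← pow_add]
            congr 1
            omega
          rw [hsplit]
          exact mul_dvd_mul hchain hcast2
  -- sum of the recurrence combination vanishes
  have hsum0 : ∑ k ∈ Finset.range (q + 1), G k = 0 := by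
    have E1 := hrec n
    have E2 := hrec (w : ℤ)
    rw [hG]
    rw [Finset.sum_sub_distrib, ← Finset.mul_sum, ← Finset.sum_mul, E1, E2]
    ring
  rw [Finset.range_eq_Ico, Finset.sum_eq_sum_Ico_succ_bot (by omega)] at hsum0
  have h0 : (p : ℤ_[p]) ^ (r + 1) ∣ G 0 := by
    have hdvd : (p : ℤ_[p]) ^ (r + 1) ∣ ∑ k ∈ Finset.Ico 1 (q + 1), G k :=
      Finset.dvd_sum hterm
    have hG0 : G 0 = -∑ k ∈ Finset.Ico (0 + 1) (q + 1), G k := by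
      linear_combination hsum0
    rw [hG0]
    exact dvd_neg.mpr hdvd
  -- unpack G 0
  have hg0 : G 0 = ((A 0 : ℤ) : ℤ_[p]) * ((P 0).eval ((n : ℤ) : ℤ_[p]) * ((A n : ℤ) : ℤ_[p]))
      - ((P 0).eval (((w : ℤ) : ℤ) : ℤ_[p]) * ((A (w : ℤ) : ℤ) : ℤ_[p]))
        * ((A ((m : ℤ) * (p : ℤ)) : ℤ) : ℤ_[p]) := by
    rw [hG]
    norm_num
  have hd1 : (p : ℤ_[p]) ∣
      ((P 0).eval (((w : ℤ) : ℤ) : ℤ_[p]) - (P 0).eval ((n : ℤ) : ℤ_[p])) := by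
    refine dvd_trans ?_ (Polynomial.sub_dvd_eval_sub _ _ (P 0))
    have hdf : (((w : ℤ) : ℤ) : ℤ_[p]) - ((n : ℤ) : ℤ_[p]) = (p : ℤ_[p]) * (-(m : ℤ_[p])) := by
      rw [hn]; push_cast; ring
    rw [hdf]; exact dvd_mul_right _ _
  have h2 : (p : ℤ_[p]) ^ (r + 1) ∣
      ((P 0).eval (((w : ℤ) : ℤ) : ℤ_[p]) - (P 0).eval ((n : ℤ) : ℤ_[p]))
        * (((A (w : ℤ) : ℤ) : ℤ_[p]) * ((A ((m : ℤ) * (p : ℤ)) : ℤ) : ℤ_[p])) := by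
    rw [pow_succ']
    exact mul_dvd_mul hd1 (hAmp.mul_left _)
  have hT : (p : ℤ_[p]) ^ (r + 1) ∣ (P 0).eval ((n : ℤ) : ℤ_[p])
      * (((A 0 : ℤ) : ℤ_[p]) * ((A n : ℤ) : ℤ_[p])
        - ((A (w : ℤ) : ℤ) : ℤ_[p]) * ((A ((m : ℤ) * (p : ℤ)) : ℤ) : ℤ_[p])) := by
    have heq : (P 0).eval ((n : ℤ) : ℤ_[p])
        * (((A 0 : ℤ) : ℤ_[p]) * ((A n : ℤ) : ℤ_[p])
          - ((A (w : ℤ) : ℤ) : ℤ_[p]) * ((A ((m : ℤ) * (p : ℤ)) : ℤ) : ℤ_[p]))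
        = G 0 + ((P 0).eval (((w : ℤ) : ℤ) : ℤ_[p]) - (P 0).eval ((n : ℤ) : ℤ_[p]))
            * (((A (w : ℤ) : ℤ) : ℤ_[p]) * ((A ((m : ℤ) * (p : ℤ)) : ℤ) : ℤ_[p])) := by
      rw [hg0]; ring
    rw [heq]
    exact dvd_add h0 h2
  have hu : IsUnit ((P 0).eval ((n : ℤ) : ℤ_[p])) := by
    apply hP0
    rw [PadicInt.isUnit_iff]
    have hnd : ¬ (p : ℤ) ∣ n := by
      rw [hn]
      intro hdvd
      have h5 : (p : ℤ) ∣ (m : ℤ) * (p : ℤ) := dvd_mul_left _ _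
      have h6 : (p : ℤ) ∣ (w : ℤ) := by
        have := (Int.dvd_add_right h5).mp (by rwa [add_comm] at hdvd)
        exact this
      have h7 : p ∣ w := Int.ofNat_dvd.mp (by exact_mod_cast h6)
      have := Nat.le_of_dvd hw1 h7
      omega
    exact le_antisymm (PadicInt.norm_le_one _)
      (not_lt.mp fun hlt => hnd ((PadicInt.norm_int_lt_one_iff_dvd n).mp hlt))
  obtain ⟨v, hv⟩ := hu
  rw [← hv] at hT
  have h9 := hT.mul_left ((↑v⁻¹ : ℤ_[p]))
  rw [← mul_assoc] at h9
  simpa using h9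

end Main


theorem induction_step_type_I (p : ℕ) [hp : Fact p.Prime]
    (A : ℤ → ℤ) (hAneg : ∀ m : ℤ, m < 0 → A m = 0)
    (hA0 : ¬ (p : ℤ) ∣ A 0)
    (hLucas : ∀ v : ℕ, v < p → ∀ n : ℕ, A (v + n * p) ≡ A v * A n [ZMOD p])
    (q : ℕ) (P : ℕ → Polynomial ℤ_[p])
    (hrec : ∀ n : ℤ,
      ∑ k ∈ Finset.range (q + 1), (P k).eval ((n - k : ℤ) : ℤ_[p]) * (A (n - k) : ℤ_[p]) = 0)
    (hP0 : ∀ z : ℤ_[p], IsUnit z → IsUnit ((P 0).eval z))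
    (hPk : ∀ k, 2 ≤ k → k ≤ q →
      (∏ i ∈ Finset.Icc 1 (k - 1), (X + C (i : ℤ_[p])) ^ 2) ∣ P k)
    (r : ℕ) (hr : 1 ≤ r)
    (hU : ∀ n : ℕ, ∀ i ≤ r, i ≤ alphaDigits p A n → (p : ℤ) ^ i ∣ A n)
    (n0 : ℕ) (hn0 : n0 < p) (hn0z : (p : ℤ) ∣ A n0)
    (m : ℕ) (hm : r ≤ alphaDigits p A m) :
    (p : ℤ) ^ (r + 1) ∣ A (n0 + m * p) := by
  have hp1 : 1 < p := hp.out.one_lt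
  have hp0 : 0 < p := by omega
  have hA0m : A 0 % (p : ℤ) ≠ 0 := fun h => hA0 (Int.dvd_of_emod_eq_zero h)
  have hm1 : 1 ≤ m := by
    by_contra h
    have : m = 0 := by omega
    subst this
    rw [alpha_zero] at hm; omega
  have hamp : alphaDigits p A (m * p) = alphaDigits p A m := by
    have h1 := alpha_eq (A := A) hp1 (Nat.mul_pos hm1 hp0)
    rw [Nat.mul_mod_left, Nat.mul_div_cancel _ hp0] at h1
    simpa [hA0m] using h1
  have hαmp : r ≤ alphaDigits p A (m * p) := by rw [hamp]; exact hm
  have hAmp : (p : ℤ_[p]) ^ r ∣ ((A ((m : ℤ) * (p : ℤ)) : ℤ) : ℤ_[p]) := by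
    have harg : ((m * p : ℕ) : ℤ) = (m : ℤ) * (p : ℤ) := by push_cast; ring
    rw [← harg, PadicInt.pow_p_dvd_int_iff]
    exact hU (m * p) r le_rfl hαmp
  have hkc := key_cong hAneg hA0 q P hrec hP0 hPk r hr hU m hm n0 hn0
  have hn0p : (p : ℤ_[p]) ∣ ((A (n0 : ℤ) : ℤ) : ℤ_[p]) := by
    rw [← pow_one (p : ℤ_[p]), PadicInt.pow_p_dvd_int_iff]
    simpa using hn0z
  have h2 : (p : ℤ_[p]) ^ (r + 1) ∣
      ((A (n0 : ℤ) : ℤ) : ℤ_[p]) * ((A ((m : ℤ) * (p : ℤ)) : ℤ) : ℤ_[p]) := by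
    rw [pow_succ']
    exact mul_dvd_mul hn0p hAmp
  have h3 : (p : ℤ_[p]) ^ (r + 1) ∣
      ((A 0 : ℤ) : ℤ_[p]) * ((A ((n0 : ℤ) + (m : ℤ) * (p : ℤ)) : ℤ) : ℤ_[p]) := by
    have := dvd_add hkc h2
    simpa using this
  have hu : IsUnit ((A 0 : ℤ) : ℤ_[p]) := by
    rw [PadicInt.isUnit_iff]
    exact le_antisymm (PadicInt.norm_le_one _)
      (not_lt.mp fun hlt => hA0 ((PadicInt.norm_int_lt_one_iff_dvd _).mp hlt))
  obtain ⟨v, hv⟩ := hu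
  rw [← hv] at h3
  have h4 := h3.mul_left ((↑v⁻¹ : ℤ_[p]))
  rw [← mul_assoc] at h4
  simp only [Units.inv_mul, one_mul] at h4
  rw [PadicInt.pow_p_dvd_int_iff] at h4
  exact_mod_cast h4
end
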